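/- arXiv:1707.00520 — 7 statements merged into one kernel-verified Lean document; each statement's English description precedes it below -/
import Mathlib

section
/- High-temperature expansion of the Ising model (van der Waerden). Let G=(V,E) be a finite graph, β > 0 and A ⊆ V. Then ∑_{σ ∈ {−1,+1}^V} σ_A · exp(−β H_G(σ)) = 2^{|V|} · cosh(β)^{|E|} · ∑_{η ∈ {0,1}^E : ∂η = A} tanh(β)^{o(η)}, where the sum on the right runs over all edge subsets η whose odd-degree vertex set is exactly A. -/
open scoped BigOperators Classical

namespace Stmt0

variable {V E : Type} [Fintype V] [DecidableEq V] [Fintype E] [DecidableEq E]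

/-- The real value of a Boolean spin: `true ↦ +1`, `false ↦ -1`. -/
noncomputable def sgn (b : Bool) : ℝ := if b then 1 else -1

/-- `σ_A = ∏_{x ∈ A} σ_x`. -/
noncomputable def corr (A : Finset V) (σ : V → Bool) : ℝ := ∏ x ∈ A, sgn (σ x)

/-- Boltzmann weight `exp(-β H_G(σ)) = exp(β ∑_{xy ∈ E} σ_x σ_y)`, where the graph `G`
has edge `e` joining `gfst e` and `gsnd e`. -/
noncomputable def boltz (gfst gsnd : E → V) (β : ℝ) (σ : V → Bool) : ℝ :=
  Real.exp (β * ∑ e : E, sgn (σ (gfst e)) * sgn (σ (gsnd e)))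

/-- `o(η)`: the number of open edges of `η`. -/
noncomputable def openCount (η : E → Bool) : ℕ :=
  (Finset.univ.filter fun e : E => η e = true).card

/-- `∂η`: the set of vertices at which the subgraph `η` has odd degree. -/
noncomputable def sources (gfst gsnd : E → V) (η : E → Bool) : Finset V :=
  Finset.univ.filter fun x : V =>
    Odd (∑ e : E, if η e = true then
      ((if gfst e = x then 1 else 0) + (if gsnd e = x then (1 : ℕ) else 0)) else 0)

/-- High-temperature expansion of the Ising model (van der Waerden):
`∑_σ σ_A e^{-βH_G(σ)} = 2^{|V|} cosh(β)^{|E|} ∑_{∂η = A} tanh(β)^{o(η)}`. -/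
theorem high_temperature_expansion (gfst gsnd : E → V) (β : ℝ) (hβ : 0 < β) (A : Finset V) :
    (∑ σ : V → Bool, corr A σ * boltz gfst gsnd β σ)
      = 2 ^ (Fintype.card V) * Real.cosh β ^ (Fintype.card E) *
        ∑ η ∈ Finset.univ.filter (fun η : E → Bool => sources gfst gsnd η = A),
          Real.tanh β ^ openCount η := by
  classical
  set t := Real.tanh β with ht
  set c := Real.cosh β with hc
  have hcpos : (0:ℝ) < c := by rw [hc]; exact Real.cosh_pos β
  have hc0 : c ≠ 0 := ne_of_gt hcpos
  have hct : c * t = Real.sinh β := by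
    rw [ht, Real.tanh_eq_sinh_div_cosh]; field_simp; exact hc
  -- per-edge exponential factorization
  have hedge : ∀ s : ℝ, s = 1 ∨ s = -1 → Real.exp (β * s) = c * (1 + t * s) := by
    rintro s (rfl | rfl)
    · rw [mul_one, show c * (1 + t * 1) = c + c * t by ring, hct, hc,
        Real.cosh_add_sinh]
    · rw [show β * (-1 : ℝ) = -β by ring,
        show c * (1 + t * (-1)) = c - c * t by ring, hct, hc, Real.cosh_sub_sinh]
  have hsgn : ∀ b : Bool, sgn b = 1 ∨ sgn b = -1 := by
    intro b; cases b <;> simp [sgn]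
  have hsgn2 : ∀ a b : Bool, sgn a * sgn b = 1 ∨ sgn a * sgn b = -1 := by
    intro a b
    rcases hsgn a with h1 | h1 <;> rcases hsgn b with h2 | h2 <;>
      rw [h1, h2] <;> norm_num
  -- degrees and exponents
  set d : (E → Bool) → V → ℕ := fun η x => ∑ e : E, if η e = true then
      ((if gfst e = x then 1 else 0) + (if gsnd e = x then (1 : ℕ) else 0)) else 0 with hd
  set m : (E → Bool) → V → ℕ := fun η x => (if x ∈ A then 1 else 0) + d η x with hm
  -- boltz factorization
  have hboltz : ∀ σ : V → Bool, boltz gfst gsnd β σ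
      = c ^ Fintype.card E *
        ∏ e : E, (1 + t * (sgn (σ (gfst e)) * sgn (σ (gsnd e)))) := by
    intro σ
    rw [boltz, Finset.mul_sum, Real.exp_sum]
    rw [show (∏ e : E, Real.exp (β * (sgn (σ (gfst e)) * sgn (σ (gsnd e)))))
        = ∏ e : E, c * (1 + t * (sgn (σ (gfst e)) * sgn (σ (gsnd e)))) from
      Finset.prod_congr rfl fun e _ => hedge _ (hsgn2 _ _)]
    rw [Finset.prod_mul_distrib, Finset.prod_const, Finset.card_univ]
  -- rearrangement of spins
  have hre : ∀ (σ : V → Bool) (η : E → Bool),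
      corr A σ * ∏ e ∈ Finset.univ.filter (fun e : E => η e = true),
          (sgn (σ (gfst e)) * sgn (σ (gsnd e)))
        = ∏ x : V, sgn (σ x) ^ m η x := by
    intro σ η
    have h1 : corr A σ = ∏ x : V, sgn (σ x) ^ (if x ∈ A then 1 else 0) := by
      simp only [pow_ite, pow_one, pow_zero]
      rw [Finset.prod_ite_mem, Finset.univ_inter, corr]
    have h2 : ∀ e : E, sgn (σ (gfst e)) * sgn (σ (gsnd e))
        = ∏ x : V, sgn (σ x) ^
            ((if gfst e = x then 1 else 0) + (if gsnd e = x then (1:ℕ) else 0)) := by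
      intro e
      simp only [pow_add, pow_ite, pow_one, pow_zero]
      rw [Finset.prod_mul_distrib, Finset.prod_ite_eq, Finset.prod_ite_eq]
      simp
    have h3 : (∏ e ∈ Finset.univ.filter (fun e : E => η e = true),
          (sgn (σ (gfst e)) * sgn (σ (gsnd e))))
        = ∏ x : V, sgn (σ x) ^ d η x := by
      rw [Finset.prod_congr rfl (fun e _ => h2 e), Finset.prod_comm]
      refine Finset.prod_congr rfl fun x _ => ?_
      rw [Finset.prod_pow_eq_pow_sum]
      congr 1
      rw [hd]
      simp [Finset.sum_filter]
    rw [h1, h3, ← Finset.prod_mul_distrib]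
    refine Finset.prod_congr rfl fun x _ => ?_
    rw [← pow_add]
  -- per-spin expansion of the product
  have hexp : ∀ σ : V → Bool, corr A σ * boltz gfst gsnd β σ
      = c ^ Fintype.card E * ∑ η : E → Bool,
          t ^ openCount η * ∏ x : V, sgn (σ x) ^ m η x := by
    intro σ
    rw [hboltz σ]
    have hP : (∏ e : E, (1 + t * (sgn (σ (gfst e)) * sgn (σ (gsnd e)))))
        = ∑ η : E → Bool, t ^ openCount η *
            ∏ e ∈ Finset.univ.filter (fun e : E => η e = true),
              (sgn (σ (gfst e)) * sgn (σ (gsnd e))) := by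
      have key := Fintype.prod_sum (fun (e : E) (b : Bool) =>
        if b then t * (sgn (σ (gfst e)) * sgn (σ (gsnd e))) else 1)
      have hL : (∏ e : E, ∑ b : Bool,
          (if b then t * (sgn (σ (gfst e)) * sgn (σ (gsnd e))) else 1))
          = ∏ e : E, (1 + t * (sgn (σ (gfst e)) * sgn (σ (gsnd e)))) := by
        refine Finset.prod_congr rfl fun e _ => ?_
        rw [Fintype.sum_bool]; simp [add_comm]
      rw [← hL, key]
      refine Finset.sum_congr rfl fun η _ => ?_
      have : (∏ e : E, if η e then t * (sgn (σ (gfst e)) * sgn (σ (gsnd e))) else 1)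
          = ∏ e ∈ Finset.univ.filter (fun e : E => η e = true),
              (t * (sgn (σ (gfst e)) * sgn (σ (gsnd e)))) := by
        rw [Finset.prod_filter]
      rw [this, Finset.prod_mul_distrib, Finset.prod_const, openCount]
    rw [hP, Finset.mul_sum, Finset.mul_sum, Finset.mul_sum]
    refine Finset.sum_congr rfl fun η _ => ?_
    rw [← hre σ η]; ring
  -- parity characterization
  have hchar : ∀ η : E → Bool, sources gfst gsnd η = A ↔ ∀ x : V, Even (m η x) := by
    intro η
    rw [Finset.ext_iff]
    refine forall_congr' fun x => ?_
    have hx : x ∈ sources gfst gsnd η ↔ Odd (d η x) := by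
      rw [sources]; simp [hd]
    have hmx : m η x = (if x ∈ A then 1 else 0) + d η x := rfl
    rw [hx, hmx]
    by_cases hA : x ∈ A
    · simp only [hA, if_pos, iff_true]
      rw [add_comm, Nat.even_add_one, Nat.not_even_iff_odd]
    · simp only [hA, if_neg, iff_false, if_false, zero_add]
      rw [Nat.not_odd_iff_even.symm]
  -- spin sum
  have hspin : ∀ η : E → Bool,
      (∑ σ : V → Bool, ∏ x : V, sgn (σ x) ^ m η x)
        = if sources gfst gsnd η = A then (2:ℝ) ^ Fintype.card V else 0 := by
    intro η
    have key := (Fintype.prod_sum (fun (x : V) (b : Bool) => sgn b ^ m η x)).symm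
    rw [key]
    have hbx : ∀ x : V, (∑ b : Bool, sgn b ^ m η x) = 1 + (-1 : ℝ) ^ m η x := by
      intro x
      rw [Fintype.sum_bool]
      simp [sgn, add_comm]
    rw [Finset.prod_congr rfl fun x _ => hbx x]
    by_cases h : sources gfst gsnd η = A
    · rw [if_pos h]
      have hev := (hchar η).mp h
      have : ∀ x : V, (1 + (-1:ℝ) ^ m η x) = 2 := by
        intro x; rw [(hev x).neg_one_pow]; norm_num
      rw [Finset.prod_congr rfl fun x _ => this x, Finset.prod_const,
        Finset.card_univ]
    · rw [if_neg h]
      obtain ⟨x, hx⟩ := not_forall.mp (fun hall => h ((hchar η).mpr hall))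
      refine Finset.prod_eq_zero (Finset.mem_univ x) ?_
      rw [(Nat.not_even_iff_odd.mp hx).neg_one_pow]
      norm_num
  -- put everything together
  calc (∑ σ : V → Bool, corr A σ * boltz gfst gsnd β σ)
      = ∑ σ : V → Bool, c ^ Fintype.card E * ∑ η : E → Bool,
          t ^ openCount η * ∏ x : V, sgn (σ x) ^ m η x :=
        Finset.sum_congr rfl fun σ _ => hexp σ
    _ = c ^ Fintype.card E * ∑ η : E → Bool, t ^ openCount η *
          ∑ σ : V → Bool, ∏ x : V, sgn (σ x) ^ m η x := by
        rw [← Finset.mul_sum, Finset.sum_comm]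
        congr 1
        exact Finset.sum_congr rfl fun η _ => (Finset.mul_sum _ _ _).symm
    _ = c ^ Fintype.card E * ∑ η : E → Bool, t ^ openCount η *
          (if sources gfst gsnd η = A then (2:ℝ) ^ Fintype.card V else 0) := by
        congr 1
        exact Finset.sum_congr rfl fun η _ => by rw [hspin η]
    _ = 2 ^ (Fintype.card V) * c ^ (Fintype.card E) *
        ∑ η ∈ Finset.univ.filter (fun η : E → Bool => sources gfst gsnd η = A),
          t ^ openCount η := by
        rw [Finset.sum_filter, Finset.mul_sum, Finset.mul_sum]
        refine Finset.sum_congr rfl fun η _ => ?_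
        by_cases h : sources gfst gsnd η = A <;> simp [h] <;> ring

end Stmt0
end

section
/- Random-current expansion of the Ising partition function. Let G=(V,E) be a finite graph, β > 0 and A ⊆ V. Then ∑_{σ ∈ {−1,+1}^V} σ_A · exp(−β H_G(σ)) = 2^{|V|} · ∑_{n : ∂n = A} w_β(n), where the (absolutely convergent) sum on the right runs over all currents n : E → ℕ whose source set is exactly A. -/
open scoped BigOperators Classical

namespace Stmt1

variable {V E : Type} [Fintype V] [DecidableEq V] [Fintype E] [DecidableEq E]

/-- The real value of a Boolean spin: `true ↦ +1`, `false ↦ -1`. -/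
noncomputable def sgn (b : Bool) : ℝ := if b then 1 else -1

/-- `σ_A = ∏_{x ∈ A} σ_x`. -/
noncomputable def corr (A : Finset V) (σ : V → Bool) : ℝ := ∏ x ∈ A, sgn (σ x)

/-- Boltzmann weight `exp(-β H_G(σ)) = exp(β ∑_{xy ∈ E} σ_x σ_y)`. -/
noncomputable def boltz (gfst gsnd : E → V) (β : ℝ) (σ : V → Bool) : ℝ :=
  Real.exp (β * ∑ e : E, sgn (σ (gfst e)) * sgn (σ (gsnd e)))

/-- `∂n`: the set of sources of a current `n : E → ℕ`, i.e. the vertices `x` at which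
`∑_{e ∋ x} n_e` is odd. -/
noncomputable def sourcesN (gfst gsnd : E → V) (n : E → ℕ) : Finset V :=
  Finset.univ.filter fun x : V =>
    Odd (∑ e : E, n e * ((if gfst e = x then 1 else 0) + (if gsnd e = x then (1 : ℕ) else 0)))

/-- `w_β(n) = ∏_{e ∈ E} β^{n_e} / n_e!`, the weight of a current. -/
noncomputable def w (β : ℝ) (n : E → ℕ) : ℝ :=
  ∏ e : E, β ^ (n e) / (Nat.factorial (n e))

/-- tsum over a pi type of a product equals the product of tsums (Fin version). -/
lemma pi_tsum_fin : ∀ (k : ℕ) (g : Fin k → ℕ → ℝ),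
    (∀ i, Summable fun n => ‖g i n‖) →
    (Summable fun n : Fin k → ℕ => ‖∏ i, g i (n i)‖) ∧
    (∑' n : Fin k → ℕ, ∏ i, g i (n i)) = ∏ i, ∑' n, g i n := by
  intro k
  induction k with
  | zero =>
    intro g hg
    constructor
    · exact (hasSum_single (fun i => i.elim0) (fun b hb =>
        absurd (Subsingleton.elim b _) hb)).summable
    · rw [tsum_eq_single (fun i => i.elim0) (fun b hb =>
        absurd (Subsingleton.elim b _) hb)]
      simp
  | succ k ih =>
    intro g hg
    obtain ⟨ihS, ihT⟩ := ih (fun i => g i.succ) (fun i => hg i.succ)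
    let e := (Fin.consEquiv (fun _ : Fin (k + 1) => ℕ)).symm
    set F : ℕ → ℝ := g 0 with hF
    set G : (Fin k → ℕ) → ℝ := fun m => ∏ i, g i.succ (m i) with hG
    have hmain : ∀ n : Fin (k + 1) → ℕ, ∏ i, g i (n i) = F (e n).1 * G (e n).2 := by
      intro n
      simpa [e, Fin.consEquiv, Fin.tail, hG] using Fin.prod_univ_succ (fun i => g i (n i))
    have hprod_norm : Summable fun z : ℕ × (Fin k → ℕ) => ‖F z.1 * G z.2‖ :=
      (hg 0).mul_norm ihS
    constructor
    · have := (Equiv.summable_iff e).2 hprod_norm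
      exact this.congr fun n => by rw [Function.comp_apply, hmain n]
    · have h1 : (∑' n : Fin (k + 1) → ℕ, ∏ i, g i (n i))
          = ∑' z : ℕ × (Fin k → ℕ), F z.1 * G z.2 := by
        rw [← e.tsum_eq (fun z : ℕ × (Fin k → ℕ) => F z.1 * G z.2)]
        exact tsum_congr hmain
      rw [h1, ← tsum_mul_tsum_of_summable_norm (hg 0) ihS,
        show (∑' m : Fin k → ℕ, G m) = _ from ihT,
        Fin.prod_univ_succ (fun i => ∑' n, g i n)]

/-- tsum over a pi type of a product equals the product of tsums (general fintype). -/
lemma pi_tsum (g : E → ℕ → ℝ) (hg : ∀ e, Summable fun n => ‖g e n‖) :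
    (Summable fun n : E → ℕ => ∏ e, g e (n e)) ∧
    (∑' n : E → ℕ, ∏ e, g e (n e)) = ∏ e, ∑' n, g e n := by
  set k := Fintype.card E
  set eq : E ≃ Fin k := Fintype.equivFin E with heq
  set ψ : (E → ℕ) ≃ (Fin k → ℕ) := Equiv.arrowCongr eq (Equiv.refl ℕ) with hψ
  set g' : Fin k → ℕ → ℝ := fun i => g (eq.symm i) with hg'
  obtain ⟨hS, hT⟩ := pi_tsum_fin k g' (fun i => hg (eq.symm i))
  have hcomp : ∀ n : E → ℕ, ∏ e, g e (n e) = ∏ i, g' i ((ψ n) i) := by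
    intro n
    rw [← Equiv.prod_comp eq.symm (fun e => g e (n e))]
    rfl
  constructor
  · have : Summable fun m : Fin k → ℕ => ∏ i, g' i (m i) := hS.of_norm
    have h2 := (Equiv.summable_iff ψ).2 this
    exact h2.congr fun n => (hcomp n).symm
  · have h1 : (∑' n : E → ℕ, ∏ e, g e (n e))
        = ∑' m : Fin k → ℕ, ∏ i, g' i (m i) := by
      rw [← ψ.tsum_eq (fun m : Fin k → ℕ => ∏ i, g' i (m i))]
      exact tsum_congr hcomp
    rw [h1, hT, ← Equiv.prod_comp eq.symm (fun e => ∑' n, g e n)]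

/-- Summing the sign-product over all spin configurations yields the parity indicator. -/
lemma spin_sum (gfst gsnd : E → V) (A : Finset V) (n : E → ℕ) :
    (∑ σ : V → Bool, corr A σ *
        ∏ e, (sgn (σ (gfst e)) * sgn (σ (gsnd e))) ^ (n e))
      = if sourcesN gfst gsnd n = A then (2 : ℝ) ^ (Fintype.card V) else 0 := by
  set deg : V → ℕ := fun x =>
    ∑ e : E, n e * ((if gfst e = x then 1 else 0) + (if gsnd e = x then (1 : ℕ) else 0))
    with hdeg
  set kk : V → ℕ := fun x => (if x ∈ A then 1 else 0) + deg x with hkk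
  have stepA : ∀ σ : V → Bool,
      corr A σ * ∏ e, (sgn (σ (gfst e)) * sgn (σ (gsnd e))) ^ (n e)
        = ∏ x, sgn (σ x) ^ kk x := by
    intro σ
    have hc : corr A σ = ∏ x, sgn (σ x) ^ (if x ∈ A then 1 else 0) := by
      rw [corr]
      simp only [pow_ite, pow_one, pow_zero]
      rw [Finset.prod_ite_mem, Finset.univ_inter]
    have hd : (∏ e, (sgn (σ (gfst e)) * sgn (σ (gsnd e))) ^ (n e))
        = ∏ x, sgn (σ x) ^ deg x := by
      have he : ∀ e : E, (sgn (σ (gfst e)) * sgn (σ (gsnd e))) ^ (n e)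
          = ∏ x, sgn (σ x) ^ (n e * ((if gfst e = x then 1 else 0) +
              (if gsnd e = x then (1 : ℕ) else 0))) := by
        intro e
        have h1 : (∏ x, sgn (σ x) ^ (n e * (if gfst e = x then 1 else 0)))
            = sgn (σ (gfst e)) ^ (n e) := by
          rw [Finset.prod_eq_single (gfst e)
            (fun b _ hb => by simp [(Ne.symm hb : ¬ gfst e = b)])
            (fun h => absurd (Finset.mem_univ _) h)]
          simp
        have h2 : (∏ x, sgn (σ x) ^ (n e * (if gsnd e = x then 1 else 0)))
            = sgn (σ (gsnd e)) ^ (n e) := by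
          rw [Finset.prod_eq_single (gsnd e)
            (fun b _ hb => by simp [(Ne.symm hb : ¬ gsnd e = b)])
            (fun h => absurd (Finset.mem_univ _) h)]
          simp
        rw [mul_pow, ← h1, ← h2, ← Finset.prod_mul_distrib]
        exact Finset.prod_congr rfl fun x _ => by rw [Nat.mul_add, pow_add]
      rw [Finset.prod_congr rfl fun e _ => he e, Finset.prod_comm]
      exact Finset.prod_congr rfl fun x _ => Finset.prod_pow_eq_pow_sum _ _ _
    rw [hc, hd, ← Finset.prod_mul_distrib]
    exact Finset.prod_congr rfl fun x _ => by rw [← pow_add]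
  rw [Finset.sum_congr rfl fun σ _ => stepA σ, ← Fintype.prod_sum (fun x b => sgn b ^ kk x)]
  have stepC : ∀ x : V, (∑ b : Bool, sgn b ^ kk x)
      = if Even (kk x) then (2 : ℝ) else 0 := by
    intro x
    have hb : (∑ b : Bool, sgn b ^ kk x) = 1 + (-1 : ℝ) ^ kk x := by
      rw [Fintype.sum_bool]; norm_num [sgn]
    rw [hb]
    rcases Nat.even_or_odd (kk x) with h | h
    · rw [if_pos h, h.neg_one_pow]; norm_num
    · rw [if_neg (Nat.not_even_iff_odd.mpr h), h.neg_one_pow]; norm_num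
  rw [Finset.prod_congr rfl fun x _ => stepC x]
  have hmem : ∀ x : V, x ∈ sourcesN gfst gsnd n ↔ Odd (deg x) := by
    intro x; simp [sourcesN, hdeg]
  have hkey : ∀ x : V, Even (kk x) ↔ (x ∈ sourcesN gfst gsnd n ↔ x ∈ A) := by
    intro x
    rw [hmem x]
    by_cases hx : x ∈ A
    · have h1 : kk x = 1 + deg x := by simp [hkk, hx]
      rw [h1, Nat.add_comm, Nat.even_add_one, Nat.not_even_iff_odd]
      simp [hx]
    · have h1 : kk x = deg x := by simp [hkk, hx]
      rw [h1]
      simp only [hx, iff_false]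
      exact Nat.not_odd_iff_even.symm
  have hiff : (sourcesN gfst gsnd n = A) ↔ ∀ x : V, Even (kk x) := by
    rw [Finset.ext_iff]
    exact forall_congr' fun x => (hkey x).symm
  by_cases h : sourcesN gfst gsnd n = A
  · have hall := hiff.mp h
    rw [if_pos h, Finset.prod_congr rfl fun x _ => if_pos (hall x),
      Finset.prod_const, Finset.card_univ]
  · rw [if_neg h]
    obtain ⟨x0, hx0⟩ := not_forall.mp (fun hc => h (hiff.mpr hc))
    exact Finset.prod_eq_zero (Finset.mem_univ x0) (if_neg hx0)

/-- Random-current expansion of the Ising partition function: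
`∑_σ σ_A e^{-βH_G(σ)} = 2^{|V|} ∑_{∂n = A} w_β(n)`, the sum on the right being
(absolutely) summable. -/
theorem random_current_expansion (gfst gsnd : E → V) (β : ℝ) (hβ : 0 < β) (A : Finset V) :
    Summable (fun n : E → ℕ => if sourcesN gfst gsnd n = A then w β n else 0) ∧
    (∑ σ : V → Bool, corr A σ * boltz gfst gsnd β σ)
      = 2 ^ (Fintype.card V) *
        ∑' n : E → ℕ, if sourcesN gfst gsnd n = A then w β n else 0 := by
  set c : (V → Bool) → E → ℝ :=
    fun σ e => β * (sgn (σ (gfst e)) * sgn (σ (gsnd e))) with hc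
  set g : (V → Bool) → E → ℕ → ℝ := fun σ e m => (c σ e) ^ m / (Nat.factorial m) with hg
  have hnorm : ∀ σ e, Summable fun m => ‖g σ e m‖ := by
    intro σ e
    refine (Real.summable_pow_div_factorial |c σ e|).congr fun m => ?_
    rw [hg]
    rw [Real.norm_eq_abs, abs_div, abs_pow, Nat.abs_cast]
  have htsum : ∀ σ e, (∑' m, g σ e m) = Real.exp (c σ e) := by
    intro σ e
    rw [Real.exp_eq_exp_ℝ, NormedSpace.exp_eq_tsum_div]
  have hboltz : ∀ σ, boltz gfst gsnd β σ = ∏ e, Real.exp (c σ e) := by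
    intro σ
    rw [boltz, Finset.mul_sum, Real.exp_sum]
  have hP : ∀ σ : V → Bool,
      (Summable fun n : E → ℕ => ∏ e, g σ e (n e)) ∧
      (∑' n : E → ℕ, ∏ e, g σ e (n e)) = boltz gfst gsnd β σ := by
    intro σ
    obtain ⟨hS, hT⟩ := pi_tsum (g σ) (hnorm σ)
    refine ⟨hS, ?_⟩
    rw [hT, hboltz σ]
    exact Finset.prod_congr rfl fun e _ => htsum σ e
  set F : (E → ℕ) → ℝ := fun n => if sourcesN gfst gsnd n = A then w β n else 0 with hFdef
  set Φ : (E → ℕ) → ℝ :=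
    fun n => ∑ σ : V → Bool, corr A σ * ∏ e, g σ e (n e) with hΦ
  have hΦsummable : Summable Φ :=
    summable_sum fun σ _ => ((hP σ).1.mul_left (corr A σ))
  have hΦtsum : (∑' n, Φ n) = ∑ σ : V → Bool, corr A σ * boltz gfst gsnd β σ := by
    rw [hΦ, Summable.tsum_finsetSum fun σ _ => ((hP σ).1.mul_left (corr A σ))]
    exact Finset.sum_congr rfl fun σ _ => by rw [tsum_mul_left, (hP σ).2]
  have hΦeq : ∀ n, Φ n = 2 ^ (Fintype.card V) * F n := by
    intro n
    have hsplit : ∀ σ : V → Bool, (∏ e, g σ e (n e))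
        = w β n * ∏ e, (sgn (σ (gfst e)) * sgn (σ (gsnd e))) ^ (n e) := by
      intro σ
      rw [w, ← Finset.prod_mul_distrib]
      refine Finset.prod_congr rfl fun e _ => ?_
      simp only [hg, hc]
      rw [mul_pow, mul_div_right_comm]
    rw [hΦ]
    calc (∑ σ : V → Bool, corr A σ * ∏ e, g σ e (n e))
        = w β n * ∑ σ : V → Bool, corr A σ *
            ∏ e, (sgn (σ (gfst e)) * sgn (σ (gsnd e))) ^ (n e) := by
          rw [Finset.mul_sum]
          exact Finset.sum_congr rfl fun σ _ => by rw [hsplit σ]; ring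
      _ = w β n * (if sourcesN gfst gsnd n = A then (2 : ℝ) ^ (Fintype.card V) else 0) := by
          rw [spin_sum gfst gsnd A n]
      _ = 2 ^ (Fintype.card V) * F n := by
          rw [hFdef]
          by_cases h : sourcesN gfst gsnd n = A <;> simp [h] <;> ring
  have h2 : ((2 : ℝ) ^ (Fintype.card V)) ≠ 0 := by positivity
  have hFsummable : Summable F := by
    have h3 := (hΦsummable.congr hΦeq).mul_left ((2 : ℝ) ^ (Fintype.card V))⁻¹
    exact h3.congr fun n => by field_simp
  refine ⟨hFsummable, ?_⟩
  rw [← hΦtsum, tsum_congr hΦeq, tsum_mul_left]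

end Stmt1
end

section
/- Switching lemma for random currents. Let G=(V,E) be a finite graph, β > 0, A, B ⊆ V, and let F : ℕ^E → ℝ be nonnegative (or bounded). Then ∑_{n₁,n₂ : ∂n₁=A, ∂n₂=B} F(n₁+n₂) w_β(n₁) w_β(n₂) = ∑_{n₁,n₂ : ∂n₁=AΔB, ∂n₂=∅} F(n₁+n₂) w_β(n₁) w_β(n₂) · 1[ trace(n₁+n₂) ∈ F_B ], where AΔB = (A∖B) ∪ (B∖A) is the symmetric difference. -/
open scoped BigOperators Classical ENNReal

open scoped symmDiff

namespace Stmt2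

variable {V E : Type} [Fintype V] [DecidableEq V] [Fintype E] [DecidableEq E]

/-- `∂n`: the set of sources of a current `n : E → ℕ`. -/
noncomputable def sourcesN (gfst gsnd : E → V) (n : E → ℕ) : Finset V :=
  Finset.univ.filter fun x : V =>
    Odd (∑ e : E, n e * ((if gfst e = x then 1 else 0) + (if gsnd e = x then (1 : ℕ) else 0)))

/-- `w_β(n) = ∏_{e ∈ E} β^{n_e} / n_e!` (as an extended nonnegative real). -/
noncomputable def wE (β : ℝ) (n : E → ℕ) : ℝ≥0∞ :=
  ∏ e : E, ENNReal.ofReal (β ^ (n e) / (Nat.factorial (n e)))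

/-- The trace `n̂` of a current: `n̂_e = 1` iff `n_e > 0`. -/
def traceC (n : E → ℕ) : E → Bool := fun e => decide (n e ≠ 0)

/-- Two vertices are adjacent in `ω` if some open edge joins them. -/
def adj (gfst gsnd : E → V) (ω : E → Bool) (x y : V) : Prop :=
  ∃ e : E, ω e = true ∧ ((gfst e = x ∧ gsnd e = y) ∨ (gfst e = y ∧ gsnd e = x))

/-- Connectivity by open paths in `ω`. -/
def conn (gfst gsnd : E → V) (ω : E → Bool) : V → V → Prop :=
  Relation.ReflTransGen (adj gfst gsnd ω)

/-- The event `F_B`: every connected component of `ω` contains an even number of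
vertices of `B`. -/
def evenEvent (gfst gsnd : E → V) (B : Finset V) (ω : E → Bool) : Prop :=
  ∀ x : V, Even ((B.filter fun y => conn gfst gsnd ω x y).card)

/-! ### Auxiliary material -/

set_option linter.unusedSectionVars false

/-- incidence count of an edge at a vertex -/
def inc (gfst gsnd : E → V) (e : E) (x : V) : ℕ :=
  (if gfst e = x then 1 else 0) + (if gsnd e = x then 1 else 0)

lemma mem_sourcesN (gfst gsnd : E → V) (n : E → ℕ) (x : V) :
    x ∈ sourcesN gfst gsnd n ↔ Odd (∑ e : E, n e * inc gfst gsnd e x) := by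
  simp [sourcesN, inc]

lemma sourcesN_congr_parity (gfst gsnd : E → V) {n n' : E → ℕ}
    (h : ∀ e, n e % 2 = n' e % 2) : sourcesN gfst gsnd n = sourcesN gfst gsnd n' := by
  ext x
  rw [mem_sourcesN, mem_sourcesN, Nat.odd_iff, Nat.odd_iff, Finset.sum_nat_mod,
    Finset.sum_congr rfl (fun e _ => by rw [Nat.mul_mod, h e, ← Nat.mul_mod]),
    ← Finset.sum_nat_mod]

lemma sourcesN_add (gfst gsnd : E → V) (n₁ n₂ : E → ℕ) :
    sourcesN gfst gsnd (n₁ + n₂) = sourcesN gfst gsnd n₁ ∆ sourcesN gfst gsnd n₂ := by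
  ext x
  rw [Finset.mem_symmDiff]
  simp only [mem_sourcesN, Pi.add_apply, add_mul, Finset.sum_add_distrib, Nat.odd_add,
    ← Nat.not_odd_iff_even]
  tauto

lemma sourcesN_sub (gfst gsnd : E → V) {n m : E → ℕ} (h : n ≤ m) :
    sourcesN gfst gsnd (m - n) = sourcesN gfst gsnd n ∆ sourcesN gfst gsnd m := by
  conv_rhs => rw [← add_tsub_cancel_of_le h, sourcesN_add, symmDiff_symmDiff_cancel_left]

lemma real_fact (β : ℝ) (a b : ℕ) :
    β ^ a / a.factorial * (β ^ b / b.factorial)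
      = β ^ (a + b) / (a + b).factorial * ((a + b).choose a) := by
  have h : ((a + b).choose a * a.factorial * b.factorial : ℝ) = (a + b).factorial := by
    have := Nat.add_choose_mul_factorial_mul_factorial a b
    rw [Nat.choose_symm_add]
    exact_mod_cast this
  have ha : (a.factorial : ℝ) ≠ 0 := Nat.cast_ne_zero.mpr (Nat.factorial_ne_zero a)
  have hb : (b.factorial : ℝ) ≠ 0 := Nat.cast_ne_zero.mpr (Nat.factorial_ne_zero b)
  have hab : ((a + b).factorial : ℝ) ≠ 0 := Nat.cast_ne_zero.mpr (Nat.factorial_ne_zero _)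
  field_simp
  rw [← h, pow_add]
  ring

lemma wE_mul {β : ℝ} (hβ : 0 ≤ β) {n m : E → ℕ} (h : n ≤ m) :
    wE β n * wE β (m - n) = wE β m * (∏ e, ((m e).choose (n e) : ℝ≥0∞)) := by
  rw [wE, wE, wE, ← Finset.prod_mul_distrib, ← Finset.prod_mul_distrib]
  refine Finset.prod_congr rfl fun e _ => ?_
  have he : n e + (m e - n e) = m e := Nat.add_sub_cancel' (h e)
  have h1 : (0 : ℝ) ≤ β ^ (n e) / (n e).factorial := by positivity
  rw [Pi.sub_apply, ← ENNReal.ofReal_mul h1, real_fact β (n e) (m e - n e), he,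
    ENNReal.ofReal_mul (by positivity), ENNReal.ofReal_natCast]

/-- componentwise edge-count of a sub-multigraph -/
def nOf (m : E → ℕ) (S : ∀ e, Finset (Fin (m e))) : E → ℕ := fun e => (S e).card

/-- componentwise symmetric difference -/
def symmD (m : E → ℕ) (S K : ∀ e, Finset (Fin (m e))) : ∀ e, Finset (Fin (m e)) :=
  fun e => S e ∆ K e

/-- the number of sub-multigraphs of the `m`-multigraph with boundary `C` -/
noncomputable def cnt (gfst gsnd : E → V) (m : E → ℕ) (C : Finset V) : ℕ :=
  (Finset.univ.filter fun S : ∀ e, Finset (Fin (m e)) =>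
    sourcesN gfst gsnd (nOf m S) = C).card

lemma card_symmDiff_parity {α : Type} [DecidableEq α] (s t : Finset α) :
    (s ∆ t).card % 2 = (s.card + t.card) % 2 := by
  have h1 : (s ∆ t).card = (s \ t).card + (t \ s).card := by
    rw [symmDiff_def, Finset.sup_eq_union,
      Finset.card_union_of_disjoint disjoint_sdiff_sdiff]
  have h2 : (s \ t).card + (s ∩ t).card = s.card := Finset.card_sdiff_add_card_inter s t
  have h3 : (t \ s).card + (t ∩ s).card = t.card := Finset.card_sdiff_add_card_inter t s
  have h4 : (s ∩ t).card = (t ∩ s).card := by rw [Finset.inter_comm]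
  omega

lemma sourcesN_symmD (gfst gsnd : E → V) (m : E → ℕ) (S K : ∀ e, Finset (Fin (m e))) :
    sourcesN gfst gsnd (nOf m (symmD m S K))
      = sourcesN gfst gsnd (nOf m S) ∆ sourcesN gfst gsnd (nOf m K) := by
  rw [← sourcesN_add]
  exact sourcesN_congr_parity gfst gsnd
    (fun e => by simpa [nOf, symmD, Pi.add_apply] using card_symmDiff_parity (S e) (K e))

lemma symmD_invol (m : E → ℕ) (S K : ∀ e, Finset (Fin (m e))) :
    symmD m (symmD m S K) K = S := by
  funext e; exact symmDiff_symmDiff_cancel_right (K e) (S e)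

lemma cnt_eq_of_K (gfst gsnd : E → V) (m : E → ℕ) {K : ∀ e, Finset (Fin (m e))}
    {D : Finset V} (hK : sourcesN gfst gsnd (nOf m K) = D) (C : Finset V) :
    cnt gfst gsnd m C = cnt gfst gsnd m (C ∆ D) := by
  refine Finset.card_bij' (fun S _ => symmD m S K) (fun S _ => symmD m S K) ?_ ?_ ?_ ?_
  · intro S hS
    rw [Finset.mem_filter] at hS ⊢
    exact ⟨Finset.mem_univ _, by rw [sourcesN_symmD, hS.2, hK]⟩
  · intro S hS
    rw [Finset.mem_filter] at hS ⊢
    refine ⟨Finset.mem_univ _, ?_⟩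
    rw [sourcesN_symmD, hS.2, hK, symmDiff_symmDiff_cancel_right]
  · intro S _; exact symmD_invol m S K
  · intro S _; exact symmD_invol m S K

lemma card_nOf_fiber (m n : E → ℕ) :
    (Finset.univ.filter fun S : ∀ e, Finset (Fin (m e)) => nOf m S = n).card
      = ∏ e, (m e).choose (n e) := by
  rw [← Fintype.card_subtype]
  have e1 : {S : ∀ e, Finset (Fin (m e)) // nOf m S = n}
      ≃ ∀ e, {s : Finset (Fin (m e)) // s.card = n e} :=
    (Equiv.subtypeEquivRight (fun S => funext_iff)).trans
      (Equiv.subtypePiEquivPi (p := fun e (s : Finset (Fin (m e))) => s.card = n e))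
  rw [Fintype.card_congr e1, Fintype.card_pi]
  exact Finset.prod_congr rfl fun e _ => by
    rw [Fintype.card_finset_len, Fintype.card_fin]

lemma cnt_eq_sum (gfst gsnd : E → V) (m : E → ℕ) (C : Finset V) :
    cnt gfst gsnd m C = ∑ n ∈ Finset.Iic m,
      if sourcesN gfst gsnd n = C then ∏ e, (m e).choose (n e) else 0 := by
  rw [cnt, Finset.card_eq_sum_card_fiberwise (f := nOf m) (t := Finset.Iic m)
    (fun S _ => Finset.mem_Iic.mpr fun e => by
      simpa [nOf, Fintype.card_fin] using Finset.card_le_univ (S e))]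
  refine Finset.sum_congr rfl fun n hn => ?_
  rw [Finset.filter_filter]
  by_cases h : sourcesN gfst gsnd n = C
  · rw [if_pos h, ← card_nOf_fiber m n]
    congr 1
    apply Finset.filter_congr
    intro S _
    exact ⟨fun hS => hS.2, fun hS => ⟨by rw [hS, h], hS⟩⟩
  · rw [if_neg h, Finset.card_eq_zero, Finset.filter_eq_empty_iff]
    rintro S - ⟨h1, h2⟩
    exact h (by rw [← h2, h1])

lemma conn_symm (gfst gsnd : E → V) (ω : E → Bool) {x y : V}
    (h : conn gfst gsnd ω x y) : conn gfst gsnd ω y x :=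
  (@Relation.ReflTransGen.symmetric _ _
    ⟨fun _ _ ⟨e, he, h'⟩ => ⟨e, he, h'.symm⟩⟩).symm _ _ h

lemma traceC_true {m : E → ℕ} {e : E} : traceC m e = true ↔ m e ≠ 0 := by
  simp [traceC]

/-- The boundary of any sub-multigraph meets every component of the trace evenly. -/
lemma even_of_K (gfst gsnd : E → V) (m : E → ℕ) (K : ∀ e, Finset (Fin (m e))) (x : V) :
    Even (((sourcesN gfst gsnd (nOf m K)).filter
      fun y => conn gfst gsnd (traceC m) x y).card) := by
  set ω := traceC m with hω
  set Cx : Finset V := Finset.univ.filter fun y => conn gfst gsnd ω x y with hCx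
  have hfilt : (sourcesN gfst gsnd (nOf m K)).filter (fun y => conn gfst gsnd ω x y)
      = Cx.filter (fun y => Odd (∑ e, nOf m K e * inc gfst gsnd e y)) := by
    ext y
    simp only [Finset.mem_filter, mem_sourcesN, hCx, Finset.mem_univ, true_and]
    tauto
  rw [hfilt, ← Finset.even_sum_iff_even_card_odd]
  rw [Finset.sum_comm]
  apply Finset.even_sum
  intro e _
  by_cases hK : (K e).card = 0
  · simp [nOf, hK]
  · have hme : m e ≠ 0 := by
      obtain ⟨i, -⟩ := Finset.card_pos.mp (Nat.pos_of_ne_zero hK)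
      exact i.pos.ne'
    have hωe : ω e = true := traceC_true.mpr hme
    have hiff : gfst e ∈ Cx ↔ gsnd e ∈ Cx := by
      simp only [hCx, Finset.mem_filter, Finset.mem_univ, true_and]
      constructor
      · exact fun h => h.tail ⟨e, hωe, Or.inl ⟨rfl, rfl⟩⟩
      · exact fun h => h.tail ⟨e, hωe, Or.inr ⟨rfl, rfl⟩⟩
    have hsum : ∑ y ∈ Cx, inc gfst gsnd e y
        = (if gfst e ∈ Cx then 1 else 0) + (if gsnd e ∈ Cx then 1 else 0) := by
      simp only [inc, Finset.sum_add_distrib, Finset.sum_ite_eq, Finset.sum_boole]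
    rw [← Finset.mul_sum, hsum]
    refine Even.mul_left ?_ _
    by_cases h1 : gfst e ∈ Cx
    · rw [if_pos h1, if_pos (hiff.mp h1)]; decide
    · rw [if_neg h1, if_neg (fun h2 => h1 (hiff.mpr h2))]; decide

lemma sourcesN_empty (gfst gsnd : E → V) (m : E → ℕ) :
    sourcesN gfst gsnd (nOf m (fun _ => ∅)) = ∅ := by
  ext x
  simp [mem_sourcesN, nOf]

/-- a single copy of edge `e` -/
def singleK (m : E → ℕ) (e : E) : ∀ e', Finset (Fin (m e')) :=
  fun e' => Finset.univ.filter fun i : Fin (m e') => e' = e ∧ (i : ℕ) = 0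

lemma nOf_singleK (m : E → ℕ) (e : E) (hme : m e ≠ 0) (e' : E) :
    nOf m (singleK m e) e' = if e' = e then 1 else 0 := by
  rw [nOf, singleK]
  by_cases h : e' = e
  · subst h
    rw [if_pos rfl]
    have : (Finset.univ.filter fun i : Fin (m e') => e' = e' ∧ (i : ℕ) = 0)
        = {(⟨0, Nat.pos_of_ne_zero hme⟩ : Fin (m e'))} := by
      ext i
      simp [Fin.ext_iff]
    rw [this, Finset.card_singleton]
  · rw [if_neg h]
    simp [Finset.filter_eq_empty_iff, h]

lemma sourcesN_singleK (gfst gsnd : E → V) (m : E → ℕ) (e : E) (hme : m e ≠ 0) :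
    sourcesN gfst gsnd (nOf m (singleK m e)) = {gfst e} ∆ {gsnd e} := by
  ext x
  rw [mem_sourcesN]
  have : ∀ e' : E, nOf m (singleK m e) e' * inc gfst gsnd e' x
      = if e' = e then inc gfst gsnd e' x else 0 := by
    intro e'
    rw [nOf_singleK m e hme e', ite_mul, one_mul, zero_mul]
  rw [Finset.sum_congr rfl fun e' _ => this e', Finset.sum_ite_eq' Finset.univ e,
    if_pos (Finset.mem_univ e)]
  rw [Finset.mem_symmDiff]
  by_cases h1 : gfst e = x <;> by_cases h2 : gsnd e = x <;>
    simp [inc, h1, h2, Nat.odd_iff] <;>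
    first
      | (intro h; exact h2 h.symm)
      | (intro h; exact h1 h.symm)
      | exact ⟨fun h => absurd h.symm h1, fun h => absurd h.symm h2⟩

/-- connectivity yields a sub-multigraph with boundary `{x} ∆ {y}`. -/
lemma exists_K_pair (gfst gsnd : E → V) (m : E → ℕ) {x y : V}
    (h : conn gfst gsnd (traceC m) x y) :
    ∃ K : ∀ e, Finset (Fin (m e)), sourcesN gfst gsnd (nOf m K) = {x} ∆ {y} := by
  induction h with
  | refl => exact ⟨fun _ => ∅, by rw [sourcesN_empty, symmDiff_self, Finset.bot_eq_empty]⟩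
  | @tail b c hxb hbc ih =>
    obtain ⟨K, hK⟩ := ih
    obtain ⟨e, he, hends⟩ := hbc
    have hme : m e ≠ 0 := traceC_true.mp he
    refine ⟨symmD m K (singleK m e), ?_⟩
    rw [sourcesN_symmD, hK, sourcesN_singleK gfst gsnd m e hme]
    rcases hends with ⟨h1, h2⟩ | ⟨h1, h2⟩
    · rw [h1, h2, symmDiff_assoc, symmDiff_symmDiff_cancel_left]
    · rw [h1, h2, symmDiff_comm ({c} : Finset V) ({b} : Finset V), symmDiff_assoc,
        symmDiff_symmDiff_cancel_left]

/-- pairing within components: the even event yields a sub-multigraph with boundary `B`. -/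
lemma exists_K_of_even (gfst gsnd : E → V) (m : E → ℕ) :
    ∀ (k : ℕ) (B : Finset V), B.card = k → evenEvent gfst gsnd B (traceC m) →
      ∃ K : ∀ e, Finset (Fin (m e)), sourcesN gfst gsnd (nOf m K) = B := by
  intro k
  induction k using Nat.strong_induction_on with
  | _ k ih =>
    intro B hB hE
    rcases Finset.eq_empty_or_nonempty B with hB0 | ⟨x, hx⟩
    · exact ⟨fun _ => ∅, by rw [sourcesN_empty, hB0]⟩
    · set ω := traceC m with hω
      have hx' : x ∈ B.filter fun y => conn gfst gsnd ω x y :=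
        Finset.mem_filter.mpr ⟨hx, Relation.ReflTransGen.refl⟩
      have hcard : 1 < (B.filter fun y => conn gfst gsnd ω x y).card := by
        have h1 : 0 < (B.filter fun y => conn gfst gsnd ω x y).card :=
          Finset.card_pos.mpr ⟨x, hx'⟩
        rcases hE x with ⟨c, hc⟩
        omega
      obtain ⟨y, hy, hyx⟩ := Finset.exists_mem_ne hcard x
      rw [Finset.mem_filter] at hy
      obtain ⟨hyB, hxy⟩ := hy
      have hpair : ({x, y} : Finset V) ⊆ B := by
        intro z hz
        rcases Finset.mem_insert.mp hz with rfl | hz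
        · exact hx
        · rwa [Finset.mem_singleton.mp hz]
      have hcard2 : ({x, y} : Finset V).card = 2 := Finset.card_pair (Ne.symm hyx)
      set B' := B \ {x, y} with hB'
      have hcB' : B'.card < k := by
        have hfle : (B.filter fun y => conn gfst gsnd ω x y).card ≤ B.card :=
          Finset.card_filter_le _ _
        rw [hB', Finset.card_sdiff_of_subset hpair, hcard2]
        omega
      have hE' : evenEvent gfst gsnd B' ω := by
        intro z
        have hsplit : B'.filter (fun w => conn gfst gsnd ω z w)
            = (B.filter fun w => conn gfst gsnd ω z w) \ {x, y} := by
          ext w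
          simp only [hB', Finset.mem_filter, Finset.mem_sdiff]
          tauto
        by_cases hz : conn gfst gsnd ω z x
        · have hzy : conn gfst gsnd ω z y := hz.trans hxy
          have hsub : ({x, y} : Finset V) ⊆ B.filter fun w => conn gfst gsnd ω z w := by
            intro w hw
            rcases Finset.mem_insert.mp hw with rfl | hw
            · exact Finset.mem_filter.mpr ⟨hx, hz⟩
            · rw [Finset.mem_singleton.mp hw]
              exact Finset.mem_filter.mpr ⟨hyB, hzy⟩
          rw [hsplit, Finset.card_sdiff_of_subset hsub, hcard2]
          exact (hE z).tsub even_two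
        · have hzy : ¬ conn gfst gsnd ω z y :=
            fun h => hz (h.trans (conn_symm gfst gsnd ω hxy))
          have heq : (B.filter fun w => conn gfst gsnd ω z w) \ {x, y}
              = B.filter fun w => conn gfst gsnd ω z w := by
            apply Finset.sdiff_eq_self_of_disjoint
            rw [Finset.disjoint_insert_right, Finset.disjoint_singleton_right]
            constructor <;> rw [Finset.mem_filter] <;> tauto
          rw [hsplit, heq]
          exact hE z
      obtain ⟨K', hK'⟩ := ih _ hcB' B' rfl hE'
      obtain ⟨Kxy, hKxy⟩ := exists_K_pair gfst gsnd m hxy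
      refine ⟨symmD m K' Kxy, ?_⟩
      rw [sourcesN_symmD, hK', hKxy]
      have h1 : ({x} : Finset V) ∆ {y} = {x, y} := by
        rw [Disjoint.symmDiff_eq_sup (Finset.disjoint_singleton.mpr hyx.symm)]
        rfl
      rw [h1, hB', Disjoint.symmDiff_eq_sup Finset.sdiff_disjoint,
        Finset.sup_eq_union, Finset.sdiff_union_of_subset hpair]

/-- The core switching identity. -/
lemma cnt_switch (gfst gsnd : E → V) (m : E → ℕ) (A B : Finset V)
    (hm : sourcesN gfst gsnd m = A ∆ B) :
    cnt gfst gsnd m A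
      = if evenEvent gfst gsnd B (traceC m) then cnt gfst gsnd m (A ∆ B) else 0 := by
  have hnOf : nOf m (fun e => (Finset.univ : Finset (Fin (m e)))) = m :=
    funext fun e => by simp [nOf]
  have hfull : sourcesN gfst gsnd (nOf m (fun e => (Finset.univ : Finset (Fin (m e)))))
      = A ∆ B := by rw [hnOf, hm]
  by_cases hev : evenEvent gfst gsnd B (traceC m)
  · rw [if_pos hev]
    obtain ⟨K, hK⟩ := exists_K_of_even gfst gsnd m B.card B rfl hev
    exact cnt_eq_of_K gfst gsnd m hK A
  · rw [if_neg hev, cnt, Finset.card_eq_zero, Finset.filter_eq_empty_iff]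
    rintro S - hS
    apply hev
    intro x
    have h := even_of_K gfst gsnd m
      (symmD m S (fun e => (Finset.univ : Finset (Fin (m e))))) x
    rwa [sourcesN_symmD, hS, hfull, symmDiff_symmDiff_cancel_left] at h

lemma tsum_pair_eq (G : (E → ℕ) → (E → ℕ) → ℝ≥0∞) :
    (∑' n₁ : E → ℕ, ∑' n₂ : E → ℕ, G n₁ n₂)
      = ∑' m : E → ℕ, ∑ n ∈ Finset.Iic m, G n (m - n) := by
  have h1 : ∀ n₁ : E → ℕ, (∑' n₂ : E → ℕ, G n₁ n₂)
      = ∑' m : E → ℕ, if n₁ ≤ m then G n₁ (m - n₁) else 0 := by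
    intro n₁
    have hsupp : Function.support (fun m : E → ℕ => if n₁ ≤ m then G n₁ (m - n₁) else 0)
        ⊆ {m : E → ℕ | n₁ ≤ m} := by
      intro m hm
      simp only [Function.mem_support] at hm
      by_contra hc
      exact hm (if_neg (by simpa using hc))
    rw [← tsum_subtype_eq_of_support_subset hsupp]
    rw [← Equiv.tsum_eq
      (⟨fun n₂ => ⟨n₁ + n₂, (le_add_of_nonneg_right zero_le : n₁ ≤ n₁ + n₂)⟩,
        fun m => m.1 - n₁,
        fun n₂ => by simp,
        fun m => Subtype.ext (add_tsub_cancel_of_le m.2)⟩ :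
        (E → ℕ) ≃ {m : E → ℕ | n₁ ≤ m})
      (fun m : {m : E → ℕ | n₁ ≤ m} =>
        if n₁ ≤ (m : E → ℕ) then G n₁ ((m : E → ℕ) - n₁) else 0)]
    refine tsum_congr fun n₂ => ?_
    show G n₁ n₂ = if n₁ ≤ n₁ + n₂ then G n₁ (n₁ + n₂ - n₁) else 0
    rw [if_pos le_self_add, add_tsub_cancel_left]
  calc (∑' n₁ : E → ℕ, ∑' n₂ : E → ℕ, G n₁ n₂)
      = ∑' n₁ : E → ℕ, ∑' m : E → ℕ, if n₁ ≤ m then G n₁ (m - n₁) else 0 :=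
        tsum_congr h1
    _ = ∑' m : E → ℕ, ∑' n₁ : E → ℕ, if n₁ ≤ m then G n₁ (m - n₁) else 0 :=
        ENNReal.tsum_comm
    _ = ∑' m : E → ℕ, ∑ n ∈ Finset.Iic m, G n (m - n) := by
        refine tsum_congr fun m => ?_
        rw [tsum_eq_sum (s := Finset.Iic m)
          (fun n hn => if_neg (fun hc => hn (Finset.mem_Iic.mpr hc)))]
        exact Finset.sum_congr rfl fun n hn => if_pos (Finset.mem_Iic.mp hn)

lemma sum_m_eq (gfst gsnd : E → V) {β : ℝ} (hβ : 0 ≤ β) (m : E → ℕ) (c : ℝ≥0∞)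
    (C D : Finset V) :
    (∑ n ∈ Finset.Iic m, if sourcesN gfst gsnd n = C ∧ sourcesN gfst gsnd (m - n) = D then
        c * wE β n * wE β (m - n) else 0)
      = if sourcesN gfst gsnd m = C ∆ D then c * wE β m * cnt gfst gsnd m C else 0 := by
  by_cases hm : sourcesN gfst gsnd m = C ∆ D
  · rw [if_pos hm]
    have step : ∀ n ∈ Finset.Iic m,
        (if sourcesN gfst gsnd n = C ∧ sourcesN gfst gsnd (m - n) = D then
          c * wE β n * wE β (m - n) else 0)
        = (if sourcesN gfst gsnd n = C then (∏ e, ((m e).choose (n e) : ℝ≥0∞)) else 0)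
            * (c * wE β m) := by
      intro n hn
      have hn' := Finset.mem_Iic.mp hn
      by_cases h : sourcesN gfst gsnd n = C
      · have hD : sourcesN gfst gsnd (m - n) = D := by
          rw [sourcesN_sub gfst gsnd hn', h, hm, symmDiff_symmDiff_cancel_left]
        rw [if_pos ⟨h, hD⟩, if_pos h, mul_assoc, wE_mul hβ hn']
        ring
      · rw [if_neg (fun hc => h hc.1), if_neg h, zero_mul]
    rw [Finset.sum_congr rfl step, ← Finset.sum_mul, cnt_eq_sum gfst gsnd m C]
    push_cast
    ring
  · rw [if_neg hm]
    refine Finset.sum_eq_zero fun n hn => ?_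
    rw [if_neg]
    rintro ⟨h1, h2⟩
    apply hm
    have hn' := Finset.mem_Iic.mp hn
    have hsplit : sourcesN gfst gsnd m
        = sourcesN gfst gsnd n ∆ sourcesN gfst gsnd (m - n) := by
      conv_lhs => rw [← add_tsub_cancel_of_le hn', sourcesN_add]
    rw [hsplit, h1, h2]

/-- The switching lemma for random currents. -/
theorem switching_lemma (gfst gsnd : E → V) (β : ℝ) (hβ : 0 < β)
    (A B : Finset V) (F : (E → ℕ) → ℝ≥0∞) :
    (∑' n₁ : E → ℕ, ∑' n₂ : E → ℕ,
        if sourcesN gfst gsnd n₁ = A ∧ sourcesN gfst gsnd n₂ = B then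
          F (n₁ + n₂) * wE β n₁ * wE β n₂ else 0)
      = ∑' n₁ : E → ℕ, ∑' n₂ : E → ℕ,
          if sourcesN gfst gsnd n₁ = (A \ B) ∪ (B \ A) ∧
              sourcesN gfst gsnd n₂ = (∅ : Finset V) ∧
              evenEvent gfst gsnd B (traceC (n₁ + n₂)) then
            F (n₁ + n₂) * wE β n₁ * wE β n₂ else 0 := by
  have hU : (A \ B) ∪ (B \ A) = A ∆ B := by
    rw [symmDiff_def, Finset.sup_eq_union]
  rw [tsum_pair_eq, tsum_pair_eq]
  refine tsum_congr fun m => ?_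
  have hrw : ∀ n ∈ Finset.Iic m, n + (m - n) = m :=
    fun n hn => add_tsub_cancel_of_le (Finset.mem_Iic.mp hn)
  have hbot : (A ∆ B) ∆ (∅ : Finset V) = A ∆ B := by
    rw [← Finset.bot_eq_empty, symmDiff_bot]
  have hL : (∑ n ∈ Finset.Iic m,
      if sourcesN gfst gsnd n = A ∧ sourcesN gfst gsnd (m - n) = B then
        F (n + (m - n)) * wE β n * wE β (m - n) else 0)
      = if sourcesN gfst gsnd m = A ∆ B then F m * wE β m * cnt gfst gsnd m A else 0 := by
    rw [Finset.sum_congr rfl (fun n hn => by rw [hrw n hn])]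
    exact sum_m_eq gfst gsnd hβ.le m (F m) A B
  rw [hL]
  by_cases hev : evenEvent gfst gsnd B (traceC m)
  · have hR : (∑ n ∈ Finset.Iic m,
        if sourcesN gfst gsnd n = (A \ B) ∪ (B \ A) ∧ sourcesN gfst gsnd (m - n) = ∅ ∧
            evenEvent gfst gsnd B (traceC (n + (m - n))) then
          F (n + (m - n)) * wE β n * wE β (m - n) else 0)
        = if sourcesN gfst gsnd m = A ∆ B then
            F m * wE β m * cnt gfst gsnd m (A ∆ B) else 0 := by
      rw [Finset.sum_congr rfl (fun n hn => by rw [hrw n hn])]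
      have : (∑ n ∈ Finset.Iic m,
          if sourcesN gfst gsnd n = (A \ B) ∪ (B \ A) ∧ sourcesN gfst gsnd (m - n) = ∅ ∧
              evenEvent gfst gsnd B (traceC m) then
            F m * wE β n * wE β (m - n) else 0)
          = ∑ n ∈ Finset.Iic m,
            if sourcesN gfst gsnd n = A ∆ B ∧ sourcesN gfst gsnd (m - n) = ∅ then
              F m * wE β n * wE β (m - n) else 0 :=
        Finset.sum_congr rfl fun n _ => if_congr (by simp [hev, hU]) rfl rfl
      rw [this, sum_m_eq gfst gsnd hβ.le m (F m) (A ∆ B) ∅, hbot]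
    rw [hR]
    by_cases hm : sourcesN gfst gsnd m = A ∆ B
    · rw [if_pos hm, if_pos hm, cnt_switch gfst gsnd m A B hm, if_pos hev]
    · rw [if_neg hm, if_neg hm]
  · have hR : (∑ n ∈ Finset.Iic m,
        if sourcesN gfst gsnd n = (A \ B) ∪ (B \ A) ∧ sourcesN gfst gsnd (m - n) = ∅ ∧
            evenEvent gfst gsnd B (traceC (n + (m - n))) then
          F (n + (m - n)) * wE β n * wE β (m - n) else 0) = 0 := by
      rw [Finset.sum_congr rfl (fun n hn => by rw [hrw n hn])]
      exact Finset.sum_eq_zero fun n _ => if_neg (fun hc => hev hc.2.2)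
    rw [hR]
    by_cases hm : sourcesN gfst gsnd m = A ∆ B
    · rw [if_pos hm, cnt_switch gfst gsnd m A B hm, if_neg hev]
      simp
    · rw [if_neg hm]

end Stmt2
end

section
/- Edwards–Sokal correlation identities. Fix an integer q ≥ 2, a finite graph G=(V,E) with a distinguished boundary set ∂G ⊆ V, p ∈ (0,1), and let β = −((q−1)/q)·ln(1−p). Then: (i) for all x, y ∈ V, μ^f_{G,β,q}[σ_x·σ_y] = φ^0_{G,p,q}[x ↔ y], where {x ↔ y} is the event that x and y lie in the same connected component of (V, {e : ω_e = 1}); and (ii) for every b ∈ {1,…,q} and every x ∈ V, μ^b_{G,β,q}[σ_x·b] = φ^1_{G,p,q}[x ↔ ∂G], where {x ↔ ∂G} is the event that the open cluster of x intersects ∂G. -/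
open scoped BigOperators Classical

namespace Stmt3

variable {V E : Type} [Fintype V] [DecidableEq V] [Fintype E] [DecidableEq E]

/-- The dot product of the simplex embedding of `q`-state Potts spins:
`a · b = 1` if `a = b` and `-1/(q-1)` otherwise. -/
noncomputable def dotq (q : ℕ) (a b : Fin q) : ℝ := if a = b then 1 else -1 / ((q : ℝ) - 1)

/-- Potts Boltzmann weight `exp(-β H^f_G(σ)) = exp(β ∑_{xy∈E} σ_x·σ_y)`. -/
noncomputable def pottsBoltz (gfst gsnd : E → V) (q : ℕ) (β : ℝ) (σ : V → Fin q) : ℝ :=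
  Real.exp (β * ∑ e : E, dotq q (σ (gfst e)) (σ (gsnd e)))

/-- Two vertices are adjacent in `ω` if some open edge joins them. -/
def adj (gfst gsnd : E → V) (ω : E → Bool) (x y : V) : Prop :=
  ∃ e : E, ω e = true ∧ ((gfst e = x ∧ gsnd e = y) ∨ (gfst e = y ∧ gsnd e = x))

/-- Connectivity by open paths in `ω`. -/
def conn (gfst gsnd : E → V) (ω : E → Bool) : V → V → Prop :=
  Relation.ReflTransGen (adj gfst gsnd ω)

/-- Number of open edges. -/
noncomputable def openCount (ω : E → Bool) : ℕ :=
  (Finset.univ.filter fun e : E => ω e = true).card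

/-- Number of closed edges. -/
noncomputable def closedCount (ω : E → Bool) : ℕ :=
  (Finset.univ.filter fun e : E => ω e = false).card

/-- `k(ω)`: the number of connected components of `(V, {e : ω_e = 1})`
(isolated vertices included). -/
noncomputable def numComp (gfst gsnd : E → V) (ω : E → Bool) : ℕ :=
  (Finset.univ.image fun x : V => Finset.univ.filter fun y : V => conn gfst gsnd ω x y).card

/-- Wired connectivity: open paths, with all boundary vertices identified. -/
def connW (gfst gsnd : E → V) (bdry : Finset V) (ω : E → Bool) : V → V → Prop :=
  Relation.ReflTransGen fun x y => adj gfst gsnd ω x y ∨ (x ∈ bdry ∧ y ∈ bdry)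

/-- `k(ω^1)`: the number of connected components after wiring the boundary. -/
noncomputable def numCompW (gfst gsnd : E → V) (bdry : Finset V) (ω : E → Bool) : ℕ :=
  (Finset.univ.image fun x : V =>
    Finset.univ.filter fun y : V => connW gfst gsnd bdry ω x y).card

/-- Random-cluster weight with free boundary conditions. -/
noncomputable def rcW0 (gfst gsnd : E → V) (p : ℝ) (q : ℕ) (ω : E → Bool) : ℝ :=
  p ^ openCount ω * (1 - p) ^ closedCount ω * (q : ℝ) ^ numComp gfst gsnd ω

/-- Random-cluster weight with wired boundary conditions. -/
noncomputable def rcW1 (gfst gsnd : E → V) (bdry : Finset V) (p : ℝ) (q : ℕ) (ω : E → Bool) : ℝ :=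
  p ^ openCount ω * (1 - p) ^ closedCount ω * (q : ℝ) ^ numCompW gfst gsnd bdry ω
/-! ### Auxiliary lemmas for the Edwards–Sokal proof -/

section ESAux

variable {q : ℕ}

lemma dotq_self (q : ℕ) (a : Fin q) : dotq q a a = 1 := if_pos rfl

lemma sum_dotq (hq : 2 ≤ q) (w : Fin q) : ∑ u : Fin q, dotq q u w = 0 := by
  have h2 : (2 : ℝ) ≤ (q : ℝ) := by exact_mod_cast hq
  have hq1 : ((q : ℝ) - 1) ≠ 0 := by intro h; linarith
  have hstep : ∀ u : Fin q,
      dotq q u w = (if u = w then (1 : ℝ) + 1 / ((q : ℝ) - 1) else 0) + (-1 / ((q : ℝ) - 1)) := by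
    intro u
    by_cases h : u = w
    · rw [dotq, if_pos h, if_pos h]; field_simp; ring
    · rw [dotq, if_neg h, if_neg h]; ring
  rw [Finset.sum_congr rfl fun u _ => hstep u, Finset.sum_add_distrib,
    Finset.sum_ite_eq' Finset.univ w, Finset.sum_const, Finset.card_univ, Fintype.card_fin,
    if_pos (Finset.mem_univ w), nsmul_eq_mul]
  field_simp
  ring

lemma sum_funSplit {Q : Type} [Fintype Q] [DecidableEq Q] (a : Q) (Φ : (Q → Fin q) → ℝ) :
    ∑ g : Q → Fin q, Φ g
      = ∑ u : Fin q, ∑ g' : { j : Q // j ≠ a } → Fin q,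
          Φ ((Equiv.funSplitAt a (Fin q)).symm (u, g')) := by
  rw [← Equiv.sum_comp (Equiv.funSplitAt a (Fin q)).symm Φ, Fintype.sum_prod_type]

lemma funSplit_symm_same {Q : Type} [DecidableEq Q] (a : Q) (u : Fin q) (g' : { j : Q // j ≠ a } → Fin q) :
    (Equiv.funSplitAt a (Fin q)).symm (u, g') a = u := by
  have h := (Equiv.funSplitAt a (Fin q)).apply_symm_apply (u, g')
  exact congrArg Prod.fst h

lemma funSplit_symm_ne {Q : Type} [DecidableEq Q] (a : Q) (u : Fin q) (g' : { j : Q // j ≠ a } → Fin q)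
    (j : Q) (hj : j ≠ a) :
    (Equiv.funSplitAt a (Fin q)).symm (u, g') j = g' ⟨j, hj⟩ := by
  have h := (Equiv.funSplitAt a (Fin q)).apply_symm_apply (u, g')
  exact congrFun (congrArg Prod.snd h) ⟨j, hj⟩

lemma sum_eval_dotq (hq : 2 ≤ q) {Q : Type} [Fintype Q] [DecidableEq Q] (a : Q) (w : Fin q) :
    ∑ g : Q → Fin q, dotq q (g a) w = 0 := by
  rw [sum_funSplit a (fun g => dotq q (g a) w)]
  have h1 : ∀ u : Fin q, ∀ g' : { j : Q // j ≠ a } → Fin q,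
      dotq q ((Equiv.funSplitAt a (Fin q)).symm (u, g') a) w = dotq q u w := by
    intro u g'; rw [funSplit_symm_same]
  calc (∑ u : Fin q, ∑ g' : { j : Q // j ≠ a } → Fin q,
          dotq q ((Equiv.funSplitAt a (Fin q)).symm (u, g') a) w)
      = ∑ g' : { j : Q // j ≠ a } → Fin q, ∑ u : Fin q, dotq q u w := by
        rw [Finset.sum_congr rfl fun u _ => Finset.sum_congr rfl fun g' _ => h1 u g',
          Finset.sum_comm]
    _ = 0 := by rw [Finset.sum_congr rfl fun g' _ => sum_dotq hq w, Finset.sum_const, smul_zero]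

lemma sum_two_dotq (hq : 2 ≤ q) {Q : Type} [Fintype Q] [DecidableEq Q] {a c : Q} (hac : c ≠ a) :
    ∑ g : Q → Fin q, dotq q (g a) (g c) = 0 := by
  rw [sum_funSplit a (fun g => dotq q (g a) (g c))]
  have h1 : ∀ u : Fin q, ∀ g' : { j : Q // j ≠ a } → Fin q,
      dotq q ((Equiv.funSplitAt a (Fin q)).symm (u, g') a)
          ((Equiv.funSplitAt a (Fin q)).symm (u, g') c)
        = dotq q u (g' ⟨c, hac⟩) := by
    intro u g'; rw [funSplit_symm_same, funSplit_symm_ne a u g' c hac]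
  calc (∑ u : Fin q, ∑ g' : { j : Q // j ≠ a } → Fin q,
          dotq q ((Equiv.funSplitAt a (Fin q)).symm (u, g') a)
            ((Equiv.funSplitAt a (Fin q)).symm (u, g') c))
      = ∑ g' : { j : Q // j ≠ a } → Fin q, ∑ u : Fin q, dotq q u (g' ⟨c, hac⟩) := by
        rw [Finset.sum_congr rfl fun u _ => Finset.sum_congr rfl fun g' _ => h1 u g',
          Finset.sum_comm]
    _ = 0 := by
        rw [Finset.sum_congr rfl fun g' _ => sum_dotq hq (g' ⟨c, hac⟩), Finset.sum_const,
          smul_zero]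

lemma adj_symm (gfst gsnd : E → V) (ω : E → Bool) : Symmetric (adj gfst gsnd ω) := by
  rintro x y ⟨e, he, h | h⟩
  · exact ⟨e, he, Or.inr h⟩
  · exact ⟨e, he, Or.inl h⟩

lemma conn_equivalence (gfst gsnd : E → V) (ω : E → Bool) :
    Equivalence (conn gfst gsnd ω) :=
  ⟨fun _ => Relation.ReflTransGen.refl,
   fun h => (@Relation.ReflTransGen.stdSymm _ _ ⟨fun _ _ h' => adj_symm gfst gsnd ω h'⟩).symm _ _ h,
   fun h h' => Relation.ReflTransGen.trans h h'⟩

/-- The setoid of `ω`-connectivity. -/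
def connSetoid (gfst gsnd : E → V) (ω : E → Bool) : Setoid V :=
  ⟨conn gfst gsnd ω, conn_equivalence gfst gsnd ω⟩

lemma connW_equivalence (gfst gsnd : E → V) (bdry : Finset V) (ω : E → Bool) :
    Equivalence (connW gfst gsnd bdry ω) := by
  refine ⟨fun _ => Relation.ReflTransGen.refl, fun h => ?_, fun h h' => h.trans h'⟩
  refine (@Relation.ReflTransGen.stdSymm _ _ ⟨?_⟩).symm _ _ h
  rintro x y (hadj | ⟨h1, h2⟩)
  · exact Or.inl (adj_symm gfst gsnd ω hadj)
  · exact Or.inr ⟨h2, h1⟩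

/-- The setoid of wired `ω`-connectivity. -/
def connWSetoid (gfst gsnd : E → V) (bdry : Finset V) (ω : E → Bool) : Setoid V :=
  ⟨connW gfst gsnd bdry ω, connW_equivalence gfst gsnd bdry ω⟩

/-- A spin configuration is compatible with `ω` if every open edge is monochromatic. -/
def Compat (gfst gsnd : E → V) (ω : E → Bool) {q : ℕ} (σ : V → Fin q) : Prop :=
  ∀ e : E, ω e = true → σ (gfst e) = σ (gsnd e)

lemma compat_iff (gfst gsnd : E → V) (ω : E → Bool) (σ : V → Fin q) :
    Compat gfst gsnd ω σ ↔ ∀ x y : V, conn gfst gsnd ω x y → σ x = σ y := by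
  constructor
  · intro h x y hxy
    induction hxy with
    | refl => rfl
    | tail _ h2 ih =>
      rcases h2 with ⟨e, he, ⟨h3, h4⟩ | ⟨h3, h4⟩⟩
      · rw [ih, ← h3, ← h4]; exact h e he
      · rw [ih, ← h3, ← h4]; exact (h e he).symm
  · intro h e he
    exact h _ _ (Relation.ReflTransGen.single ⟨e, he, Or.inl ⟨rfl, rfl⟩⟩)

lemma compatW_iff (gfst gsnd : E → V) (bdry : Finset V) (ω : E → Bool) (σ : V → Fin q)
    (b : Fin q) :
    (Compat gfst gsnd ω σ ∧ ∀ v ∈ bdry, σ v = b)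
      ↔ ((∀ x y : V, connW gfst gsnd bdry ω x y → σ x = σ y) ∧ ∀ v ∈ bdry, σ v = b) := by
  constructor
  · rintro ⟨h1, h2⟩
    refine ⟨fun x y hxy => ?_, h2⟩
    induction hxy with
    | refl => rfl
    | tail _ h3 ih =>
      rcases h3 with ⟨e, he, ⟨h4, h5⟩ | ⟨h4, h5⟩⟩ | ⟨hb1, hb2⟩
      · rw [ih, ← h4, ← h5]; exact h1 e he
      · rw [ih, ← h4, ← h5]; exact (h1 e he).symm
      · rw [ih, h2 _ hb1, h2 _ hb2]
  · rintro ⟨h1, h2⟩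
    refine ⟨fun e he => ?_, h2⟩
    exact h1 _ _ (Relation.ReflTransGen.single (Or.inl ⟨e, he, Or.inl ⟨rfl, rfl⟩⟩))

lemma conn_connW (gfst gsnd : E → V) (bdry : Finset V) (ω : E → Bool) {x y : V}
    (h : conn gfst gsnd ω x y) : connW gfst gsnd bdry ω x y :=
  Relation.ReflTransGen.mono (fun _ _ h' => Or.inl h') _ _ h

lemma connW_decomp (gfst gsnd : E → V) (bdry : Finset V) (ω : E → Bool) {x y : V}
    (h : connW gfst gsnd bdry ω x y) :
    conn gfst gsnd ω x y ∨ ∃ z ∈ bdry, conn gfst gsnd ω x z := by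
  induction h using Relation.ReflTransGen.head_induction_on with
  | refl => exact Or.inl Relation.ReflTransGen.refl
  | head h1 _ ih =>
    rcases h1 with hadj | ⟨hb, _⟩
    · rcases ih with h' | ⟨z, hz, hc⟩
      · exact Or.inl (Relation.ReflTransGen.head hadj h')
      · exact Or.inr ⟨z, hz, Relation.ReflTransGen.head hadj hc⟩
    · exact Or.inr ⟨_, hb, Relation.ReflTransGen.refl⟩

lemma sum_ite_rel (s : Setoid V) (F : (V → Fin q) → ℝ) :
    (∑ σ : V → Fin q, if ∀ x y : V, s.r x y → σ x = σ y then F σ else 0)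
      = ∑ g : Quotient s → Fin q, F fun v => g (Quotient.mk s v) := by
  rw [← Finset.sum_filter]
  refine Finset.sum_nbij' (i := fun σ => fun c : Quotient s => σ c.out)
    (j := fun g => fun v => g (Quotient.mk s v)) ?_ ?_ ?_ ?_ ?_
  · intro σ _; exact Finset.mem_univ _
  · intro g _
    simp only [Finset.mem_filter, Finset.mem_univ, true_and]
    intro x y hxy
    rw [Quotient.sound hxy]
  · intro σ hσ
    simp only [Finset.mem_filter, Finset.mem_univ, true_and] at hσ
    funext v
    exact hσ _ _ (Quotient.mk_out v)
  · intro g _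
    funext c
    exact congrArg g (Quotient.out_eq c)
  · intro σ hσ
    simp only [Finset.mem_filter, Finset.mem_univ, true_and] at hσ
    congr 1
    funext v
    exact (hσ _ _ (Quotient.mk_out v)).symm

lemma card_quot (s : Setoid V) :
    Fintype.card (Quotient s)
      = (Finset.univ.image fun x : V => Finset.univ.filter fun y : V => s.r x y).card := by
  have h1 : (fun x : V => Finset.univ.filter fun y : V => s.r x y)
      = (fun c : Quotient s => Finset.univ.filter fun y : V => Quotient.mk s y = c)
          ∘ Quotient.mk s := by
    funext x
    ext y
    simp only [Function.comp_apply, Finset.mem_filter, Finset.mem_univ, true_and]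
    exact ⟨fun h => Quotient.sound (s.symm h), fun h => s.symm (Quotient.exact h)⟩
  have hsurj : Function.Surjective (Quotient.mk s) := fun c => ⟨c.out, c.out_eq⟩
  have hinj : Function.Injective
      (fun c : Quotient s => Finset.univ.filter fun y : V => Quotient.mk s y = c) := by
    intro c c' h
    have hc : c.out ∈ Finset.univ.filter fun y : V => Quotient.mk s y = c := by
      simp only [Finset.mem_filter, Finset.mem_univ, true_and]; exact c.out_eq
    have h' : (Finset.univ.filter fun y : V => Quotient.mk s y = c)
        = Finset.univ.filter fun y : V => Quotient.mk s y = c' := h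
    rw [h'] at hc
    simp only [Finset.mem_filter, Finset.mem_univ, true_and] at hc
    rw [← hc, c.out_eq]
  rw [h1, ← Finset.image_image, Finset.image_univ_of_surjective hsurj,
    Finset.card_image_of_injective _ hinj, Finset.card_univ]

end ESAux
section ESAux2

variable {q : ℕ}

lemma prod_weight (gfst gsnd : E → V) (σ : V → Fin q) (p : ℝ) (ω : E → Bool) :
    (∏ e : E, if ω e then p * (if σ (gfst e) = σ (gsnd e) then (1 : ℝ) else 0) else (1 - p))
      = p ^ openCount ω * (1 - p) ^ closedCount ω
          * (if Compat gfst gsnd ω σ then (1 : ℝ) else 0) := by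
  rw [Finset.prod_ite]
  have hclosed : (Finset.univ.filter fun e : E => ¬(ω e = true))
      = Finset.univ.filter fun e : E => ω e = false := by
    ext e; simp
  have hcompat : (∀ e ∈ Finset.univ.filter fun e : E => ω e = true,
      σ (gfst e) = σ (gsnd e)) ↔ Compat gfst gsnd ω σ := by
    simp [Compat]
  rw [Finset.prod_mul_distrib, Finset.prod_const, Finset.prod_const, Finset.prod_boole,
    hclosed]
  by_cases hcc : Compat gfst gsnd ω σ
  · rw [if_pos hcc, if_pos (hcompat.mpr hcc), openCount, closedCount]
    ring
  · rw [if_neg hcc, if_neg (fun hh => hcc (hcompat.mp hh)), openCount, closedCount]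
    ring

lemma boltz_expand (gfst gsnd : E → V) (hq : 2 ≤ q) {p β : ℝ} (hp : p ∈ Set.Ioo (0 : ℝ) 1)
    (hβ : β = -(((q : ℝ) - 1) / (q : ℝ)) * Real.log (1 - p)) (σ : V → Fin q) :
    pottsBoltz gfst gsnd q β σ
      = Real.exp β ^ Fintype.card E *
          ∑ ω : E → Bool,
            (p ^ openCount ω * (1 - p) ^ closedCount ω
              * (if Compat gfst gsnd ω σ then (1 : ℝ) else 0)) := by
  have h2 : (2 : ℝ) ≤ (q : ℝ) := by exact_mod_cast hq
  have hq1 : ((q : ℝ) - 1) ≠ 0 := by intro h; linarith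
  have hq0 : ((q : ℝ)) ≠ 0 := by intro h; linarith
  have h1p : (0 : ℝ) < 1 - p := by have := hp.2; linarith
  have hedge : ∀ a b : Fin q, Real.exp (β * dotq q a b)
      = Real.exp β * ∑ c : Bool, (if c then p * (if a = b then (1 : ℝ) else 0) else (1 - p)) := by
    intro a b
    have hsum : (∑ c : Bool, (if c then p * (if a = b then (1 : ℝ) else 0) else (1 - p)))
        = p * (if a = b then (1 : ℝ) else 0) + (1 - p) := by
      rw [Fintype.sum_bool, if_pos rfl, if_neg Bool.false_ne_true]
    rw [hsum]
    by_cases h : a = b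
    · rw [dotq, if_pos h, if_pos h, mul_one, mul_one]
      ring
    · rw [dotq, if_neg h, if_neg h, mul_zero, zero_add]
      have hkey : β * (-1 / ((q : ℝ) - 1)) = β + Real.log (1 - p) := by
        rw [hβ]; field_simp; ring
      rw [hkey, Real.exp_add, Real.exp_log h1p]
  calc pottsBoltz gfst gsnd q β σ
      = ∏ e : E, Real.exp (β * dotq q (σ (gfst e)) (σ (gsnd e))) := by
        rw [pottsBoltz, Finset.mul_sum, Real.exp_sum]
    _ = ∏ e : E, (Real.exp β *
          ∑ c : Bool, (if c then p * (if σ (gfst e) = σ (gsnd e) then (1 : ℝ) else 0)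
            else (1 - p))) :=
        Finset.prod_congr rfl fun e _ => hedge _ _
    _ = Real.exp β ^ Fintype.card E *
          ∏ e : E, ∑ c : Bool, (if c then p * (if σ (gfst e) = σ (gsnd e) then (1 : ℝ) else 0)
            else (1 - p)) := by
        rw [Finset.prod_mul_distrib, Finset.prod_const, Finset.card_univ]
    _ = Real.exp β ^ Fintype.card E *
          ∑ ω : E → Bool, ∏ e : E,
            (if ω e then p * (if σ (gfst e) = σ (gsnd e) then (1 : ℝ) else 0) else (1 - p)) := by
        rw [Fintype.prod_sum
          (f := fun (e : E) (c : Bool) =>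
            if c then p * (if σ (gfst e) = σ (gsnd e) then (1 : ℝ) else 0) else (1 - p))]
    _ = _ := by
        rw [Finset.sum_congr rfl fun ω _ => prod_weight gfst gsnd σ p ω]

lemma potts_master (gfst gsnd : E → V) (hq : 2 ≤ q) {p β : ℝ} (hp : p ∈ Set.Ioo (0 : ℝ) 1)
    (hβ : β = -(((q : ℝ) - 1) / (q : ℝ)) * Real.log (1 - p)) (F : (V → Fin q) → ℝ) :
    (∑ σ : V → Fin q, F σ * pottsBoltz gfst gsnd q β σ)
      = Real.exp β ^ Fintype.card E *
          ∑ ω : E → Bool, (p ^ openCount ω * (1 - p) ^ closedCount ω *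
            ∑ σ : V → Fin q, if Compat gfst gsnd ω σ then F σ else 0) := by
  have h1 : ∀ σ : V → Fin q, F σ * pottsBoltz gfst gsnd q β σ
      = Real.exp β ^ Fintype.card E *
          ∑ ω : E → Bool, (p ^ openCount ω * (1 - p) ^ closedCount ω *
            (if Compat gfst gsnd ω σ then F σ else 0)) := by
    intro σ
    rw [boltz_expand gfst gsnd hq hp hβ σ, mul_left_comm]
    congr 1
    rw [Finset.mul_sum]
    refine Finset.sum_congr rfl fun ω _ => ?_
    by_cases h : Compat gfst gsnd ω σ
    · rw [if_pos h, if_pos h]; ring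
    · rw [if_neg h, if_neg h]; ring
  rw [Finset.sum_congr rfl fun σ _ => h1 σ, ← Finset.mul_sum]
  congr 1
  rw [Finset.sum_comm]
  exact Finset.sum_congr rfl fun ω _ => (Finset.mul_sum _ _ _).symm

lemma numComp_eq (gfst gsnd : E → V) (ω : E → Bool) :
    numComp gfst gsnd ω = Fintype.card (Quotient (connSetoid gfst gsnd ω)) :=
  (card_quot (connSetoid gfst gsnd ω)).symm

lemma numCompW_eq (gfst gsnd : E → V) (bdry : Finset V) (ω : E → Bool) :
    numCompW gfst gsnd bdry ω = Fintype.card (Quotient (connWSetoid gfst gsnd bdry ω)) :=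
  (card_quot (connWSetoid gfst gsnd bdry ω)).symm

lemma count_one (gfst gsnd : E → V) (ω : E → Bool) :
    (∑ σ : V → Fin q, if Compat gfst gsnd ω σ then (1 : ℝ) else 0)
      = (q : ℝ) ^ numComp gfst gsnd ω := by
  calc (∑ σ : V → Fin q, if Compat gfst gsnd ω σ then (1 : ℝ) else 0)
      = ∑ σ : V → Fin q,
          if ∀ x y : V, (connSetoid gfst gsnd ω).r x y → σ x = σ y then (1 : ℝ) else 0 :=
        Finset.sum_congr rfl fun σ _ => if_congr (compat_iff gfst gsnd ω σ) rfl rfl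
    _ = ∑ _g : Quotient (connSetoid gfst gsnd ω) → Fin q, (1 : ℝ) :=
        sum_ite_rel (connSetoid gfst gsnd ω) (fun _ => (1 : ℝ))
    _ = (q : ℝ) ^ numComp gfst gsnd ω := by
        rw [Finset.sum_const, Finset.card_univ, nsmul_eq_mul, mul_one, Fintype.card_fun,
          Fintype.card_fin, numComp_eq]
        push_cast
        rfl

lemma count_dot (gfst gsnd : E → V) (ω : E → Bool) (hq : 2 ≤ q) (x y : V) :
    (∑ σ : V → Fin q, if Compat gfst gsnd ω σ then dotq q (σ x) (σ y) else 0)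
      = if conn gfst gsnd ω x y then (q : ℝ) ^ numComp gfst gsnd ω else 0 := by
  have hmain : (∑ σ : V → Fin q, if Compat gfst gsnd ω σ then dotq q (σ x) (σ y) else 0)
      = ∑ g : Quotient (connSetoid gfst gsnd ω) → Fin q,
          dotq q (g (Quotient.mk (connSetoid gfst gsnd ω) x))
            (g (Quotient.mk (connSetoid gfst gsnd ω) y)) :=
    calc (∑ σ : V → Fin q, if Compat gfst gsnd ω σ then dotq q (σ x) (σ y) else 0)
        = ∑ σ : V → Fin q,
            if ∀ x' y' : V, (connSetoid gfst gsnd ω).r x' y' → σ x' = σ y'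
              then dotq q (σ x) (σ y) else 0 :=
          Finset.sum_congr rfl fun σ _ => if_congr (compat_iff gfst gsnd ω σ) rfl rfl
      _ = _ := sum_ite_rel (connSetoid gfst gsnd ω) (fun σ => dotq q (σ x) (σ y))
  rw [hmain]
  by_cases h : conn gfst gsnd ω x y
  · rw [if_pos h]
    have hxy : Quotient.mk (connSetoid gfst gsnd ω) x = Quotient.mk (connSetoid gfst gsnd ω) y :=
      Quotient.sound h
    calc (∑ g : Quotient (connSetoid gfst gsnd ω) → Fin q,
            dotq q (g (Quotient.mk (connSetoid gfst gsnd ω) x))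
              (g (Quotient.mk (connSetoid gfst gsnd ω) y)))
        = ∑ _g : Quotient (connSetoid gfst gsnd ω) → Fin q, (1 : ℝ) := by
          refine Finset.sum_congr rfl fun g _ => ?_
          rw [hxy, dotq_self]
      _ = (q : ℝ) ^ numComp gfst gsnd ω := by
          rw [Finset.sum_const, Finset.card_univ, nsmul_eq_mul, mul_one, Fintype.card_fun,
            Fintype.card_fin, numComp_eq]
          push_cast
          rfl
  · rw [if_neg h]
    have hxy : Quotient.mk (connSetoid gfst gsnd ω) y ≠ Quotient.mk (connSetoid gfst gsnd ω) x :=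
      fun hEq => h ((connSetoid gfst gsnd ω).symm (Quotient.exact hEq))
    exact sum_two_dotq hq hxy

end ESAux2
section ESAux3

variable {q : ℕ}

lemma sum_pin {Q : Type} [Fintype Q] [DecidableEq Q] (β₀ : Q) (b : Fin q) (Ψ : (Q → Fin q) → ℝ) :
    (∑ g : Q → Fin q, if g β₀ = b then Ψ g else 0)
      = ∑ g' : { j : Q // j ≠ β₀ } → Fin q,
          Ψ ((Equiv.funSplitAt β₀ (Fin q)).symm (b, g')) := by
  rw [sum_funSplit β₀ (fun g => if g β₀ = b then Ψ g else 0)]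
  have h1 : ∀ u : Fin q, ∀ g' : { j : Q // j ≠ β₀ } → Fin q,
      (if (Equiv.funSplitAt β₀ (Fin q)).symm (u, g') β₀ = b
        then Ψ ((Equiv.funSplitAt β₀ (Fin q)).symm (u, g')) else 0)
      = if u = b then Ψ ((Equiv.funSplitAt β₀ (Fin q)).symm (u, g')) else 0 := by
    intro u g'
    exact if_congr (by rw [funSplit_symm_same]) rfl rfl
  rw [Finset.sum_congr rfl fun u _ => Finset.sum_congr rfl fun g' _ => h1 u g']
  have h2 : ∀ u : Fin q,
      (∑ g' : { j : Q // j ≠ β₀ } → Fin q,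
        if u = b then Ψ ((Equiv.funSplitAt β₀ (Fin q)).symm (u, g')) else 0)
      = if u = b then (∑ g' : { j : Q // j ≠ β₀ } → Fin q,
          Ψ ((Equiv.funSplitAt β₀ (Fin q)).symm (u, g'))) else 0 := by
    intro u
    by_cases h : u = b <;> simp [h]
  rw [Finset.sum_congr rfl fun u _ => h2 u]
  rw [Fintype.sum_ite_eq' b (fun u => ∑ g' : { j : Q // j ≠ β₀ } → Fin q,
    Ψ ((Equiv.funSplitAt β₀ (Fin q)).symm (u, g')))]

lemma card_aux (hq : 2 ≤ q) {Q : Type} [Fintype Q] [DecidableEq Q] [Nonempty Q] (β₀ : Q) :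
    (q : ℝ) * ((Fintype.card ({ j : Q // j ≠ β₀ } → Fin q) : ℕ) : ℝ)
      = (q : ℝ) ^ Fintype.card Q := by
  have hcard : Fintype.card { j : Q // j ≠ β₀ } = Fintype.card Q - 1 := by
    rw [Fintype.card_subtype_compl, Fintype.card_subtype_eq]
  have hpos : 1 ≤ Fintype.card Q := Fintype.card_pos
  rw [Fintype.card_fun, Fintype.card_fin, hcard]
  push_cast
  rw [← pow_succ']
  congr 1
  omega

lemma count_wired_one (gfst gsnd : E → V) (bdry : Finset V) (ω : E → Bool) (hq : 2 ≤ q)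
    (b : Fin q) {v₀ : V} (hv₀ : v₀ ∈ bdry) :
    (q : ℝ) * ∑ σ : V → Fin q,
        (if Compat gfst gsnd ω σ ∧ (∀ v ∈ bdry, σ v = b) then (1 : ℝ) else 0)
      = (q : ℝ) ^ numCompW gfst gsnd bdry ω := by
  have hne : Nonempty (Quotient (connWSetoid gfst gsnd bdry ω)) :=
    ⟨Quotient.mk (connWSetoid gfst gsnd bdry ω) v₀⟩
  have hcond : ∀ g : Quotient (connWSetoid gfst gsnd bdry ω) → Fin q,
      (∀ v ∈ bdry, g (Quotient.mk (connWSetoid gfst gsnd bdry ω) v) = b)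
        ↔ g (Quotient.mk (connWSetoid gfst gsnd bdry ω) v₀) = b := by
    intro g
    constructor
    · intro h; exact h v₀ hv₀
    · intro h v hv
      have hvv : Quotient.mk (connWSetoid gfst gsnd bdry ω) v
          = Quotient.mk (connWSetoid gfst gsnd bdry ω) v₀ :=
        Quotient.sound (Relation.ReflTransGen.single (Or.inr ⟨hv, hv₀⟩))
      rw [hvv, h]
  have hmain : (∑ σ : V → Fin q,
        if Compat gfst gsnd ω σ ∧ (∀ v ∈ bdry, σ v = b) then (1 : ℝ) else 0)
      = ∑ g' : { j : Quotient (connWSetoid gfst gsnd bdry ω) //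
            j ≠ Quotient.mk (connWSetoid gfst gsnd bdry ω) v₀ } → Fin q, (1 : ℝ) :=
    calc (∑ σ : V → Fin q,
          if Compat gfst gsnd ω σ ∧ (∀ v ∈ bdry, σ v = b) then (1 : ℝ) else 0)
        = ∑ σ : V → Fin q,
            if ∀ x y : V, (connWSetoid gfst gsnd bdry ω).r x y → σ x = σ y then
              (if ∀ v ∈ bdry, σ v = b then (1 : ℝ) else 0) else 0 :=
          Finset.sum_congr rfl fun σ _ => by
            have hiff : (Compat gfst gsnd ω σ ∧ ∀ v ∈ bdry, σ v = b)
                ↔ ((∀ x y : V, (connWSetoid gfst gsnd bdry ω).r x y → σ x = σ y)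
                    ∧ ∀ v ∈ bdry, σ v = b) := compatW_iff gfst gsnd bdry ω σ b
            by_cases h1 : ∀ x y : V, (connWSetoid gfst gsnd bdry ω).r x y → σ x = σ y
            · by_cases h2 : ∀ v ∈ bdry, σ v = b
              · rw [if_pos (hiff.mpr ⟨h1, h2⟩), if_pos h1, if_pos h2]
              · rw [if_neg (fun hc => h2 (hiff.mp hc).2), if_pos h1, if_neg h2]
            · rw [if_neg (fun hc => h1 (hiff.mp hc).1), if_neg h1]
      _ = ∑ g : Quotient (connWSetoid gfst gsnd bdry ω) → Fin q,
            (if ∀ v ∈ bdry, g (Quotient.mk (connWSetoid gfst gsnd bdry ω) v) = b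
              then (1 : ℝ) else 0) :=
          sum_ite_rel (connWSetoid gfst gsnd bdry ω)
            (fun σ => if ∀ v ∈ bdry, σ v = b then (1 : ℝ) else 0)
      _ = ∑ g : Quotient (connWSetoid gfst gsnd bdry ω) → Fin q,
            (if g (Quotient.mk (connWSetoid gfst gsnd bdry ω) v₀) = b then (1 : ℝ) else 0) :=
          Finset.sum_congr rfl fun g _ => if_congr (hcond g) rfl rfl
      _ = _ := sum_pin (Quotient.mk (connWSetoid gfst gsnd bdry ω) v₀) b (fun _ => (1 : ℝ))
  rw [hmain, Finset.sum_const, Finset.card_univ, nsmul_eq_mul, mul_one, numCompW_eq]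
  exact card_aux hq (Quotient.mk (connWSetoid gfst gsnd bdry ω) v₀)

lemma count_wired_dot (gfst gsnd : E → V) (bdry : Finset V) (ω : E → Bool) (hq : 2 ≤ q)
    (b : Fin q) (x : V) {v₀ : V} (hv₀ : v₀ ∈ bdry) :
    (q : ℝ) * ∑ σ : V → Fin q,
        (if Compat gfst gsnd ω σ ∧ (∀ v ∈ bdry, σ v = b) then dotq q (σ x) b else 0)
      = if ∃ y ∈ bdry, conn gfst gsnd ω x y
          then (q : ℝ) ^ numCompW gfst gsnd bdry ω else 0 := by
  have hne : Nonempty (Quotient (connWSetoid gfst gsnd bdry ω)) :=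
    ⟨Quotient.mk (connWSetoid gfst gsnd bdry ω) v₀⟩
  have hcond : ∀ g : Quotient (connWSetoid gfst gsnd bdry ω) → Fin q,
      (∀ v ∈ bdry, g (Quotient.mk (connWSetoid gfst gsnd bdry ω) v) = b)
        ↔ g (Quotient.mk (connWSetoid gfst gsnd bdry ω) v₀) = b := by
    intro g
    constructor
    · intro h; exact h v₀ hv₀
    · intro h v hv
      have hvv : Quotient.mk (connWSetoid gfst gsnd bdry ω) v
          = Quotient.mk (connWSetoid gfst gsnd bdry ω) v₀ :=
        Quotient.sound (Relation.ReflTransGen.single (Or.inr ⟨hv, hv₀⟩))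
      rw [hvv, h]
  have hmain : (∑ σ : V → Fin q,
        if Compat gfst gsnd ω σ ∧ (∀ v ∈ bdry, σ v = b) then dotq q (σ x) b else 0)
      = ∑ g' : { j : Quotient (connWSetoid gfst gsnd bdry ω) //
            j ≠ Quotient.mk (connWSetoid gfst gsnd bdry ω) v₀ } → Fin q,
          dotq q ((Equiv.funSplitAt (Quotient.mk (connWSetoid gfst gsnd bdry ω) v₀)
              (Fin q)).symm (b, g') (Quotient.mk (connWSetoid gfst gsnd bdry ω) x)) b :=
    calc (∑ σ : V → Fin q,
          if Compat gfst gsnd ω σ ∧ (∀ v ∈ bdry, σ v = b) then dotq q (σ x) b else 0)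
        = ∑ σ : V → Fin q,
            if ∀ x' y : V, (connWSetoid gfst gsnd bdry ω).r x' y → σ x' = σ y then
              (if ∀ v ∈ bdry, σ v = b then dotq q (σ x) b else 0) else 0 :=
          Finset.sum_congr rfl fun σ _ => by
            have hiff : (Compat gfst gsnd ω σ ∧ ∀ v ∈ bdry, σ v = b)
                ↔ ((∀ x y : V, (connWSetoid gfst gsnd bdry ω).r x y → σ x = σ y)
                    ∧ ∀ v ∈ bdry, σ v = b) := compatW_iff gfst gsnd bdry ω σ b
            by_cases h1 : ∀ x y : V, (connWSetoid gfst gsnd bdry ω).r x y → σ x = σ y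
            · by_cases h2 : ∀ v ∈ bdry, σ v = b
              · rw [if_pos (hiff.mpr ⟨h1, h2⟩), if_pos h1, if_pos h2]
              · rw [if_neg (fun hc => h2 (hiff.mp hc).2), if_pos h1, if_neg h2]
            · rw [if_neg (fun hc => h1 (hiff.mp hc).1), if_neg h1]
      _ = ∑ g : Quotient (connWSetoid gfst gsnd bdry ω) → Fin q,
            (if ∀ v ∈ bdry, g (Quotient.mk (connWSetoid gfst gsnd bdry ω) v) = b
              then dotq q (g (Quotient.mk (connWSetoid gfst gsnd bdry ω) x)) b else 0) :=
          sum_ite_rel (connWSetoid gfst gsnd bdry ω)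
            (fun σ => if ∀ v ∈ bdry, σ v = b then dotq q (σ x) b else 0)
      _ = ∑ g : Quotient (connWSetoid gfst gsnd bdry ω) → Fin q,
            (if g (Quotient.mk (connWSetoid gfst gsnd bdry ω) v₀) = b
              then dotq q (g (Quotient.mk (connWSetoid gfst gsnd bdry ω) x)) b else 0) :=
          Finset.sum_congr rfl fun g _ => if_congr (hcond g) rfl rfl
      _ = _ := sum_pin (Quotient.mk (connWSetoid gfst gsnd bdry ω) v₀) b
            (fun g => dotq q (g (Quotient.mk (connWSetoid gfst gsnd bdry ω) x)) b)
  rw [hmain]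
  by_cases hA : ∃ y ∈ bdry, conn gfst gsnd ω x y
  · rw [if_pos hA]
    obtain ⟨y, hy, hcxy⟩ := hA
    have hx : Quotient.mk (connWSetoid gfst gsnd bdry ω) x
        = Quotient.mk (connWSetoid gfst gsnd bdry ω) v₀ := by
      refine Quotient.sound ?_
      exact Relation.ReflTransGen.trans (conn_connW gfst gsnd bdry ω hcxy)
        (Relation.ReflTransGen.single (Or.inr ⟨hy, hv₀⟩))
    have hterm : ∀ g' : { j : Quotient (connWSetoid gfst gsnd bdry ω) //
          j ≠ Quotient.mk (connWSetoid gfst gsnd bdry ω) v₀ } → Fin q,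
        dotq q ((Equiv.funSplitAt (Quotient.mk (connWSetoid gfst gsnd bdry ω) v₀)
            (Fin q)).symm (b, g') (Quotient.mk (connWSetoid gfst gsnd bdry ω) x)) b = 1 := by
      intro g'
      rw [hx, funSplit_symm_same, dotq_self]
    rw [Finset.sum_congr rfl fun g' _ => hterm g', Finset.sum_const, Finset.card_univ,
      nsmul_eq_mul, mul_one, numCompW_eq]
    exact card_aux hq (Quotient.mk (connWSetoid gfst gsnd bdry ω) v₀)
  · rw [if_neg hA]
    have hx : Quotient.mk (connWSetoid gfst gsnd bdry ω) x
        ≠ Quotient.mk (connWSetoid gfst gsnd bdry ω) v₀ := by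
      intro hEq
      have hcw : connW gfst gsnd bdry ω x v₀ := Quotient.exact hEq
      rcases connW_decomp gfst gsnd bdry ω hcw with h | ⟨z, hz, hc⟩
      · exact hA ⟨v₀, hv₀, h⟩
      · exact hA ⟨z, hz, hc⟩
    have hterm : ∀ g' : { j : Quotient (connWSetoid gfst gsnd bdry ω) //
          j ≠ Quotient.mk (connWSetoid gfst gsnd bdry ω) v₀ } → Fin q,
        dotq q ((Equiv.funSplitAt (Quotient.mk (connWSetoid gfst gsnd bdry ω) v₀)
            (Fin q)).symm (b, g') (Quotient.mk (connWSetoid gfst gsnd bdry ω) x)) b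
        = dotq q (g' ⟨Quotient.mk (connWSetoid gfst gsnd bdry ω) x, hx⟩) b := by
      intro g'
      rw [funSplit_symm_ne _ _ _ _ hx]
    rw [Finset.sum_congr rfl fun g' _ => hterm g',
      sum_eval_dotq hq (⟨Quotient.mk (connWSetoid gfst gsnd bdry ω) x, hx⟩ :
        { j : Quotient (connWSetoid gfst gsnd bdry ω) //
          j ≠ Quotient.mk (connWSetoid gfst gsnd bdry ω) v₀ }) b,
      mul_zero]

lemma count_dot_const (gfst gsnd : E → V) (ω : E → Bool) (hq : 2 ≤ q) (x : V) (b : Fin q) :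
    (∑ σ : V → Fin q, if Compat gfst gsnd ω σ then dotq q (σ x) b else 0) = 0 := by
  have hmain : (∑ σ : V → Fin q, if Compat gfst gsnd ω σ then dotq q (σ x) b else 0)
      = ∑ g : Quotient (connSetoid gfst gsnd ω) → Fin q,
          dotq q (g (Quotient.mk (connSetoid gfst gsnd ω) x)) b :=
    calc (∑ σ : V → Fin q, if Compat gfst gsnd ω σ then dotq q (σ x) b else 0)
        = ∑ σ : V → Fin q,
            if ∀ x' y : V, (connSetoid gfst gsnd ω).r x' y → σ x' = σ y
              then dotq q (σ x) b else 0 :=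
          Finset.sum_congr rfl fun σ _ => if_congr (compat_iff gfst gsnd ω σ) rfl rfl
      _ = _ := sum_ite_rel (connSetoid gfst gsnd ω) (fun σ => dotq q (σ x) b)
  rw [hmain]
  exact sum_eval_dotq hq (Quotient.mk (connSetoid gfst gsnd ω) x) b

end ESAux3

/-- Edwards–Sokal correlation identities: (i) the free-boundary Potts two-point function
equals the free random-cluster connection probability, and (ii) the magnetization with
monochromatic boundary conditions equals the wired random-cluster probability of being
connected to the boundary, where `β = -((q-1)/q) log(1-p)`. -/
theorem edwards_sokal (gfst gsnd : E → V) (bdry : Finset V) (q : ℕ) (hq : 2 ≤ q)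
    (p β : ℝ) (hp : p ∈ Set.Ioo (0 : ℝ) 1)
    (hβ : β = -(((q : ℝ) - 1) / (q : ℝ)) * Real.log (1 - p)) :
    (∀ x y : V,
      (∑ σ : V → Fin q, dotq q (σ x) (σ y) * pottsBoltz gfst gsnd q β σ) /
          (∑ σ : V → Fin q, pottsBoltz gfst gsnd q β σ)
        = (∑ ω : E → Bool, if conn gfst gsnd ω x y then rcW0 gfst gsnd p q ω else 0) /
            (∑ ω : E → Bool, rcW0 gfst gsnd p q ω)) ∧
    (∀ b : Fin q, ∀ x : V,
      (∑ σ : V → Fin q,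
          if ∀ v ∈ bdry, σ v = b then dotq q (σ x) b * pottsBoltz gfst gsnd q β σ else 0) /
          (∑ σ : V → Fin q,
            if ∀ v ∈ bdry, σ v = b then pottsBoltz gfst gsnd q β σ else 0)
        = (∑ ω : E → Bool,
            if ∃ y ∈ bdry, conn gfst gsnd ω x y then rcW1 gfst gsnd bdry p q ω else 0) /
            (∑ ω : E → Bool, rcW1 gfst gsnd bdry p q ω)) := by
  have hC : Real.exp β ^ Fintype.card E ≠ 0 := pow_ne_zero _ (Real.exp_ne_zero β)
  constructor
  · intro x y
    have hnum : (∑ σ : V → Fin q, dotq q (σ x) (σ y) * pottsBoltz gfst gsnd q β σ)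
        = Real.exp β ^ Fintype.card E *
            ∑ ω : E → Bool, (if conn gfst gsnd ω x y then rcW0 gfst gsnd p q ω else 0) := by
      rw [potts_master gfst gsnd hq hp hβ (fun σ => dotq q (σ x) (σ y))]
      congr 1
      refine Finset.sum_congr rfl fun ω _ => ?_
      rw [count_dot gfst gsnd ω hq x y]
      by_cases h : conn gfst gsnd ω x y
      · rw [if_pos h, if_pos h]; rfl
      · rw [if_neg h, if_neg h, mul_zero]
    have hden : (∑ σ : V → Fin q, pottsBoltz gfst gsnd q β σ)
        = Real.exp β ^ Fintype.card E * ∑ ω : E → Bool, rcW0 gfst gsnd p q ω := by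
      have h1 := potts_master gfst gsnd hq hp hβ (fun _ : V → Fin q => (1 : ℝ))
      simp only [one_mul] at h1
      rw [h1]
      congr 1
      refine Finset.sum_congr rfl fun ω _ => ?_
      rw [count_one gfst gsnd ω]
      rfl
    rw [hnum, hden, mul_div_mul_left _ _ hC]
  · intro b x
    by_cases hbd : bdry.Nonempty
    · obtain ⟨v₀, hv₀⟩ := hbd
      have hq0 : ((q : ℝ)) ≠ 0 := by
        have h0 : (0 : ℕ) < q := by omega
        exact_mod_cast h0.ne'
      have hnum : (q : ℝ) * ∑ σ : V → Fin q,
            (if ∀ v ∈ bdry, σ v = b then dotq q (σ x) b * pottsBoltz gfst gsnd q β σ else 0)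
          = Real.exp β ^ Fintype.card E *
              ∑ ω : E → Bool, (if ∃ y ∈ bdry, conn gfst gsnd ω x y
                then rcW1 gfst gsnd bdry p q ω else 0) := by
        have h1 : ∀ σ : V → Fin q,
            (if ∀ v ∈ bdry, σ v = b then dotq q (σ x) b * pottsBoltz gfst gsnd q β σ else 0)
            = (if ∀ v ∈ bdry, σ v = b then dotq q (σ x) b else 0)
                * pottsBoltz gfst gsnd q β σ := by
          intro σ
          by_cases h : ∀ v ∈ bdry, σ v = b
          · rw [if_pos h, if_pos h]
          · rw [if_neg h, if_neg h, zero_mul]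
        rw [Finset.sum_congr rfl fun σ _ => h1 σ,
          potts_master gfst gsnd hq hp hβ
            (fun σ => if ∀ v ∈ bdry, σ v = b then dotq q (σ x) b else 0),
          mul_left_comm]
        congr 1
        rw [Finset.mul_sum]
        refine Finset.sum_congr rfl fun ω _ => ?_
        have h2 : (∑ σ : V → Fin q, if Compat gfst gsnd ω σ then
              (if ∀ v ∈ bdry, σ v = b then dotq q (σ x) b else 0) else 0)
            = ∑ σ : V → Fin q, (if Compat gfst gsnd ω σ ∧ (∀ v ∈ bdry, σ v = b)
                then dotq q (σ x) b else 0) := by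
          refine Finset.sum_congr rfl fun σ _ => ?_
          by_cases h3 : Compat gfst gsnd ω σ
          · by_cases h4 : ∀ v ∈ bdry, σ v = b
            · rw [if_pos h3, if_pos h4, if_pos ⟨h3, h4⟩]
            · rw [if_pos h3, if_neg h4, if_neg (fun hc => h4 hc.2)]
          · rw [if_neg h3, if_neg (fun hc => h3 hc.1)]
        rw [mul_left_comm, h2, count_wired_dot gfst gsnd bdry ω hq b x hv₀]
        by_cases h : ∃ y ∈ bdry, conn gfst gsnd ω x y
        · rw [if_pos h, if_pos h]; rfl
        · rw [if_neg h, if_neg h, mul_zero]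
      have hden : (q : ℝ) * ∑ σ : V → Fin q,
            (if ∀ v ∈ bdry, σ v = b then pottsBoltz gfst gsnd q β σ else 0)
          = Real.exp β ^ Fintype.card E *
              ∑ ω : E → Bool, rcW1 gfst gsnd bdry p q ω := by
        have h1 : ∀ σ : V → Fin q,
            (if ∀ v ∈ bdry, σ v = b then pottsBoltz gfst gsnd q β σ else 0)
            = (if ∀ v ∈ bdry, σ v = b then (1 : ℝ) else 0)
                * pottsBoltz gfst gsnd q β σ := by
          intro σ
          by_cases h : ∀ v ∈ bdry, σ v = b
          · rw [if_pos h, if_pos h, one_mul]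
          · rw [if_neg h, if_neg h, zero_mul]
        rw [Finset.sum_congr rfl fun σ _ => h1 σ,
          potts_master gfst gsnd hq hp hβ
            (fun σ => if ∀ v ∈ bdry, σ v = b then (1 : ℝ) else 0),
          mul_left_comm]
        congr 1
        rw [Finset.mul_sum]
        refine Finset.sum_congr rfl fun ω _ => ?_
        have h2 : (∑ σ : V → Fin q, if Compat gfst gsnd ω σ then
              (if ∀ v ∈ bdry, σ v = b then (1 : ℝ) else 0) else 0)
            = ∑ σ : V → Fin q, (if Compat gfst gsnd ω σ ∧ (∀ v ∈ bdry, σ v = b)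
                then (1 : ℝ) else 0) := by
          refine Finset.sum_congr rfl fun σ _ => ?_
          by_cases h3 : Compat gfst gsnd ω σ
          · by_cases h4 : ∀ v ∈ bdry, σ v = b
            · rw [if_pos h3, if_pos h4, if_pos ⟨h3, h4⟩]
            · rw [if_pos h3, if_neg h4, if_neg (fun hc => h4 hc.2)]
          · rw [if_neg h3, if_neg (fun hc => h3 hc.1)]
        rw [mul_left_comm, h2, count_wired_one gfst gsnd bdry ω hq b hv₀]
        rfl
      rw [← mul_div_mul_left _ _ hq0, hnum, hden, mul_div_mul_left _ _ hC]
    · have hbde : bdry = ∅ := Finset.not_nonempty_iff_eq_empty.mp hbd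
      subst hbde
      have htrue : ∀ σ : V → Fin q, ∀ v ∈ (∅ : Finset V), σ v = b := by simp
      have hnum0 : (∑ σ : V → Fin q,
          if ∀ v ∈ (∅ : Finset V), σ v = b
            then dotq q (σ x) b * pottsBoltz gfst gsnd q β σ else 0) = 0 := by
        rw [Finset.sum_congr rfl fun σ _ => if_pos (htrue σ),
          potts_master gfst gsnd hq hp hβ (fun σ => dotq q (σ x) b)]
        have h1 : ∀ ω : E → Bool,
            (p ^ openCount ω * (1 - p) ^ closedCount ω *
              ∑ σ : V → Fin q, if Compat gfst gsnd ω σ then dotq q (σ x) b else 0) = 0 := by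
          intro ω
          rw [count_dot_const gfst gsnd ω hq x b, mul_zero]
        rw [Finset.sum_congr rfl fun ω _ => h1 ω, Finset.sum_const, smul_zero, mul_zero]
      rw [hnum0, zero_div]
      have hrhs : (∑ ω : E → Bool,
          if ∃ y ∈ (∅ : Finset V), conn gfst gsnd ω x y
            then rcW1 gfst gsnd ∅ p q ω else 0) = 0 := by
        refine Finset.sum_eq_zero fun ω _ => ?_
        rw [if_neg]
        rintro ⟨y, hy, -⟩
        exact absurd hy (Finset.notMem_empty y)
      rw [hrhs, zero_div]

end Stmt3
end

section
/- Second Griffiths inequality. Let G=(V,E) be a finite graph and β ≥ 0. For all A, B ⊆ V, the Ising model with free boundary conditions satisfies μ_{G,β}[σ_A σ_B] ≥ μ_{G,β}[σ_A] · μ_{G,β}[σ_B]. -/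
open scoped BigOperators Classical

namespace Stmt5

variable {V E : Type} [Fintype V] [DecidableEq V] [Fintype E]

/-- The real value of a Boolean spin: `true ↦ +1`, `false ↦ -1`. -/
noncomputable def sgn (b : Bool) : ℝ := if b then 1 else -1

/-- `σ_A = ∏_{x ∈ A} σ_x`. -/
noncomputable def corr (A : Finset V) (σ : V → Bool) : ℝ := ∏ x ∈ A, sgn (σ x)

/-- Boltzmann weight `exp(-β H_G(σ)) = exp(β ∑_{xy∈E} σ_x σ_y)`. -/
noncomputable def boltz (gfst gsnd : E → V) (β : ℝ) (σ : V → Bool) : ℝ :=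
  Real.exp (β * ∑ e : E, sgn (σ (gfst e)) * sgn (σ (gsnd e)))

set_option linter.unusedSectionVars false

lemma sgn_beq (a b : Bool) : sgn (a == b) = sgn a * sgn b := by
  cases a <;> cases b <;> simp [sgn]

lemma abs_sgn (b : Bool) : |sgn b| = 1 := by cases b <;> simp [sgn]

lemma corr_le_one (A : Finset V) (σ : V → Bool) : corr A σ ≤ 1 := by
  have h : |corr A σ| = 1 := by
    rw [corr, Finset.abs_prod]
    simp [abs_sgn]
  calc corr A σ ≤ |corr A σ| := le_abs_self _
    _ = 1 := h

lemma corr_beq (A : Finset V) (σ τ : V → Bool) :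
    corr A (fun x => σ x == τ x) = corr A σ * corr A τ := by
  simp [corr, sgn_beq, Finset.prod_mul_distrib]

lemma one_add_sgn_mul_nonneg (a b : Bool) : 0 ≤ 1 + sgn a * sgn b := by
  cases a <;> cases b <;> norm_num [sgn]

/-- Sum over all spin configurations of a product of spins is nonnegative. -/
lemma sum_prod_sgn_nonneg {ι : Type} (s : Finset ι) (v : ι → V) :
    0 ≤ ∑ σ : V → Bool, ∏ i ∈ s, sgn (σ (v i)) := by
  classical
  have h1 : ∀ σ : V → Bool, ∏ i ∈ s, sgn (σ (v i)) =
      ∏ x : V, sgn (σ x) ^ (s.filter (fun i => v i = x)).card := by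
    intro σ
    rw [← Finset.prod_fiberwise_of_maps_to (fun i _ => Finset.mem_univ (v i))
      (fun i => sgn (σ (v i)))]
    refine Finset.prod_congr rfl (fun x _ => ?_)
    rw [← Finset.prod_const]
    exact Finset.prod_congr rfl (fun i hi => by
      rw [(Finset.mem_filter.mp hi).2])
  simp only [h1]
  rw [show (∑ σ : V → Bool, ∏ x : V, sgn (σ x) ^ (s.filter (fun i => v i = x)).card)
      = ∏ x : V, ∑ b : Bool, sgn b ^ (s.filter (fun i => v i = x)).card from
    (Fintype.prod_sum (fun x b => sgn b ^ (s.filter (fun i => v i = x)).card)).symm]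
  refine Finset.prod_nonneg (fun x _ => ?_)
  rw [Fintype.sum_bool]
  simp only [sgn]
  rcases Nat.even_or_odd (s.filter (fun i => v i = x)).card with h | h
  · simp [h.neg_one_pow]
  · simp [h.neg_one_pow]

lemma exp_mul_sgn (K : ℝ) (a b : Bool) :
    Real.exp (K * (sgn a * sgn b)) = Real.sinh K * (sgn a * sgn b) + Real.cosh K := by
  cases a <;> cases b <;> simp only [sgn, if_true, if_false] <;> norm_num <;>
    linarith [Real.sinh_add_cosh K, Real.cosh_sub_sinh K, Real.exp_neg K]

/-- First Griffiths-type nonnegativity for ferromagnetic couplings. -/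
lemma key_nonneg (gfst gsnd : E → V) (K : E → ℝ) (hK : ∀ e, 0 ≤ K e) (A B : Finset V) :
    0 ≤ ∑ σ : V → Bool, corr A σ * corr B σ *
      Real.exp (∑ e : E, K e * (sgn (σ (gfst e)) * sgn (σ (gsnd e)))) := by
  classical
  have hexp : ∀ σ : V → Bool,
      Real.exp (∑ e : E, K e * (sgn (σ (gfst e)) * sgn (σ (gsnd e)))) =
      ∑ F : Finset E, ((∏ e ∈ F, Real.sinh (K e)) * ∏ e ∈ Fᶜ, Real.cosh (K e)) *
        ∏ e ∈ F, sgn (σ (gfst e)) * sgn (σ (gsnd e)) := by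
    intro σ
    rw [Real.exp_sum]
    rw [show (∏ e : E, Real.exp (K e * (sgn (σ (gfst e)) * sgn (σ (gsnd e)))))
        = ∏ e : E, (Real.sinh (K e) * (sgn (σ (gfst e)) * sgn (σ (gsnd e))) + Real.cosh (K e))
      from Finset.prod_congr rfl fun e _ => exp_mul_sgn _ _ _]
    rw [Fintype.prod_add]
    refine Finset.sum_congr rfl fun F _ => ?_
    rw [Finset.prod_mul_distrib]
    ring
  simp only [hexp]
  simp_rw [Finset.mul_sum]
  rw [Finset.sum_comm]
  refine Finset.sum_nonneg fun F _ => ?_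
  have h2 : ∑ σ : V → Bool, corr A σ * corr B σ *
        (((∏ e ∈ F, Real.sinh (K e)) * ∏ e ∈ Fᶜ, Real.cosh (K e)) *
          ∏ e ∈ F, sgn (σ (gfst e)) * sgn (σ (gsnd e)))
      = ((∏ e ∈ F, Real.sinh (K e)) * ∏ e ∈ Fᶜ, Real.cosh (K e)) *
        ∑ σ : V → Bool, corr A σ * corr B σ * ∏ e ∈ F, sgn (σ (gfst e)) * sgn (σ (gsnd e)) := by
    rw [Finset.mul_sum]
    exact Finset.sum_congr rfl fun σ _ => by ring
  rw [h2]
  refine mul_nonneg (mul_nonneg (Finset.prod_nonneg fun e _ => Real.sinh_nonneg_iff.mpr (hK e))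
    (Finset.prod_nonneg fun e _ => (Real.cosh_pos _).le)) ?_
  have h3 : ∀ σ : V → Bool,
      corr A σ * corr B σ * ∏ e ∈ F, sgn (σ (gfst e)) * sgn (σ (gsnd e))
      = ∏ i ∈ (A.disjSum B).disjSum (F.disjSum F),
          sgn (σ (Sum.elim (Sum.elim id id) (Sum.elim gfst gsnd) i)) := by
    intro σ
    rw [Finset.prod_disjSum, Finset.prod_disjSum, Finset.prod_disjSum]
    simp [corr, Finset.prod_mul_distrib]
  simp only [h3]
  exact sum_prod_sgn_nonneg _ _

/-- Second Griffiths inequality: `μ_{G,β}[σ_A σ_B] ≥ μ_{G,β}[σ_A] μ_{G,β}[σ_B]`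
for the Ising model with free boundary conditions. -/
theorem griffiths_second (gfst gsnd : E → V) (β : ℝ) (hβ : 0 ≤ β) (A B : Finset V) :
    ((∑ σ : V → Bool, corr A σ * boltz gfst gsnd β σ) /
        (∑ σ : V → Bool, boltz gfst gsnd β σ)) *
      ((∑ σ : V → Bool, corr B σ * boltz gfst gsnd β σ) /
        (∑ σ : V → Bool, boltz gfst gsnd β σ))
      ≤ (∑ σ : V → Bool, corr A σ * corr B σ * boltz gfst gsnd β σ) /
          (∑ σ : V → Bool, boltz gfst gsnd β σ) := by
  classical
  set SA := ∑ σ : V → Bool, corr A σ * boltz gfst gsnd β σ with hSA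
  set SB := ∑ σ : V → Bool, corr B σ * boltz gfst gsnd β σ with hSB
  set SAB := ∑ σ : V → Bool, corr A σ * corr B σ * boltz gfst gsnd β σ with hSAB
  set Z := ∑ σ : V → Bool, boltz gfst gsnd β σ with hZdef
  have hZ : 0 < Z := Finset.sum_pos (fun σ _ => Real.exp_pos _) Finset.univ_nonempty
  have key : SA * SB ≤ SAB * Z := by
    rw [← sub_nonneg]
    have h1 : SAB * Z - SA * SB = ∑ σ : V → Bool, ∑ τ : V → Bool,
        (corr A σ * corr B σ * boltz gfst gsnd β σ * boltz gfst gsnd β τ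
          - corr A σ * boltz gfst gsnd β σ * (corr B τ * boltz gfst gsnd β τ)) := by
      rw [hSAB, hZdef, hSA, hSB, Finset.sum_mul_sum, Finset.sum_mul_sum,
        ← Finset.sum_sub_distrib]
      refine Finset.sum_congr rfl fun σ _ => ?_
      rw [← Finset.sum_sub_distrib]
    rw [h1]
    have h2 : ∀ σ : V → Bool, ∑ τ : V → Bool,
        (corr A σ * corr B σ * boltz gfst gsnd β σ * boltz gfst gsnd β τ
          - corr A σ * boltz gfst gsnd β σ * (corr B τ * boltz gfst gsnd β τ))
        = ∑ τ : V → Bool, (1 - corr B τ) * (corr A σ * corr B σ *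
            Real.exp (∑ e : E, (β * (1 + sgn (τ (gfst e)) * sgn (τ (gsnd e)))) *
              (sgn (σ (gfst e)) * sgn (σ (gsnd e))))) := by
      intro σ
      have hinv : Function.Involutive (fun (τ : V → Bool) => fun x => σ x == τ x) := by
        intro τ; funext x
        show (σ x == (σ x == τ x)) = τ x
        cases σ x <;> cases τ x <;> rfl
      rw [← Equiv.sum_comp hinv.toPerm (fun τ : V → Bool =>
        (corr A σ * corr B σ * boltz gfst gsnd β σ * boltz gfst gsnd β τ
          - corr A σ * boltz gfst gsnd β σ * (corr B τ * boltz gfst gsnd β τ)))]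
      refine Finset.sum_congr rfl fun τ _ => ?_
      have hb : boltz gfst gsnd β σ * boltz gfst gsnd β (fun x => σ x == τ x)
          = Real.exp (∑ e : E, (β * (1 + sgn (τ (gfst e)) * sgn (τ (gsnd e)))) *
              (sgn (σ (gfst e)) * sgn (σ (gsnd e)))) := by
        rw [boltz, boltz, ← Real.exp_add]
        congr 1
        rw [Finset.mul_sum, Finset.mul_sum, ← Finset.sum_add_distrib]
        refine Finset.sum_congr rfl fun e _ => ?_
        simp only [sgn_beq]
        ring
      show corr A σ * corr B σ * boltz gfst gsnd β σ * boltz gfst gsnd β (fun x => σ x == τ x)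
          - corr A σ * boltz gfst gsnd β σ *
            (corr B (fun x => σ x == τ x) * boltz gfst gsnd β (fun x => σ x == τ x)) = _
      rw [corr_beq]
      calc corr A σ * corr B σ * boltz gfst gsnd β σ * boltz gfst gsnd β (fun x => σ x == τ x)
            - corr A σ * boltz gfst gsnd β σ *
              (corr B σ * corr B τ * boltz gfst gsnd β (fun x => σ x == τ x))
          = (1 - corr B τ) * (corr A σ * corr B σ *
              (boltz gfst gsnd β σ * boltz gfst gsnd β (fun x => σ x == τ x))) := by ring
        _ = _ := by rw [hb]
    simp only [h2]
    rw [Finset.sum_comm]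
    refine Finset.sum_nonneg fun τ _ => ?_
    rw [← Finset.mul_sum]
    refine mul_nonneg (by linarith [corr_le_one B τ]) ?_
    exact key_nonneg gfst gsnd _ (fun e => mul_nonneg hβ (one_add_sgn_mul_nonneg _ _)) A B
  calc SA / Z * (SB / Z) = SA * SB / (Z * Z) := by ring
    _ ≤ SAB * Z / (Z * Z) := by
        exact (div_le_div_iff_of_pos_right (by positivity)).mpr key
    _ = SAB / Z := mul_div_mul_right _ _ hZ.ne'

end Stmt5
end

section
/- Monotone-coupling criterion for stochastic domination (Holley-type lemma). Let E be a finite set and let μ, ν be strictly positive probability measures on {0,1}^E such that for every e ∈ E and all ψ, ψ' ∈ {0,1}^{E∖{e}} with ψ ≤ ψ' coordinatewise, one has μ[ω_e = 1 | ω|_{E∖{e}} = ψ] ≤ ν[ω_e = 1 | ω|_{E∖{e}} = ψ']. Then there exists a probability measure P on {0,1}^E × {0,1}^E whose first marginal is μ, whose second marginal is ν, and such that P[{(ω, ω̃) : ω ≤ ω̃ coordinatewise}] = 1. In particular, μ[A] ≤ ν[A] for every increasing event A. -/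
open scoped BigOperators Classical

namespace Stmt6

variable {E : Type} [Fintype E] [DecidableEq E]

lemma sum_split (e : E) (f : (E → Bool) → ℝ) :
    ∑ ω : E → Bool, (f (Function.update ω e false) + f (Function.update ω e true))
      = 2 * ∑ ω : E → Bool, f ω := by
  have hinv : Function.Involutive (fun ω : E → Bool => Function.update ω e (!ω e)) := by
    intro ω
    simp only [Function.update_self, Function.update_idem, Bool.not_not]
    exact Function.update_eq_self e ω
  have key : ∀ ω : E → Bool,
      f (Function.update ω e false) + f (Function.update ω e true)
        = f ω + f (Function.update ω e (!ω e)) := by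
    intro ω
    cases h : ω e
    · have h1 : Function.update ω e false = ω := by
        conv_lhs => rw [← h]
        exact Function.update_eq_self e ω
      rw [h1]; simp
    · have h1 : Function.update ω e true = ω := by
        conv_lhs => rw [← h]
        exact Function.update_eq_self e ω
      rw [h1]; simp [add_comm]
  rw [Finset.sum_congr rfl fun ω _ => key ω, Finset.sum_add_distrib]
  have : ∑ ω : E → Bool, f (Function.update ω e (!ω e)) = ∑ ω : E → Bool, f ω :=
    Fintype.sum_bijective _ hinv.bijective _ _ (fun ω => rfl)
  rw [this]; ring

lemma sum_split' (e : E) (f : (E → Bool) → ℝ) :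
    ∑ ω : E → Bool, ∑ d : Bool, f (Function.update ω e d)
      = 2 * ∑ ω : E → Bool, f ω := by
  rw [← sum_split e f]
  exact Finset.sum_congr rfl fun ω _ => by rw [Fintype.sum_bool]; ring

/-- the monotone coupling of two Bernoulli distributions -/
def coup (p q : ℝ) : Bool → Bool → ℝ
  | true, true => min p q
  | true, false => p - min p q
  | false, true => q - min p q
  | false, false => 1 - p - q + min p q

lemma coup_nonneg {p q : ℝ} (hp0 : 0 ≤ p) (hp1 : p ≤ 1) (hq0 : 0 ≤ q) (hq1 : q ≤ 1)
    (b c : Bool) : 0 ≤ coup p q b c := by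
  rcases b <;> rcases c <;> simp only [coup]
  · rcases le_total p q with h | h
    · rw [min_eq_left h]; linarith
    · rw [min_eq_right h]; linarith
  · rcases le_total p q with h | h
    · rw [min_eq_left h]; linarith
    · rw [min_eq_right h]; linarith
  · rcases le_total p q with h | h
    · rw [min_eq_left h]; linarith
    · rw [min_eq_right h]; linarith
  · exact le_min hp0 hq0

lemma coup_sum_right (p q : ℝ) (b : Bool) :
    ∑ c : Bool, coup p q b c = if b then p else 1 - p := by
  cases b <;> simp [Fintype.sum_bool, coup] <;> ring

lemma coup_sum_left (p q : ℝ) (c : Bool) :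
    ∑ b : Bool, coup p q b c = if c then q else 1 - q := by
  cases c <;> simp [Fintype.sum_bool, coup] <;> ring

lemma coup_sum_all (p q : ℝ) : ∑ b : Bool, ∑ c : Bool, coup p q b c = 1 := by
  simp only [Fintype.sum_bool, coup]
  ring

lemma coup_support {p q : ℝ} (hpq : p ≤ q) {b c : Bool} (h : coup p q b c ≠ 0) :
    b ≤ c := by
  cases b
  · cases c <;> simp
  · cases c
    · exfalso; apply h
      simp only [coup]
      rw [min_eq_left hpq]; ring
    · simp


/-- conditional probability that coordinate `e` is `true` -/
noncomputable def pr (μ : (E → Bool) → ℝ) (e : E) (ω : E → Bool) : ℝ :=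
  μ (Function.update ω e true) /
    (μ (Function.update ω e true) + μ (Function.update ω e false))

lemma pr_pos {μ : (E → Bool) → ℝ} (hμ : ∀ ω, 0 < μ ω) (e : E) (ω : E → Bool) :
    0 < pr μ e ω := by
  have h1 := hμ (Function.update ω e true)
  have h2 := hμ (Function.update ω e false)
  exact div_pos h1 (by linarith)

lemma pr_lt_one {μ : (E → Bool) → ℝ} (hμ : ∀ ω, 0 < μ ω) (e : E) (ω : E → Bool) :
    pr μ e ω < 1 := by
  have h1 := hμ (Function.update ω e true)
  have h2 := hμ (Function.update ω e false)
  rw [pr, div_lt_one (by linarith)]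
  linarith

lemma pr_update (μ : (E → Bool) → ℝ) (e : E) (ω : E → Bool) (b : Bool) :
    pr μ e (Function.update ω e b) = pr μ e ω := by
  simp [pr, Function.update_idem]

/-- one step of the coupled heat-bath (Glauber) dynamics at site `e` -/
noncomputable def T (μ ν : (E → Bool) → ℝ) (e : E) (P : (E → Bool) → (E → Bool) → ℝ) :
    (E → Bool) → (E → Bool) → ℝ :=
  fun ω τ => (∑ b : Bool, ∑ c : Bool,
      P (Function.update ω e b) (Function.update τ e c)) *
    coup (pr μ e ω) (pr ν e τ) (ω e) (τ e)

lemma T_nonneg {μ ν : (E → Bool) → ℝ} (hμ : ∀ ω, 0 < μ ω) (hν : ∀ ω, 0 < ν ω)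
    (e : E) {P : (E → Bool) → (E → Bool) → ℝ} (hP : ∀ ω τ, 0 ≤ P ω τ)
    (ω τ : E → Bool) : 0 ≤ T μ ν e P ω τ := by
  apply mul_nonneg
  · exact Finset.sum_nonneg fun b _ => Finset.sum_nonneg fun c _ => hP _ _
  · exact coup_nonneg (pr_pos hμ e ω).le (pr_lt_one hμ e ω).le
      (pr_pos hν e τ).le (pr_lt_one hν e τ).le _ _

lemma T_eval_update (μ ν : (E → Bool) → ℝ) (e : E)
    (P : (E → Bool) → (E → Bool) → ℝ) (ω τ : E → Bool) (d d' : Bool) :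
    T μ ν e P (Function.update ω e d) (Function.update τ e d')
      = (∑ b : Bool, ∑ c : Bool,
          P (Function.update ω e b) (Function.update τ e c)) *
        coup (pr μ e ω) (pr ν e τ) d d' := by
  simp [T, Function.update_idem, pr_update, Function.update_self]

lemma T_marg1 {μ ν : (E → Bool) → ℝ} (hμ : ∀ ω, 0 < μ ω) (e : E)
    {P : (E → Bool) → (E → Bool) → ℝ} (h : ∀ ω, ∑ τ : E → Bool, P ω τ = μ ω)
    (ω : E → Bool) : ∑ τ : E → Bool, T μ ν e P ω τ = μ ω := by
  have hω : Function.update ω e (ω e) = ω := Function.update_eq_self e ω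
  have key : ∀ τ : E → Bool, ∀ d : Bool, T μ ν e P ω (Function.update τ e d)
      = (∑ b : Bool, ∑ c : Bool,
          P (Function.update ω e b) (Function.update τ e c)) *
        coup (pr μ e ω) (pr ν e τ) (ω e) d := by
    intro τ d
    conv_lhs => rw [← hω]
    rw [T_eval_update]
  have h2 : 2 * ∑ τ : E → Bool, T μ ν e P ω τ
      = ∑ τ : E → Bool, (∑ b : Bool, ∑ c : Bool,
          P (Function.update ω e b) (Function.update τ e c)) *
          (if ω e then pr μ e ω else 1 - pr μ e ω) := by
    rw [← sum_split e (fun τ => T μ ν e P ω τ)]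
    refine Finset.sum_congr rfl fun τ _ => ?_
    rw [key τ false, key τ true, ← mul_add]
    congr 1
    rw [← coup_sum_right (pr μ e ω) (pr ν e τ) (ω e), Fintype.sum_bool]
    ring
  have h3 : ∑ τ : E → Bool, (∑ b : Bool, ∑ c : Bool,
        P (Function.update ω e b) (Function.update τ e c))
      = 2 * (μ (Function.update ω e true) + μ (Function.update ω e false)) := by
    rw [Finset.sum_comm]
    have : ∀ b : Bool, ∑ τ : E → Bool, ∑ c : Bool,
        P (Function.update ω e b) (Function.update τ e c)
        = 2 * μ (Function.update ω e b) := by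
      intro b
      rw [sum_split' e (fun τ => P (Function.update ω e b) τ), h]
    rw [Fintype.sum_bool, this true, this false]
    ring
  rw [← Finset.sum_mul, h3] at h2
  have hD : 0 < μ (Function.update ω e true) + μ (Function.update ω e false) := by
    have := hμ (Function.update ω e true); have := hμ (Function.update ω e false)
    linarith
  have hμω : ∑ τ : E → Bool, T μ ν e P ω τ
      = (μ (Function.update ω e true) + μ (Function.update ω e false)) *
        (if ω e then pr μ e ω else 1 - pr μ e ω) := by linarith
  rw [hμω]
  cases hb : ω e
  · simp only [hb, if_neg Bool.false_ne_true]
    rw [pr]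
    have : Function.update ω e false = ω := by rw [← hb]; exact hω
    field_simp
    rw [this]
    ring
  · simp only [hb, if_pos rfl, if_true]
    rw [pr]
    have : Function.update ω e true = ω := by rw [← hb]; exact hω
    field_simp
    rw [this]


lemma coup_symm (p q : ℝ) (b c : Bool) : coup p q b c = coup q p c b := by
  cases b <;> cases c <;> simp [coup, min_comm] <;> ring

lemma T_symm (μ ν : (E → Bool) → ℝ) (e : E) (P : (E → Bool) → (E → Bool) → ℝ)
    (ω τ : E → Bool) : T μ ν e P ω τ = T ν μ e (fun τ ω => P ω τ) τ ω := by
  simp only [T]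
  rw [Finset.sum_comm, coup_symm]

lemma T_marg2 {μ ν : (E → Bool) → ℝ} (hν : ∀ ω, 0 < ν ω) (e : E)
    {P : (E → Bool) → (E → Bool) → ℝ} (h : ∀ τ, ∑ ω : E → Bool, P ω τ = ν τ)
    (τ : E → Bool) : ∑ ω : E → Bool, T μ ν e P ω τ = ν τ := by
  have := T_marg1 (μ := ν) (ν := μ) hν e (P := fun a b => P b a) h τ
  rw [← this]
  exact Finset.sum_congr rfl fun ω _ => T_symm μ ν e P ω τ

/-- the ordered (coordinatewise ≤) pairs -/
def Sord : (E → Bool) → (E → Bool) → Prop := fun ω τ => ∀ f, ω f ≤ τ f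

def ones (A : Set E) : (E → Bool) → (E → Bool) → Prop :=
  fun ω τ => ∀ i ∈ A, ω i = true ∧ τ i = true

def good (A : Set E) : (E → Bool) → (E → Bool) → Prop :=
  fun ω τ => Sord ω τ ∨ ones A ω τ

noncomputable def mass (P : (E → Bool) → (E → Bool) → ℝ)
    (Q : (E → Bool) → (E → Bool) → Prop) : ℝ :=
  ∑ ω : E → Bool, ∑ τ : E → Bool, if Q ω τ then P ω τ else 0

lemma mass_congr (P : (E → Bool) → (E → Bool) → ℝ)
    {Q R : (E → Bool) → (E → Bool) → Prop} (h : ∀ ω τ, Q ω τ ↔ R ω τ) :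
    mass P Q = mass P R := by
  unfold mass
  exact Finset.sum_congr rfl fun ω _ => Finset.sum_congr rfl fun τ _ => by
    rw [if_congr (h ω τ) rfl rfl]

lemma mass_nonneg {P : (E → Bool) → (E → Bool) → ℝ} (hP : ∀ ω τ, 0 ≤ P ω τ)
    (Q : (E → Bool) → (E → Bool) → Prop) : 0 ≤ mass P Q := by
  refine Finset.sum_nonneg fun ω _ => Finset.sum_nonneg fun τ _ => ?_
  split
  · exact hP ω τ
  · exact le_refl 0

lemma sum_split2 (e : E) (F : (E → Bool) → (E → Bool) → ℝ) :
    ∑ ω : E → Bool, ∑ τ : E → Bool, (∑ d : Bool, ∑ d' : Bool,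
        F (Function.update ω e d) (Function.update τ e d'))
      = 4 * ∑ ω : E → Bool, ∑ τ : E → Bool, F ω τ := by
  have h1 : ∀ ω : E → Bool, ∑ τ : E → Bool, ∑ d : Bool, ∑ d' : Bool,
      F (Function.update ω e d) (Function.update τ e d')
      = ∑ d : Bool, 2 * ∑ τ : E → Bool, F (Function.update ω e d) τ := by
    intro ω
    rw [Finset.sum_comm]
    exact Finset.sum_congr rfl fun d _ => sum_split' e (F (Function.update ω e d))
  rw [Finset.sum_congr rfl fun ω _ => h1 ω]
  simp only [← Finset.mul_sum]
  rw [sum_split' e (fun σ => ∑ τ : E → Bool, F σ τ)]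
  ring

lemma mass_T_expand (μ ν : (E → Bool) → ℝ) (e : E)
    (P : (E → Bool) → (E → Bool) → ℝ) (Q : (E → Bool) → (E → Bool) → Prop) :
    4 * mass (T μ ν e P) Q
      = ∑ ω : E → Bool, ∑ τ : E → Bool,
          (∑ b : Bool, ∑ c : Bool,
            P (Function.update ω e b) (Function.update τ e c)) *
          (∑ d : Bool, ∑ d' : Bool,
            if Q (Function.update ω e d) (Function.update τ e d')
            then coup (pr μ e ω) (pr ν e τ) d d' else 0) := by
  rw [mass, ← sum_split2 e (fun ω τ => if Q ω τ then T μ ν e P ω τ else 0)]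
  refine Finset.sum_congr rfl fun ω _ => Finset.sum_congr rfl fun τ _ => ?_
  rw [Finset.mul_sum]
  refine Finset.sum_congr rfl fun d _ => ?_
  rw [Finset.mul_sum]
  refine Finset.sum_congr rfl fun d' _ => ?_
  by_cases hQ : Q (Function.update ω e d) (Function.update τ e d') <;>
    simp [hQ, T_eval_update]

lemma mass_expand (e : E) (P : (E → Bool) → (E → Bool) → ℝ)
    (Q : (E → Bool) → (E → Bool) → Prop) :
    4 * mass P Q
      = ∑ ω : E → Bool, ∑ τ : E → Bool, ∑ b : Bool, ∑ c : Bool,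
          (if Q (Function.update ω e b) (Function.update τ e c)
           then P (Function.update ω e b) (Function.update τ e c) else 0) := by
  rw [mass, ← sum_split2 e (fun ω τ => if Q ω τ then P ω τ else 0)]


lemma Sord_update {ω τ : E → Bool} {e : E} {d d' : Bool}
    (hord : ∀ f, f ≠ e → ω f ≤ τ f) (hdd : d ≤ d') :
    Sord (Function.update ω e d) (Function.update τ e d') := by
  intro f
  by_cases hf : f = e
  · subst hf; simpa [Function.update_self] using hdd
  · simpa [Function.update_of_ne hf] using hord f hf

lemma Sord_off {ω τ : E → Bool} {e : E} {b c : Bool}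
    (h : Sord (Function.update ω e b) (Function.update τ e c)) :
    ∀ f, f ≠ e → ω f ≤ τ f := by
  intro f hf
  have := h f
  simpa [Function.update_of_ne hf] using this

lemma ite_le_self {c : Prop} {x : ℝ} (hx : 0 ≤ x) : (if c then x else 0) ≤ x := by
  split
  · exact le_refl x
  · exact hx

lemma ite_coup_nonneg {p q : ℝ} (hp0 : 0 ≤ p) (hp1 : p ≤ 1) (hq0 : 0 ≤ q) (hq1 : q ≤ 1)
    (c : Prop) (b b' : Bool) : 0 ≤ (if c then coup p q b b' else 0) := by
  split
  · exact coup_nonneg hp0 hp1 hq0 hq1 b b'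
  · exact le_refl 0

section Steps

variable {μ ν : (E → Bool) → ℝ}

/-- the key consequence of `hcond` -/
def Hcond (μ ν : (E → Bool) → ℝ) : Prop :=
  ∀ e : E, ∀ ω τ : E → Bool, (∀ f, f ≠ e → ω f ≤ τ f) → pr μ e ω ≤ pr ν e τ

lemma W_eq_one (hμpos : ∀ ω, 0 < μ ω) (hνpos : ∀ ω, 0 < ν ω)
    (hc : Hcond μ ν) (e : E) {Q : (E → Bool) → (E → Bool) → Prop}
    (hQ : ∀ ω' τ', Sord ω' τ' → Q ω' τ') {ω τ : E → Bool}
    (hord : ∀ f, f ≠ e → ω f ≤ τ f) :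
    (∑ d : Bool, ∑ d' : Bool,
      if Q (Function.update ω e d) (Function.update τ e d')
      then coup (pr μ e ω) (pr ν e τ) d d' else 0) = 1 := by
  have hpq : pr μ e ω ≤ pr ν e τ := hc e ω τ hord
  have key : ∀ d d' : Bool,
      (if Q (Function.update ω e d) (Function.update τ e d')
       then coup (pr μ e ω) (pr ν e τ) d d' else 0)
      = coup (pr μ e ω) (pr ν e τ) d d' := by
    intro d d'
    by_cases hS : Q (Function.update ω e d) (Function.update τ e d')
    · rw [if_pos hS]
    · rw [if_neg hS]
      by_contra hne
      have hne' : coup (pr μ e ω) (pr ν e τ) d d' ≠ 0 := fun h => hne h.symm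
      exact hS (hQ _ _ (Sord_update hord (coup_support hpq hne')))
  calc (∑ d : Bool, ∑ d' : Bool,
      if Q (Function.update ω e d) (Function.update τ e d')
      then coup (pr μ e ω) (pr ν e τ) d d' else 0)
      = ∑ d : Bool, ∑ d' : Bool, coup (pr μ e ω) (pr ν e τ) d d' :=
        Finset.sum_congr rfl fun d _ => Finset.sum_congr rfl fun d' _ => key d d'
    _ = 1 := coup_sum_all _ _

lemma stepS (hμpos : ∀ ω, 0 < μ ω) (hνpos : ∀ ω, 0 < ν ω)
    (hc : Hcond μ ν) (e : E) {P : (E → Bool) → (E → Bool) → ℝ}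
    (hP : ∀ ω τ, 0 ≤ P ω τ) :
    mass P Sord ≤ mass (T μ ν e P) Sord := by
  have h4 : 4 * mass P Sord ≤ 4 * mass (T μ ν e P) Sord := by
    rw [mass_T_expand, mass_expand e]
    refine Finset.sum_le_sum fun ω _ => Finset.sum_le_sum fun τ _ => ?_
    by_cases hord : ∀ f, f ≠ e → ω f ≤ τ f
    · rw [W_eq_one hμpos hνpos hc e (fun _ _ h => h) hord, mul_one]
      exact Finset.sum_le_sum fun b _ => Finset.sum_le_sum fun c _ =>
        ite_le_self (hP _ _)
    · have hzero : ∀ b c : Bool,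
          (if Sord (Function.update ω e b) (Function.update τ e c)
           then P (Function.update ω e b) (Function.update τ e c) else 0) = 0 := by
        intro b c
        rw [if_neg]
        intro hS
        exact hord (Sord_off hS)
      have hL : (∑ b : Bool, ∑ c : Bool,
          if Sord (Function.update ω e b) (Function.update τ e c)
          then P (Function.update ω e b) (Function.update τ e c) else 0) = 0 := by
        simp only [hzero, Finset.sum_const_zero]
      rw [hL]
      apply mul_nonneg
      · exact Finset.sum_nonneg fun b _ => Finset.sum_nonneg fun c _ => hP _ _
      · exact Finset.sum_nonneg fun d _ => Finset.sum_nonneg fun d' _ =>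
          ite_coup_nonneg (pr_pos hμpos e ω).le (pr_lt_one hμpos e ω).le
            (pr_pos hνpos e τ).le (pr_lt_one hνpos e τ).le _ _ _
  linarith

lemma stepGood (hμpos : ∀ ω, 0 < μ ω) (hνpos : ∀ ω, 0 < ν ω)
    (hc : Hcond μ ν) (e : E) (A : Set E) {P : (E → Bool) → (E → Bool) → ℝ}
    (hP : ∀ ω τ, 0 ≤ P ω τ) {ε : ℝ} (hε0 : 0 ≤ ε) (hε1 : ε ≤ 1)
    (hεp : ∀ ω, ε ≤ pr μ e ω) (hεq : ∀ τ, ε ≤ pr ν e τ) :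
    (1 - ε) * mass P Sord + ε * mass P (good A)
      ≤ mass (T μ ν e P) (good (insert e A)) := by
  have h4 : 4 * ((1 - ε) * mass P Sord + ε * mass P (good A))
      ≤ 4 * mass (T μ ν e P) (good (insert e A)) := by
    have hre : 4 * ((1 - ε) * mass P Sord + ε * mass P (good A))
        = (1 - ε) * (4 * mass P Sord) + ε * (4 * mass P (good A)) := by ring
    rw [hre, mass_expand e P Sord, mass_expand e P (good A), mass_T_expand,
      Finset.mul_sum, Finset.mul_sum, ← Finset.sum_add_distrib]
    refine Finset.sum_le_sum fun ω _ => ?_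
    rw [Finset.mul_sum, Finset.mul_sum, ← Finset.sum_add_distrib]
    refine Finset.sum_le_sum fun τ _ => ?_
    have hC0 : (0:ℝ) ≤ ∑ b : Bool, ∑ c : Bool,
        P (Function.update ω e b) (Function.update τ e c) :=
      Finset.sum_nonneg fun b _ => Finset.sum_nonneg fun c _ => hP _ _
    have hiteG_le : (∑ b : Bool, ∑ c : Bool,
        if good A (Function.update ω e b) (Function.update τ e c)
        then P (Function.update ω e b) (Function.update τ e c) else 0)
        ≤ ∑ b : Bool, ∑ c : Bool,
          P (Function.update ω e b) (Function.update τ e c) :=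
      Finset.sum_le_sum fun b _ => Finset.sum_le_sum fun c _ => ite_le_self (hP _ _)
    have hiteG_0 : (0:ℝ) ≤ ∑ b : Bool, ∑ c : Bool,
        if good A (Function.update ω e b) (Function.update τ e c)
        then P (Function.update ω e b) (Function.update τ e c) else 0 :=
      Finset.sum_nonneg fun b _ => Finset.sum_nonneg fun c _ => by
        split
        · exact hP _ _
        · exact le_refl 0
    by_cases hord : ∀ f, f ≠ e → ω f ≤ τ f
    · rw [W_eq_one (Q := good (insert e A)) hμpos hνpos hc e
        (fun _ _ h => Or.inl h) hord, mul_one]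
      have hiteS_le : (∑ b : Bool, ∑ c : Bool,
          if Sord (Function.update ω e b) (Function.update τ e c)
          then P (Function.update ω e b) (Function.update τ e c) else 0)
          ≤ ∑ b : Bool, ∑ c : Bool,
            P (Function.update ω e b) (Function.update τ e c) :=
        Finset.sum_le_sum fun b _ => Finset.sum_le_sum fun c _ => ite_le_self (hP _ _)
      nlinarith
    · have hiteS : ∀ b c : Bool,
          (if Sord (Function.update ω e b) (Function.update τ e c)
           then P (Function.update ω e b) (Function.update τ e c) else 0) = 0 := by
        intro b c
        rw [if_neg]
        intro hS
        exact hord (Sord_off hS)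
      have hS0 : (∑ b : Bool, ∑ c : Bool,
          if Sord (Function.update ω e b) (Function.update τ e c)
          then P (Function.update ω e b) (Function.update τ e c) else 0) = 0 := by
        simp only [hiteS, Finset.sum_const_zero]
      rw [hS0, mul_zero, zero_add]
      have hWnn : ∀ d d' : Bool, (0:ℝ) ≤
          (if good (insert e A) (Function.update ω e d) (Function.update τ e d')
           then coup (pr μ e ω) (pr ν e τ) d d' else 0) := fun d d' =>
        ite_coup_nonneg (pr_pos hμpos e ω).le (pr_lt_one hμpos e ω).le
          (pr_pos hνpos e τ).le (pr_lt_one hνpos e τ).le _ _ _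
      by_cases hones : ∀ i ∈ A, i ≠ e → (ω i = true ∧ τ i = true)
      · -- W' ≥ ε
        have hgood : good (insert e A) (Function.update ω e true)
            (Function.update τ e true) := by
          refine Or.inr fun i hi => ?_
          by_cases hie : i = e
          · subst hie; simp [Function.update_self]
          · rcases Set.mem_insert_iff.mp hi with h | h
            · exact absurd h hie
            · have := hones i h hie
              simp [Function.update_of_ne hie, this.1, this.2]
        have htt : (if good (insert e A) (Function.update ω e true)
              (Function.update τ e true)
            then coup (pr μ e ω) (pr ν e τ) true true else 0)
            = min (pr μ e ω) (pr ν e τ) := by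
          rw [if_pos hgood]; rfl
        have hεmin : ε ≤ min (pr μ e ω) (pr ν e τ) := le_min (hεp ω) (hεq τ)
        have hW : ε ≤ ∑ d : Bool, ∑ d' : Bool,
            (if good (insert e A) (Function.update ω e d) (Function.update τ e d')
             then coup (pr μ e ω) (pr ν e τ) d d' else 0) := by
          rw [Fintype.sum_bool, Fintype.sum_bool, Fintype.sum_bool]
          have h1 := hWnn true false
          have h2 := hWnn false true
          have h3 := hWnn false false
          rw [htt]
          linarith
        calc ε * (∑ b : Bool, ∑ c : Bool,
            if good A (Function.update ω e b) (Function.update τ e c)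
            then P (Function.update ω e b) (Function.update τ e c) else 0)
            ≤ ε * (∑ b : Bool, ∑ c : Bool,
              P (Function.update ω e b) (Function.update τ e c)) :=
              mul_le_mul_of_nonneg_left hiteG_le hε0
          _ ≤ (∑ d : Bool, ∑ d' : Bool,
                if good (insert e A) (Function.update ω e d) (Function.update τ e d')
                then coup (pr μ e ω) (pr ν e τ) d d' else 0) *
              (∑ b : Bool, ∑ c : Bool,
                P (Function.update ω e b) (Function.update τ e c)) :=
              mul_le_mul_of_nonneg_right hW hC0
          _ = (∑ b : Bool, ∑ c : Bool,
              P (Function.update ω e b) (Function.update τ e c)) *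
              (∑ d : Bool, ∑ d' : Bool,
                if good (insert e A) (Function.update ω e d) (Function.update τ e d')
                then coup (pr μ e ω) (pr ν e τ) d d' else 0) := mul_comm _ _
      · -- all good-A indicators vanish
        have hiteG : ∀ b c : Bool,
            (if good A (Function.update ω e b) (Function.update τ e c)
             then P (Function.update ω e b) (Function.update τ e c) else 0) = 0 := by
          intro b c
          rw [if_neg]
          rintro (hS | hO)
          · exact hord (Sord_off hS)
          · apply hones
            intro i hi hie
            have := hO i hi
            simpa [Function.update_of_ne hie] using this
        have hG0 : (∑ b : Bool, ∑ c : Bool,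
            if good A (Function.update ω e b) (Function.update τ e c)
            then P (Function.update ω e b) (Function.update τ e c) else 0) = 0 := by
          simp only [hiteG, Finset.sum_const_zero]
        rw [hG0, mul_zero]
        exact mul_nonneg hC0 (Finset.sum_nonneg fun d _ =>
          Finset.sum_nonneg fun d' _ => hWnn d d')
  linarith

end Steps

section Sweep

variable {μ ν : (E → Bool) → ℝ}

noncomputable def sweep (μ ν : (E → Bool) → ℝ) (l : List E)
    (P : (E → Bool) → (E → Bool) → ℝ) : (E → Bool) → (E → Bool) → ℝ :=
  l.foldl (fun Q e => T μ ν e Q) P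

@[simp] lemma sweep_nil (P : (E → Bool) → (E → Bool) → ℝ) : sweep μ ν [] P = P := rfl

lemma sweep_cons (e : E) (l : List E) (P : (E → Bool) → (E → Bool) → ℝ) :
    sweep μ ν (e :: l) P = sweep μ ν l (T μ ν e P) := rfl

lemma sweep_nonneg (hμpos : ∀ ω, 0 < μ ω) (hνpos : ∀ ω, 0 < ν ω) (l : List E) :
    ∀ (P : (E → Bool) → (E → Bool) → ℝ), (∀ ω τ, 0 ≤ P ω τ) →
      ∀ ω τ, 0 ≤ sweep μ ν l P ω τ := by
  induction l with
  | nil => intro P hP; exact hP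
  | cons e l ih =>
    intro P hP
    rw [sweep_cons]
    exact ih _ (T_nonneg hμpos hνpos e hP)

lemma sweep_marg1 (hμpos : ∀ ω, 0 < μ ω) (l : List E) :
    ∀ (P : (E → Bool) → (E → Bool) → ℝ), (∀ ω, ∑ τ : E → Bool, P ω τ = μ ω) →
      ∀ ω, ∑ τ : E → Bool, sweep μ ν l P ω τ = μ ω := by
  induction l with
  | nil => intro P hP; exact hP
  | cons e l ih =>
    intro P hP
    rw [sweep_cons]
    exact ih _ (T_marg1 hμpos e hP)

lemma sweep_marg2 (hνpos : ∀ ω, 0 < ν ω) (l : List E) :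
    ∀ (P : (E → Bool) → (E → Bool) → ℝ), (∀ τ, ∑ ω : E → Bool, P ω τ = ν τ) →
      ∀ τ, ∑ ω : E → Bool, sweep μ ν l P ω τ = ν τ := by
  induction l with
  | nil => intro P hP; exact hP
  | cons e l ih =>
    intro P hP
    rw [sweep_cons]
    exact ih _ (T_marg2 hνpos e hP)

lemma sweep_mass (hμpos : ∀ ω, 0 < μ ω) (hνpos : ∀ ω, 0 < ν ω)
    (hc : Hcond μ ν) {ε : ℝ} (hε0 : 0 ≤ ε) (hε1 : ε ≤ 1)
    (hεp : ∀ (e : E) ω, ε ≤ pr μ e ω) (hεq : ∀ (e : E) τ, ε ≤ pr ν e τ)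
    (l : List E) :
    ∀ (A : Set E) (P : (E → Bool) → (E → Bool) → ℝ), (∀ ω τ, 0 ≤ P ω τ) →
      ε ^ l.length * mass P (good A) + (1 - ε ^ l.length) * mass P Sord
        ≤ mass (sweep μ ν l P) (good ({x | x ∈ l} ∪ A)) := by
  induction l with
  | nil =>
    intro A P hP
    have hset : ({x | x ∈ ([] : List E)} ∪ A : Set E) = A := by
      ext x; simp
    rw [hset]
    simp
  | cons e l ih =>
    intro A P hP
    have hset : ({x | x ∈ e :: l} ∪ A : Set E)
        = ({x | x ∈ l} ∪ insert e A : Set E) := by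
      ext x
      simp only [Set.mem_union, Set.mem_setOf_eq, List.mem_cons, Set.mem_insert_iff]
      tauto
    rw [sweep_cons, hset]
    have hTnn := T_nonneg hμpos hνpos e hP
    have ih' := ih (insert e A) (T μ ν e P) hTnn
    have h1 := stepGood hμpos hνpos hc e A hP hε0 hε1 (hεp e) (hεq e)
    have h2 := stepS hμpos hνpos hc e hP
    have hpow0 : (0:ℝ) ≤ ε ^ l.length := pow_nonneg hε0 _
    have hpow1 : ε ^ l.length ≤ 1 := pow_le_one₀ hε0 hε1
    have hb1 := mul_le_mul_of_nonneg_left h1 hpow0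
    have hb2 := mul_le_mul_of_nonneg_left h2 (by linarith : (0:ℝ) ≤ 1 - ε ^ l.length)
    have hexp : ε ^ (e :: l).length = ε ^ l.length * ε := by
      rw [List.length_cons, pow_succ]
    have hexpand : ε ^ l.length * ((1 - ε) * mass P Sord + ε * mass P (good A))
        = ε ^ l.length * mass P Sord - ε ^ l.length * ε * mass P Sord
          + ε ^ l.length * ε * mass P (good A) := by ring
    rw [hexp]
    linarith [ih', hb1, hb2, hexpand.le, hexpand.ge]

end Sweep

section Iter

variable (μ ν : (E → Bool) → ℝ)

noncomputable def eps : ℝ :=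
  (insert (1:ℝ) (Finset.univ.image
    (fun p : E × (E → Bool) × (E → Bool) =>
      min (pr μ p.1 p.2.1) (pr ν p.1 p.2.2)))).min'
    (Finset.insert_nonempty _ _)

lemma eps_le_one : eps μ ν ≤ 1 :=
  Finset.min'_le _ _ (Finset.mem_insert_self _ _)

lemma eps_le (e : E) (ω τ : E → Bool) :
    eps μ ν ≤ min (pr μ e ω) (pr ν e τ) :=
  Finset.min'_le _ _ (Finset.mem_insert_of_mem
    (Finset.mem_image_of_mem _ (Finset.mem_univ (e, ω, τ))))

lemma eps_pos (hμpos : ∀ ω, 0 < μ ω) (hνpos : ∀ ω, 0 < ν ω) : 0 < eps μ ν := by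
  apply (Finset.lt_min'_iff _ _).mpr
  intro b hb
  rcases Finset.mem_insert.mp hb with h | h
  · rw [h]; norm_num
  · obtain ⟨p, _, rfl⟩ := Finset.mem_image.mp h
    exact lt_min (pr_pos hμpos _ _) (pr_pos hνpos _ _)

noncomputable def U (P : (E → Bool) → (E → Bool) → ℝ) :
    (E → Bool) → (E → Bool) → ℝ :=
  sweep μ ν (Finset.univ.toList (α := E)) P

lemma mass_good_empty (P : (E → Bool) → (E → Bool) → ℝ) :
    mass P (good (∅ : Set E)) = ∑ ω : E → Bool, ∑ τ : E → Bool, P ω τ := by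
  unfold mass
  refine Finset.sum_congr rfl fun ω _ => Finset.sum_congr rfl fun τ _ => ?_
  rw [if_pos]
  exact Or.inr fun i hi => absurd hi (Set.notMem_empty i)

lemma mass_good_univ (P : (E → Bool) → (E → Bool) → ℝ) :
    mass P (good ({x | x ∈ Finset.univ.toList (α := E)} ∪ (∅ : Set E)))
      = mass P Sord := by
  refine mass_congr P fun ω τ => ?_
  constructor
  · rintro (h | h)
    · exact h
    · intro f
      have := h f (by simp [Finset.mem_toList])
      rw [this.1, this.2]
  · exact Or.inl

lemma U_mass (hμpos : ∀ ω, 0 < μ ω) (hνpos : ∀ ω, 0 < ν ω) (hc : Hcond μ ν)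
    (P : (E → Bool) → (E → Bool) → ℝ) (hP : ∀ ω τ, 0 ≤ P ω τ) :
    eps μ ν ^ (Finset.univ.toList (α := E)).length *
        (∑ ω : E → Bool, ∑ τ : E → Bool, P ω τ)
      + (1 - eps μ ν ^ (Finset.univ.toList (α := E)).length) * mass P Sord
      ≤ mass (U μ ν P) Sord := by
  have h := sweep_mass hμpos hνpos hc
    (le_of_lt (eps_pos μ ν hμpos hνpos)) (eps_le_one μ ν)
    (fun e ω => le_trans (eps_le μ ν e ω ω) (min_le_left _ _))
    (fun e τ => le_trans (eps_le μ ν e τ τ) (min_le_right _ _))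
    (Finset.univ.toList (α := E)) ∅ P hP
  rw [mass_good_empty, mass_good_univ] at h
  exact h

noncomputable def iterP (P₀ : (E → Bool) → (E → Bool) → ℝ) (k : ℕ) :
    (E → Bool) → (E → Bool) → ℝ :=
  (U μ ν)^[k] P₀

lemma iterP_zero (P₀ : (E → Bool) → (E → Bool) → ℝ) : iterP μ ν P₀ 0 = P₀ := rfl

lemma iterP_succ (P₀ : (E → Bool) → (E → Bool) → ℝ) (k : ℕ) :
    iterP μ ν P₀ (k + 1) = U μ ν (iterP μ ν P₀ k) :=
  Function.iterate_succ_apply' _ _ _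

lemma iterP_nonneg (hμpos : ∀ ω, 0 < μ ω) (hνpos : ∀ ω, 0 < ν ω)
    {P₀ : (E → Bool) → (E → Bool) → ℝ} (h0 : ∀ ω τ, 0 ≤ P₀ ω τ) (k : ℕ) :
    ∀ ω τ, 0 ≤ iterP μ ν P₀ k ω τ := by
  induction k with
  | zero => exact h0
  | succ k ih =>
    rw [iterP_succ]
    exact sweep_nonneg hμpos hνpos _ _ ih

lemma iterP_marg1 (hμpos : ∀ ω, 0 < μ ω)
    {P₀ : (E → Bool) → (E → Bool) → ℝ}
    (h0 : ∀ ω, ∑ τ : E → Bool, P₀ ω τ = μ ω) (k : ℕ) :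
    ∀ ω, ∑ τ : E → Bool, iterP μ ν P₀ k ω τ = μ ω := by
  induction k with
  | zero => exact h0
  | succ k ih =>
    rw [iterP_succ]
    exact sweep_marg1 hμpos _ _ ih

lemma iterP_marg2 (hνpos : ∀ ω, 0 < ν ω)
    {P₀ : (E → Bool) → (E → Bool) → ℝ}
    (h0 : ∀ τ, ∑ ω : E → Bool, P₀ ω τ = ν τ) (k : ℕ) :
    ∀ τ, ∑ ω : E → Bool, iterP μ ν P₀ k ω τ = ν τ := by
  induction k with
  | zero => exact h0
  | succ k ih =>
    rw [iterP_succ]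
    exact sweep_marg2 hνpos _ _ ih

lemma iterP_bad (hμpos : ∀ ω, 0 < μ ω) (hνpos : ∀ ω, 0 < ν ω) (hc : Hcond μ ν)
    (hμ1 : ∑ ω : E → Bool, μ ω = 1)
    {P₀ : (E → Bool) → (E → Bool) → ℝ} (h0 : ∀ ω τ, 0 ≤ P₀ ω τ)
    (hm1 : ∀ ω, ∑ τ : E → Bool, P₀ ω τ = μ ω) (k : ℕ) :
    1 - mass (iterP μ ν P₀ k) Sord
      ≤ (1 - eps μ ν ^ (Finset.univ.toList (α := E)).length) ^ k := by
  set δ := eps μ ν ^ (Finset.univ.toList (α := E)).length with hδ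
  have hδ0 : 0 < δ := pow_pos (eps_pos μ ν hμpos hνpos) _
  have hδ1 : δ ≤ 1 := pow_le_one₀ (eps_pos μ ν hμpos hνpos).le (eps_le_one μ ν)
  induction k with
  | zero =>
    simp only [pow_zero, iterP_zero]
    have : 0 ≤ mass P₀ Sord := mass_nonneg h0 _
    linarith
  | succ k ih =>
    have htot : ∑ ω : E → Bool, ∑ τ : E → Bool, iterP μ ν P₀ k ω τ = 1 := by
      rw [Finset.sum_congr rfl fun ω _ => iterP_marg1 μ ν hμpos hm1 k ω, hμ1]
    have hstep := U_mass μ ν hμpos hνpos hc (iterP μ ν P₀ k)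
      (iterP_nonneg μ ν hμpos hνpos h0 k)
    rw [htot, mul_one] at hstep
    rw [iterP_succ]
    have h1mδ : 0 ≤ 1 - δ := by linarith
    calc 1 - mass (U μ ν (iterP μ ν P₀ k)) Sord
        ≤ 1 - (δ + (1 - δ) * mass (iterP μ ν P₀ k) Sord) := by linarith
      _ = (1 - δ) * (1 - mass (iterP μ ν P₀ k) Sord) := by ring
      _ ≤ (1 - δ) * (1 - δ) ^ k := mul_le_mul_of_nonneg_left ih h1mδ
      _ = (1 - δ) ^ (k + 1) := (pow_succ' _ _).symm

end Iter

lemma mass_add_compl (P : (E → Bool) → (E → Bool) → ℝ)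
    (Q : (E → Bool) → (E → Bool) → Prop) :
    mass P Q + mass P (fun ω τ => ¬ Q ω τ)
      = ∑ ω : E → Bool, ∑ τ : E → Bool, P ω τ := by
  unfold mass
  rw [← Finset.sum_add_distrib]
  refine Finset.sum_congr rfl fun ω _ => ?_
  rw [← Finset.sum_add_distrib]
  refine Finset.sum_congr rfl fun τ _ => ?_
  by_cases h : Q ω τ <;> simp [h]

lemma exists_coupling {μ ν : (E → Bool) → ℝ}
    (hμpos : ∀ ω, 0 < μ ω) (hνpos : ∀ ω, 0 < ν ω)
    (hμ1 : ∑ ω : E → Bool, μ ω = 1) (hν1 : ∑ ω : E → Bool, ν ω = 1)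
    (hc : Hcond μ ν) :
    ∃ P : (E → Bool) → (E → Bool) → ℝ,
      (∀ ω τ, 0 ≤ P ω τ) ∧
      (∀ ω, (∑ τ : E → Bool, P ω τ) = μ ω) ∧
      (∀ τ, (∑ ω : E → Bool, P ω τ) = ν τ) ∧
      (∀ ω τ, P ω τ ≠ 0 → Sord ω τ) := by
  classical
  set P₀ : (E → Bool) → (E → Bool) → ℝ := fun ω τ => μ ω * ν τ with hP₀
  have h0 : ∀ ω τ, 0 ≤ P₀ ω τ := fun ω τ => mul_nonneg (hμpos ω).le (hνpos τ).le
  have hm1 : ∀ ω, ∑ τ : E → Bool, P₀ ω τ = μ ω := by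
    intro ω; rw [hP₀]; simp only [← Finset.mul_sum, hν1, mul_one]
  have hm2 : ∀ τ, ∑ ω : E → Bool, P₀ ω τ = ν τ := by
    intro τ; rw [hP₀]; simp only [← Finset.sum_mul, hμ1, one_mul]
  set seq : ℕ → (E → Bool) → (E → Bool) → ℝ := fun k => iterP μ ν P₀ k with hseq
  have hseqnn : ∀ k ω τ, 0 ≤ seq k ω τ := fun k => iterP_nonneg μ ν hμpos hνpos h0 k
  have hseqm1 : ∀ k ω, ∑ τ : E → Bool, seq k ω τ = μ ω :=
    fun k => iterP_marg1 μ ν hμpos hm1 k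
  have hseqm2 : ∀ k τ, ∑ ω : E → Bool, seq k ω τ = ν τ :=
    fun k => iterP_marg2 μ ν hνpos hm2 k
  have hμle1 : ∀ ω, μ ω ≤ 1 := by
    intro ω
    rw [← hμ1]
    exact Finset.single_le_sum (fun ω' _ => (hμpos ω').le) (Finset.mem_univ ω)
  have hle1 : ∀ k ω τ, seq k ω τ ≤ 1 := by
    intro k ω τ
    calc seq k ω τ ≤ ∑ τ' : E → Bool, seq k ω τ' :=
          Finset.single_le_sum (fun τ' _ => hseqnn k ω τ') (Finset.mem_univ τ)
      _ = μ ω := hseqm1 k ω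
      _ ≤ 1 := hμle1 ω
  -- compactness
  set K : Set ((E → Bool) → (E → Bool) → ℝ) :=
    Set.univ.pi (fun _ => Set.univ.pi (fun _ => Set.Icc (0:ℝ) 1)) with hK
  have hKc : IsCompact K :=
    isCompact_univ_pi (fun _ => isCompact_univ_pi (fun _ => isCompact_Icc))
  have hmem : ∀ k, seq k ∈ K := by
    intro k
    rw [hK]
    refine Set.mem_univ_pi.mpr fun ω => Set.mem_univ_pi.mpr fun τ => ?_
    exact ⟨hseqnn k ω τ, hle1 k ω τ⟩
  obtain ⟨P, hPK, φ, hφ, hconv⟩ := hKc.tendsto_subseq hmem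
  have hev : ∀ ω τ, Filter.Tendsto (fun j => seq (φ j) ω τ)
      Filter.atTop (nhds (P ω τ)) := by
    intro ω τ
    have h1 := tendsto_pi_nhds.mp hconv ω
    exact tendsto_pi_nhds.mp h1 τ
  have hPnn : ∀ ω τ, 0 ≤ P ω τ := by
    intro ω τ
    have := Set.mem_univ_pi.mp (Set.mem_univ_pi.mp hPK ω) τ
    exact this.1
  have hPm1 : ∀ ω, ∑ τ : E → Bool, P ω τ = μ ω := by
    intro ω
    have h1 : Filter.Tendsto (fun j => ∑ τ : E → Bool, seq (φ j) ω τ)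
        Filter.atTop (nhds (∑ τ : E → Bool, P ω τ)) :=
      tendsto_finset_sum _ fun τ _ => hev ω τ
    have h2 : Filter.Tendsto (fun j => ∑ τ : E → Bool, seq (φ j) ω τ)
        Filter.atTop (nhds (μ ω)) := by
      have heq : (fun j => ∑ τ : E → Bool, seq (φ j) ω τ) = fun _ => μ ω :=
        funext fun j => hseqm1 (φ j) ω
      rw [heq]
      exact tendsto_const_nhds
    exact tendsto_nhds_unique h1 h2
  have hPm2 : ∀ τ, ∑ ω : E → Bool, P ω τ = ν τ := by
    intro τ
    have h1 : Filter.Tendsto (fun j => ∑ ω : E → Bool, seq (φ j) ω τ)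
        Filter.atTop (nhds (∑ ω : E → Bool, P ω τ)) :=
      tendsto_finset_sum _ fun ω _ => hev ω τ
    have h2 : Filter.Tendsto (fun j => ∑ ω : E → Bool, seq (φ j) ω τ)
        Filter.atTop (nhds (ν τ)) := by
      have heq : (fun j => ∑ ω : E → Bool, seq (φ j) ω τ) = fun _ => ν τ :=
        funext fun j => hseqm2 (φ j) τ
      rw [heq]
      exact tendsto_const_nhds
    exact tendsto_nhds_unique h1 h2
  -- bad mass tends to zero
  set δ := eps μ ν ^ (Finset.univ.toList (α := E)).length with hδ
  have hδ0 : 0 < δ := pow_pos (eps_pos μ ν hμpos hνpos) _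
  have hδ1 : δ ≤ 1 := pow_le_one₀ (eps_pos μ ν hμpos hνpos).le (eps_le_one μ ν)
  have hbadk : ∀ k, mass (seq k) (fun ω τ => ¬ Sord ω τ) ≤ (1 - δ) ^ k := by
    intro k
    have h1 := iterP_bad μ ν hμpos hνpos hc hμ1 h0 hm1 k
    have h2 := mass_add_compl (seq k) Sord
    have h3 : ∑ ω : E → Bool, ∑ τ : E → Bool, seq k ω τ = 1 := by
      rw [Finset.sum_congr rfl fun ω _ => hseqm1 k ω, hμ1]
    rw [h3] at h2
    rw [← hδ] at h1
    linarith
  have hBconv : Filter.Tendsto (fun j => mass (seq (φ j)) (fun ω τ => ¬ Sord ω τ))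
      Filter.atTop (nhds (mass P (fun ω τ => ¬ Sord ω τ))) := by
    unfold mass
    refine tendsto_finset_sum _ fun ω _ => tendsto_finset_sum _ fun τ _ => ?_
    by_cases h : ¬ Sord ω τ
    · simp only [if_pos h]
      exact hev ω τ
    · simp only [if_neg h]
      exact tendsto_const_nhds
  have hB0 : Filter.Tendsto (fun j => mass (seq (φ j)) (fun ω τ => ¬ Sord ω τ))
      Filter.atTop (nhds 0) := by
    apply tendsto_of_tendsto_of_tendsto_of_le_of_le
      (tendsto_const_nhds (x := (0:ℝ)))
      (tendsto_pow_atTop_nhds_zero_of_lt_one (by linarith) (by linarith)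
        : Filter.Tendsto (fun j : ℕ => (1 - δ) ^ j) Filter.atTop (nhds 0))
    · intro j
      exact mass_nonneg (hseqnn (φ j)) _
    · intro j
      calc mass (seq (φ j)) (fun ω τ => ¬ Sord ω τ) ≤ (1 - δ) ^ (φ j) :=
            hbadk (φ j)
        _ ≤ (1 - δ) ^ j :=
            pow_le_pow_of_le_one (by linarith) (by linarith) (hφ.le_apply)
  have hmass0 : mass P (fun ω τ => ¬ Sord ω τ) = 0 :=
    tendsto_nhds_unique hBconv hB0
  refine ⟨P, hPnn, hPm1, hPm2, ?_⟩
  intro ω τ hne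
  by_contra hS
  have hmass0' : (∑ ω' : E → Bool, ∑ τ' : E → Bool,
      if ¬ Sord ω' τ' then P ω' τ' else 0) = 0 := by
    rw [← hmass0]
    exact Finset.sum_congr rfl fun ω' _ => Finset.sum_congr rfl fun τ' _ => by
      congr 1
  have hterms : ∀ ω' ∈ (Finset.univ : Finset (E → Bool)),
      0 ≤ ∑ τ' : E → Bool, (if ¬ Sord ω' τ' then P ω' τ' else 0) := by
    intro ω' _
    refine Finset.sum_nonneg fun τ' _ => ?_
    split
    · exact hPnn ω' τ'
    · exact le_refl 0
  have houter := (Finset.sum_eq_zero_iff_of_nonneg hterms).mp hmass0' ω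
    (Finset.mem_univ ω)
  have hinner : ∀ τ' ∈ (Finset.univ : Finset (E → Bool)),
      (0:ℝ) ≤ (if ¬ Sord ω τ' then P ω τ' else 0) := by
    intro τ' _
    split
    · exact hPnn ω τ'
    · exact le_refl 0
  have := (Finset.sum_eq_zero_iff_of_nonneg hinner).mp houter τ (Finset.mem_univ τ)
  rw [if_pos hS] at this
  exact hne this


/-- Monotone-coupling criterion for stochastic domination (Holley-type lemma). -/
theorem holley_coupling {E : Type} [Fintype E] [DecidableEq E]
    (μ ν : (E → Bool) → ℝ)
    (hμpos : ∀ ω, 0 < μ ω) (hνpos : ∀ ω, 0 < ν ω)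
    (hμ1 : ∑ ω : E → Bool, μ ω = 1) (hν1 : ∑ ω : E → Bool, ν ω = 1)
    (hcond : ∀ e : E, ∀ ω ω' : E → Bool, (∀ f : E, f ≠ e → ω f ≤ ω' f) →
      μ (Function.update ω e true) /
          (μ (Function.update ω e true) + μ (Function.update ω e false))
        ≤ ν (Function.update ω' e true) /
            (ν (Function.update ω' e true) + ν (Function.update ω' e false))) :
    (∃ P : (E → Bool) → (E → Bool) → ℝ,
      (∀ ω τ, 0 ≤ P ω τ) ∧
      (∀ ω, (∑ τ : E → Bool, P ω τ) = μ ω) ∧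
      (∀ τ, (∑ ω : E → Bool, P ω τ) = ν τ) ∧
      (∀ ω τ, P ω τ ≠ 0 → ∀ e : E, ω e ≤ τ e)) ∧
    (∀ A : Set (E → Bool),
      (∀ ω ω' : E → Bool, ω ∈ A → (∀ e : E, ω e ≤ ω' e) → ω' ∈ A) →
      (∑ ω ∈ Finset.univ.filter (fun ω : E → Bool => ω ∈ A), μ ω)
        ≤ ∑ ω ∈ Finset.univ.filter (fun ω : E → Bool => ω ∈ A), ν ω) := by
  have hc : Hcond μ ν := fun e ω τ h => hcond e ω τ h
  obtain ⟨P, hnn, hm1, hm2, hsupp⟩ := exists_coupling hμpos hνpos hμ1 hν1 hc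
  constructor
  · exact ⟨P, hnn, hm1, hm2, fun ω τ h e => hsupp ω τ h e⟩
  · intro A hA
    rw [Finset.sum_filter, Finset.sum_filter]
    calc (∑ ω : E → Bool, if ω ∈ A then μ ω else 0)
        = ∑ ω : E → Bool, ∑ τ : E → Bool, (if ω ∈ A then P ω τ else 0) := by
          refine Finset.sum_congr rfl fun ω _ => ?_
          by_cases h : ω ∈ A
          · simp only [if_pos h]; exact (hm1 ω).symm
          · simp only [if_neg h, Finset.sum_const_zero]
      _ ≤ ∑ ω : E → Bool, ∑ τ : E → Bool, (if τ ∈ A then P ω τ else 0) := by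
          refine Finset.sum_le_sum fun ω _ => Finset.sum_le_sum fun τ _ => ?_
          by_cases hz : P ω τ = 0
          · simp [hz]
          · by_cases hω : ω ∈ A
            · have hτ : τ ∈ A := hA ω τ hω (hsupp ω τ hz)
              rw [if_pos hω, if_pos hτ]
            · rw [if_neg hω]
              split
              · exact hnn ω τ
              · exact le_refl 0
      _ = ∑ τ : E → Bool, (if τ ∈ A then ν τ else 0) := by
          rw [Finset.sum_comm]
          refine Finset.sum_congr rfl fun τ _ => ?_
          by_cases h : τ ∈ A
          · simp only [if_pos h]
            exact hm2 τ
          · simp only [if_neg h, Finset.sum_const_zero]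

end Stmt6
end

section
/- Positive association of the random-cluster model. Fix q ≥ 1, p ∈ [0,1], a finite graph G=(V,E) with distinguished boundary set ∂G ⊆ V, and boundary conditions ξ given by a partition of ∂G. Then: (CBC) for every increasing event A and every partition ξ' coarser than ξ, φ^{ξ'}_{G,p,q}[A] ≥ φ^ξ_{G,p,q}[A]; (MON) for every increasing event A and every p' ≥ p, φ^ξ_{G,p',q}[A] ≥ φ^ξ_{G,p,q}[A]; (FKG) for all increasing events A and B, φ^ξ_{G,p,q}[A ∩ B] ≥ φ^ξ_{G,p,q}[A] · φ^ξ_{G,p,q}[B]. -/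
open scoped BigOperators Classical
set_option linter.unusedSectionVars false

namespace Stmt7

variable {V E : Type} [Fintype V] [DecidableEq V] [Fintype E] [DecidableEq E]

/-- Two vertices are adjacent in `ω` if some open edge joins them. -/
def adj (gfst gsnd : E → V) (ω : E → Bool) (x y : V) : Prop :=
  ∃ e : E, ω e = true ∧ ((gfst e = x ∧ gsnd e = y) ∨ (gfst e = y ∧ gsnd e = x))

/-- Two boundary vertices lie in the same block of the boundary partition `ξ`. -/
def sameBlock {bdry : Finset V} (ξ : Finpartition bdry) (x y : V) : Prop :=
  ∃ P ∈ ξ.parts, x ∈ P ∧ y ∈ P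

/-- Connectivity in `ω^ξ`: open paths, with each block of `ξ` identified to a point. -/
def connBC (gfst gsnd : E → V) {bdry : Finset V} (ξ : Finpartition bdry)
    (ω : E → Bool) : V → V → Prop :=
  Relation.ReflTransGen fun x y => adj gfst gsnd ω x y ∨ sameBlock ξ x y

/-- `k(ω^ξ)`: the number of connected components of `ω^ξ`. -/
noncomputable def numCompBC (gfst gsnd : E → V) {bdry : Finset V} (ξ : Finpartition bdry)
    (ω : E → Bool) : ℕ :=
  (Finset.univ.image fun x : V =>
    Finset.univ.filter fun y : V => connBC gfst gsnd ξ ω x y).card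

/-- Number of open edges. -/
noncomputable def openCount (ω : E → Bool) : ℕ :=
  (Finset.univ.filter fun e : E => ω e = true).card

/-- Number of closed edges. -/
noncomputable def closedCount (ω : E → Bool) : ℕ :=
  (Finset.univ.filter fun e : E => ω e = false).card

/-- Random-cluster weight `p^{o(ω)} (1-p)^{c(ω)} q^{k(ω^ξ)}`. -/
noncomputable def rcW (gfst gsnd : E → V) {bdry : Finset V} (ξ : Finpartition bdry)
    (p q : ℝ) (ω : E → Bool) : ℝ :=
  p ^ openCount ω * (1 - p) ^ closedCount ω * q ^ numCompBC gfst gsnd ξ ω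

/-- The probability of the event `Aev` under `φ^ξ_{G,p,q}`. -/
noncomputable def rcProb (gfst gsnd : E → V) {bdry : Finset V} (ξ : Finpartition bdry)
    (p q : ℝ) (Aev : (E → Bool) → Prop) : ℝ :=
  (∑ ω : E → Bool, if Aev ω then rcW gfst gsnd ξ p q ω else 0) /
    (∑ ω : E → Bool, rcW gfst gsnd ξ p q ω)

/-- An event is increasing if it is an up-set for the coordinatewise order. -/
def IncreasingEvent (Aev : (E → Bool) → Prop) : Prop :=
  ∀ ω ω' : E → Bool, (∀ e : E, ω e ≤ ω' e) → Aev ω → Aev ω'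

/-- `ξ'` is coarser than `ξ` if every block of `ξ` is contained in a block of `ξ'`. -/
def Coarser {bdry : Finset V} (ξ ξ' : Finpartition bdry) : Prop :=
  ∀ P ∈ ξ.parts, ∃ P' ∈ ξ'.parts, P ⊆ P'

section Core

variable (gf gs : E → V) {bdry : Finset V} (ξ : Finpartition bdry)

lemma adj_symm {ω : E → Bool} {x y : V} (h : adj gf gs ω x y) : adj gf gs ω y x := by
  obtain ⟨e, he, h | h⟩ := h
  · exact ⟨e, he, Or.inr h⟩
  · exact ⟨e, he, Or.inl h⟩

lemma sameBlock_symm {x y : V} (h : sameBlock ξ x y) : sameBlock ξ y x := by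
  obtain ⟨P, hP, h1, h2⟩ := h; exact ⟨P, hP, h2, h1⟩

lemma connBC_symm {ω : E → Bool} {x y : V} (h : connBC gf gs ξ ω x y) :
    connBC gf gs ξ ω y x :=
  @Std.Symm.symm _ _ (@Relation.ReflTransGen.stdSymm _ _
    ⟨fun _ _ h => h.imp (adj_symm gf gs) (sameBlock_symm ξ)⟩) _ _ h

lemma connBC_trans {ω : E → Bool} {x y z : V} (h : connBC gf gs ξ ω x y)
    (h' : connBC gf gs ξ ω y z) : connBC gf gs ξ ω x z := h.trans h'

lemma bool_le_of_eq_true {a b : Bool} (h : a ≤ b) (ha : a = true) : b = true := by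
  subst ha; cases b
  · exact absurd h (by decide)
  · rfl

lemma adj_mono {ω ω' : E → Bool} (h : ∀ e, ω e ≤ ω' e) {x y : V}
    (ha : adj gf gs ω x y) : adj gf gs ω' x y := by
  obtain ⟨e, he, hxy⟩ := ha; exact ⟨e, bool_le_of_eq_true (h e) he, hxy⟩

lemma connBC_mono {ω ω' : E → Bool} (h : ∀ e, ω e ≤ ω' e) {x y : V}
    (hc : connBC gf gs ξ ω x y) : connBC gf gs ξ ω' x y :=
  Relation.ReflTransGen.mono (fun _ _ hr => hr.imp_left (adj_mono gf gs h)) _ _ hc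

/-- component of x -/
noncomputable def comp (ω : E → Bool) (x : V) : Finset V :=
  Finset.univ.filter fun y => connBC gf gs ξ ω x y

lemma mem_comp {ω : E → Bool} {x y : V} : y ∈ comp gf gs ξ ω x ↔ connBC gf gs ξ ω x y := by
  simp [comp]

lemma comp_eq_of_conn {ω : E → Bool} {x y : V} (h : connBC gf gs ξ ω x y) :
    comp gf gs ξ ω x = comp gf gs ξ ω y := by
  ext z
  simp only [mem_comp]
  exact ⟨fun hz => (connBC_symm gf gs ξ h).trans hz, fun hz => h.trans hz⟩

lemma conn_of_comp_eq {ω : E → Bool} {x y : V} (h : comp gf gs ξ ω x = comp gf gs ξ ω y) :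
    connBC gf gs ξ ω x y := by
  have : y ∈ comp gf gs ξ ω y := (mem_comp gf gs ξ).2 .refl
  rw [← h] at this
  exact (mem_comp gf gs ξ).1 this

lemma numCompBC_eq (ω : E → Bool) :
    numCompBC gf gs ξ ω = (Finset.univ.image (comp gf gs ξ ω)).card := rfl

lemma connBC_update_self (ω : E → Bool) (e : E) :
    connBC gf gs ξ (Function.update ω e true) (gf e) (gs e) :=
  Relation.ReflTransGen.single (Or.inl ⟨e, Function.update_self e true ω, Or.inl ⟨rfl, rfl⟩⟩)

/-- merge lemma -/
lemma connBC_update (ω : E → Bool) (e : E) (x y : V) :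
    connBC gf gs ξ (Function.update ω e true) x y ↔
      connBC gf gs ξ ω x y ∨
        (connBC gf gs ξ ω x (gf e) ∧ connBC gf gs ξ ω (gs e) y) ∨
        (connBC gf gs ξ ω x (gs e) ∧ connBC gf gs ξ ω (gf e) y) := by
  constructor
  · intro h
    induction h with
    | refl => exact Or.inl .refl
    | @tail b c _ hbc ih =>
      have step : ∀ z w : V, (adj gf gs ω z w ∨ sameBlock ξ z w) →
          connBC gf gs ξ ω z w := fun z w hzw => Relation.ReflTransGen.single hzw
      rcases hbc with hadj | hsb
      · obtain ⟨e', he', hends⟩ := hadj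
        by_cases hee : e' = e
        · subst hee
          rcases hends with ⟨h1, h2⟩ | ⟨h1, h2⟩
          · -- gf e' = b, gs e' = c
            subst h1; subst h2
            rcases ih with h | ⟨h1, _⟩ | ⟨h1, h2⟩
            · exact Or.inr (Or.inl ⟨h, .refl⟩)
            · exact Or.inr (Or.inl ⟨h1, .refl⟩)
            · exact Or.inl h1
          · -- gf e' = c, gs e' = b
            subst h1; subst h2
            rcases ih with h | ⟨h1, h2⟩ | ⟨h1, _⟩
            · exact Or.inr (Or.inr ⟨h, .refl⟩)
            · exact Or.inl h1
            · exact Or.inr (Or.inr ⟨h1, .refl⟩)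
        · have he'' : ω e' = true := by
            rwa [Function.update_of_ne hee] at he'
          have hstep : connBC gf gs ξ ω b c := step _ _ (Or.inl ⟨e', he'', hends⟩)
          rcases ih with h | ⟨h1, h2⟩ | ⟨h1, h2⟩
          · exact Or.inl (h.trans hstep)
          · exact Or.inr (Or.inl ⟨h1, h2.trans hstep⟩)
          · exact Or.inr (Or.inr ⟨h1, h2.trans hstep⟩)
      · have hstep : connBC gf gs ξ ω b c := Relation.ReflTransGen.single (Or.inr hsb)
        rcases ih with h | ⟨h1, h2⟩ | ⟨h1, h2⟩
        · exact Or.inl (h.trans hstep)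
        · exact Or.inr (Or.inl ⟨h1, h2.trans hstep⟩)
        · exact Or.inr (Or.inr ⟨h1, h2.trans hstep⟩)
  · have hmono : ∀ z w : V, connBC gf gs ξ ω z w →
        connBC gf gs ξ (Function.update ω e true) z w := by
      intro z w hzw
      refine connBC_mono gf gs ξ (fun e' => ?_) hzw
      by_cases hee : e' = e
      · subst hee; rw [Function.update_self]; exact le_top
      · rw [Function.update_of_ne hee]
    have huv := connBC_update_self gf gs ξ ω e
    rintro (h | ⟨h1, h2⟩ | ⟨h1, h2⟩)
    · exact hmono _ _ h
    · exact ((hmono _ _ h1).trans huv).trans (hmono _ _ h2)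
    · exact ((hmono _ _ h1).trans (connBC_symm gf gs ξ huv)).trans (hmono _ _ h2)


open Finset in
lemma numComp_update (ω : E → Bool) (e : E) :
    numCompBC gf gs ξ ω =
      numCompBC gf gs ξ (Function.update ω e true) +
        (if connBC gf gs ξ ω (gf e) (gs e) then 0 else 1) := by
  set u := gf e
  set v := gs e
  set ω' := Function.update ω e true with hω'
  set C : V → Finset V := comp gf gs ξ ω with hC
  set C' : V → Finset V := comp gf gs ξ ω' with hC'
  set S : Finset (Finset V) :=
    (univ.filter fun x => ¬ connBC gf gs ξ ω x u ∧ ¬ connBC gf gs ξ ω x v).image C with hS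
  have h1 : ∀ x : V, ¬ connBC gf gs ξ ω x u → ¬ connBC gf gs ξ ω x v → C' x = C x := by
    intro x hu hv
    ext y
    simp only [hC, hC', hω', mem_comp, connBC_update]
    constructor
    · rintro (h | ⟨h1, _⟩ | ⟨h1, _⟩)
      · exact h
      · exact absurd h1 hu
      · exact absurd h1 hv
    · exact Or.inl
  have huv' : connBC gf gs ξ ω' u v := connBC_update_self gf gs ξ ω e
  have h2 : ∀ x : V, (connBC gf gs ξ ω x u ∨ connBC gf gs ξ ω x v) → C' x = C' u := by
    intro x hx
    have hmono : ∀ z w : V, connBC gf gs ξ ω z w → connBC gf gs ξ ω' z w := by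
      intro z w hzw
      refine connBC_mono gf gs ξ (fun e' => ?_) hzw
      rw [hω']
      by_cases hee : e' = e
      · subst hee; rw [Function.update_self]; exact le_top
      · rw [Function.update_of_ne hee]
    refine comp_eq_of_conn gf gs ξ ?_
    rcases hx with h | h
    · exact hmono _ _ h
    · exact (hmono _ _ h).trans (connBC_symm gf gs ξ huv')
  have hCuS : ∀ s : Finset V, (u ∈ s ∨ v ∈ s) → s ∉ S := by
    intro s hus hs
    simp only [hS, mem_image, mem_filter] at hs
    obtain ⟨x, hx, rfl⟩ := hs
    rcases hus with hus | hus
    · exact hx.2.1 ((mem_comp gf gs ξ).1 hus)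
    · exact hx.2.2 ((mem_comp gf gs ξ).1 hus)
  have hmemCu : ∀ x : V, x ∈ C x := fun x => (mem_comp gf gs ξ).2 .refl
  have hmemCu' : ∀ x : V, x ∈ C' x := fun x => (mem_comp gf gs ξ).2 .refl
  have h3 : univ.image C' = insert (C' u) S := by
    ext s
    simp only [mem_image, mem_insert, mem_filter, hS]
    constructor
    · rintro ⟨x, -, rfl⟩
      by_cases hx : connBC gf gs ξ ω x u ∨ connBC gf gs ξ ω x v
      · exact Or.inl (h2 x hx)
      · push_neg at hx
        exact Or.inr ⟨x, ⟨mem_univ x, hx.1, hx.2⟩, (h1 x hx.1 hx.2).symm⟩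
    · rintro (rfl | ⟨x, hx, rfl⟩)
      · exact ⟨u, mem_univ u, rfl⟩
      · exact ⟨x, mem_univ x, h1 x hx.2.1 hx.2.2⟩
  have h4 : C' u ∉ S := by
    intro hs
    simp only [hS, mem_image, mem_filter] at hs
    obtain ⟨x, hx, hCx⟩ := hs
    have : u ∈ C x := hCx ▸ hmemCu' u
    exact hx.2.1 ((mem_comp gf gs ξ).1 this)
  have h5 : univ.image C = insert (C u) (insert (C v) S) := by
    ext s
    simp only [mem_image, mem_insert, mem_filter, hS]
    constructor
    · rintro ⟨x, -, rfl⟩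
      by_cases hxu : connBC gf gs ξ ω x u
      · exact Or.inl (comp_eq_of_conn gf gs ξ hxu)
      · by_cases hxv : connBC gf gs ξ ω x v
        · exact Or.inr (Or.inl (comp_eq_of_conn gf gs ξ hxv))
        · exact Or.inr (Or.inr ⟨x, ⟨mem_univ x, hxu, hxv⟩, rfl⟩)
    · rintro (rfl | rfl | ⟨x, hx, rfl⟩)
      · exact ⟨u, mem_univ u, rfl⟩
      · exact ⟨v, mem_univ v, rfl⟩
      · exact ⟨x, mem_univ x, rfl⟩
  have hk' : numCompBC gf gs ξ ω' = S.card + 1 := by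
    rw [numCompBC_eq, ← hC', h3, card_insert_of_notMem h4]
  by_cases hconn : connBC gf gs ξ ω u v
  · have hCuCv : C u = C v := comp_eq_of_conn gf gs ξ hconn
    rw [if_pos hconn, numCompBC_eq, ← hC, h5, ← hCuCv, Finset.insert_idem,
      card_insert_of_notMem (hCuS _ (Or.inl (hmemCu u))), hk']
  · have hCuCv : C u ≠ C v := by
      intro h
      exact hconn (conn_of_comp_eq gf gs ξ h)
    rw [if_neg hconn, numCompBC_eq, ← hC, h5, hk']
    rw [card_insert_of_notMem, card_insert_of_notMem (hCuS _ (Or.inr (hmemCu v)))]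
    simp only [mem_insert]
    rintro (h | h)
    · exact hCuCv h
    · exact hCuS _ (Or.inl (hmemCu u)) h


lemma bool_sup (x y : Bool) : x ⊔ y = (x || y) := by cases x <;> cases y <;> rfl
lemma bool_inf (x y : Bool) : x ⊓ y = (x && y) := by cases x <;> cases y <;> rfl

open Finset in
lemma numComp_supermodular (a b : E → Bool) :
    numCompBC gf gs ξ a + numCompBC gf gs ξ b ≤
      numCompBC gf gs ξ (a ⊔ b) + numCompBC gf gs ξ (a ⊓ b) := by
  suffices H : ∀ n (b : E → Bool), (univ.filter fun e => b e = true ∧ a e = false).card = n →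
      numCompBC gf gs ξ a + numCompBC gf gs ξ b ≤
        numCompBC gf gs ξ (a ⊔ b) + numCompBC gf gs ξ (a ⊓ b) from H _ b rfl
  intro n
  induction n with
  | zero =>
    intro b hb
    have hba : ∀ e, b e = true → a e = true := by
      intro e he
      by_contra hae
      have : e ∈ univ.filter fun e => b e = true ∧ a e = false :=
        mem_filter.2 ⟨mem_univ e, he, by simpa using hae⟩
      rw [card_eq_zero.1 hb] at this
      exact absurd this (notMem_empty e)
    have hsup : a ⊔ b = a := by
      funext e
      rw [Pi.sup_apply, bool_sup]
      cases hae : a e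
      · cases hbe : b e
        · rfl
        · exact (by simpa [hae] using hba e hbe)
      · rfl
    have hinf : a ⊓ b = b := by
      funext e
      rw [Pi.inf_apply, bool_inf]
      cases hbe : b e
      · simp
      · simp [hba e hbe]
    rw [hsup, hinf]
  | succ n ih =>
    intro b hb
    have hne : (univ.filter fun e => b e = true ∧ a e = false).Nonempty := by
      rw [← card_pos, hb]; omega
    obtain ⟨e, he⟩ := hne
    simp only [mem_filter] at he
    obtain ⟨-, hbe, hae⟩ := he
    set b' := Function.update b e false with hb'
    have hcard : (univ.filter fun e' => b' e' = true ∧ a e' = false).card = n := by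
      have : (univ.filter fun e' => b' e' = true ∧ a e' = false) =
          (univ.filter fun e' => b e' = true ∧ a e' = false).erase e := by
        ext e'
        simp only [mem_filter, mem_erase, mem_univ, true_and, hb']
        by_cases hee : e' = e
        · subst hee; simp [Function.update_self]
        · simp [Function.update_of_ne hee, hee]
      rw [this, card_erase_of_mem (mem_filter.2 ⟨mem_univ e, hbe, hae⟩), hb]
      omega
    have hbb : b = Function.update b' e true := by
      funext e'
      by_cases hee : e' = e
      · subst hee; rw [Function.update_self, hbe]
      · rw [Function.update_of_ne hee, hb', Function.update_of_ne hee]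
    have hsup : a ⊔ b = Function.update (a ⊔ b') e true := by
      funext e'
      by_cases hee : e' = e
      · subst hee
        rw [Function.update_self, Pi.sup_apply, bool_sup, hbe, Bool.or_true]
      · rw [Function.update_of_ne hee, Pi.sup_apply, Pi.sup_apply, hb',
          Function.update_of_ne hee]
    have hinf : a ⊓ b = a ⊓ b' := by
      funext e'
      by_cases hee : e' = e
      · subst hee
        rw [Pi.inf_apply, Pi.inf_apply, bool_inf, bool_inf, hae, Bool.false_and,
          Bool.false_and]
      · rw [Pi.inf_apply, Pi.inf_apply, hb', Function.update_of_ne hee]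
    have hM1 := numComp_update gf gs ξ (a ⊔ b') e
    have hM2 := numComp_update gf gs ξ b' e
    rw [← hsup] at hM1
    rw [← hbb] at hM2
    have hIH := ih b' hcard
    have hle : (if connBC gf gs ξ (a ⊔ b') (gf e) (gs e) then 0 else 1) ≤
        (if connBC gf gs ξ b' (gf e) (gs e) then 0 else 1) := by
      have hmo : connBC gf gs ξ b' (gf e) (gs e) → connBC gf gs ξ (a ⊔ b') (gf e) (gs e) :=
        connBC_mono gf gs ξ (fun e' => by rw [Pi.sup_apply]; exact le_sup_right)
      by_cases h2 : connBC gf gs ξ b' (gf e) (gs e)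
      · rw [if_pos h2, if_pos (hmo h2)]
      · rw [if_neg h2]
        split_ifs <;> omega
    rw [hinf]
    omega


lemma numComp_congr {E' : Type} [Fintype E'] [DecidableEq E'] (gf1 gs1 : E' → V)
    {bdry1 : Finset V} (ξ1 : Finpartition bdry1) (ω1 : E' → Bool)
    (ω : E → Bool)
    (h : ∀ x y : V, connBC gf1 gs1 ξ1 ω1 x y ↔ connBC gf gs ξ ω x y) :
    numCompBC gf1 gs1 ξ1 ω1 = numCompBC gf gs ξ ω := by
  unfold numCompBC
  congr 1
  apply Finset.image_congr
  intro x _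
  ext y
  simp [h]

end Core

section BC

variable (gf gs : E → V) {bdry : Finset V}

open Finset in
lemma numComp_supermodular_bc (ξ ξ' : Finpartition bdry) (hc : Coarser ξ ξ')
    (a b : E → Bool) :
    numCompBC gf gs ξ a + numCompBC gf gs ξ' b ≤
      numCompBC gf gs ξ' (a ⊔ b) + numCompBC gf gs ξ (a ⊓ b) := by
  classical
  set gf2 : E ⊕ (V × V) → V := Sum.elim gf Prod.fst with hgf2
  set gs2 : E ⊕ (V × V) → V := Sum.elim gs Prod.snd with hgs2
  set ext0 : (E → Bool) → (E ⊕ (V × V) → Bool) :=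
    fun ω => Sum.elim ω (fun _ => false) with hext0
  set ext1 : (E → Bool) → (E ⊕ (V × V) → Bool) :=
    fun ω => Sum.elim ω (fun p => if sameBlock ξ' p.1 p.2 then true else false) with hext1
  have hsb : ∀ x y : V, sameBlock ξ x y → sameBlock ξ' x y := by
    rintro x y ⟨P, hP, hx, hy⟩
    obtain ⟨P', hP', hPP'⟩ := hc P hP
    exact ⟨P', hP', hPP' hx, hPP' hy⟩
  have h0 : ∀ (ω : E → Bool) (x y : V),
      connBC gf2 gs2 ξ (ext0 ω) x y ↔ connBC gf gs ξ ω x y := by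
    intro ω x y
    constructor <;> refine fun h => Relation.ReflTransGen.mono ?_ _ _ h
    · rintro z w (⟨f, hf, hends⟩ | hsb')
      · rcases f with e | p
        · exact Or.inl ⟨e, hf, hends⟩
        · exact absurd hf (by simp [hext0])
      · exact Or.inr hsb'
    · rintro z w (⟨e, he, hends⟩ | hsb')
      · exact Or.inl ⟨Sum.inl e, he, hends⟩
      · exact Or.inr hsb'
  have h1 : ∀ (ω : E → Bool) (x y : V),
      connBC gf2 gs2 ξ (ext1 ω) x y ↔ connBC gf gs ξ' ω x y := by
    intro ω x y
    constructor <;> refine fun h => Relation.ReflTransGen.mono ?_ _ _ h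
    · rintro z w (⟨f, hf, hends⟩ | hsb')
      · rcases f with e | p
        · exact Or.inl ⟨e, hf, hends⟩
        · have hp : sameBlock ξ' p.1 p.2 := by
            by_contra hcon
            simp [hext1, hcon] at hf
          rcases hends with ⟨h1, h2⟩ | ⟨h1, h2⟩
          · exact Or.inr (h1 ▸ h2 ▸ hp)
          · exact Or.inr (sameBlock_symm ξ' (h1 ▸ h2 ▸ hp))
      · exact Or.inr (hsb _ _ hsb')
    · rintro z w (⟨e, he, hends⟩ | hsb')
      · exact Or.inl ⟨Sum.inl e, he, hends⟩
      · exact Or.inl ⟨Sum.inr (z, w), by simp [hext1, hsb'], Or.inl ⟨rfl, rfl⟩⟩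
  have key := numComp_supermodular gf2 gs2 ξ (ext0 a) (ext1 b)
  have e1 : ext0 a ⊔ ext1 b = ext1 (a ⊔ b) := by
    funext f
    rcases f with e | p
    · simp [hext0, hext1, Pi.sup_apply]
    · simp [hext0, hext1, Pi.sup_apply, bool_sup]
  have e2 : ext0 a ⊓ ext1 b = ext0 (a ⊓ b) := by
    funext f
    rcases f with e | p
    · simp [hext0, hext1, Pi.inf_apply]
    · simp [hext0, hext1, Pi.inf_apply, bool_inf]
  rw [e1, e2] at key
  rw [numComp_congr gf gs ξ gf2 gs2 ξ (ext0 a) a (h0 a),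
    numComp_congr gf gs ξ' gf2 gs2 ξ (ext1 b) b (h1 b),
    numComp_congr gf gs ξ' gf2 gs2 ξ (ext1 (a ⊔ b)) (a ⊔ b) (h1 (a ⊔ b)),
    numComp_congr gf gs ξ gf2 gs2 ξ (ext0 (a ⊓ b)) (a ⊓ b) (h0 (a ⊓ b))] at key
  exact key

end BC

section Weights

open Finset

variable (gf gs : E → V) {bdry : Finset V} (ξ : Finpartition bdry)

lemma prod_form (p : ℝ) (ω : E → Bool) :
    p ^ openCount ω * (1 - p) ^ closedCount (E := E) ω =
      ∏ e : E, (if ω e = true then p else 1 - p) := by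
  rw [Finset.prod_ite, Finset.prod_const, Finset.prod_const, openCount, closedCount]
  congr 3
  ext e
  simp [Bool.not_eq_true]

lemma rcW_eq (p q : ℝ) (ω : E → Bool) :
    rcW gf gs ξ p q ω =
      (∏ e : E, (if ω e = true then p else 1 - p)) * q ^ numCompBC gf gs ξ ω := by
  rw [rcW, prod_form]

lemma prodW_nonneg {p : ℝ} (hp : p ∈ Set.Icc (0:ℝ) 1) (ω : E → Bool) :
    0 ≤ ∏ e : E, (if ω e = true then p else 1 - p) := by
  refine Finset.prod_nonneg fun e _ => ?_
  split_ifs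
  · exact hp.1
  · linarith [hp.2]

lemma rcW_nonneg {p q : ℝ} (hq : 1 ≤ q) (hp : p ∈ Set.Icc (0:ℝ) 1) (ω : E → Bool) :
    0 ≤ rcW gf gs ξ p q ω := by
  rw [rcW_eq]
  exact mul_nonneg (prodW_nonneg hp ω) (pow_nonneg (by linarith) _)

lemma sum_rcW_pos {p q : ℝ} (hq : 1 ≤ q) (hp : p ∈ Set.Icc (0:ℝ) 1) :
    0 < ∑ ω : E → Bool, rcW gf gs ξ p q ω := by
  refine Finset.sum_pos' (fun ω _ => rcW_nonneg gf gs ξ hq hp ω) ?_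
  by_cases hp1 : p = 1
  · refine ⟨fun _ => true, Finset.mem_univ _, ?_⟩
    rw [rcW_eq]
    have : ∀ e : E, ((fun _ : E => true) e = true) := fun _ => rfl
    refine mul_pos ?_ (pow_pos (by linarith) _)
    rw [Finset.prod_congr rfl (fun e _ => if_pos (this e)), Finset.prod_const, hp1]
    norm_num
  · refine ⟨fun _ => false, Finset.mem_univ _, ?_⟩
    rw [rcW_eq]
    have hlt : p < 1 := lt_of_le_of_ne hp.2 hp1
    refine mul_pos ?_ (pow_pos (by linarith) _)
    have : ∀ e : E, ¬((fun _ : E => false) e = true) := fun _ => by simp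
    rw [Finset.prod_congr rfl (fun e _ => if_neg (this e)), Finset.prod_const]
    exact pow_pos (by linarith) _

lemma rcW_cond_bc {p q : ℝ} (hq : 1 ≤ q) (hp : p ∈ Set.Icc (0:ℝ) 1)
    (ξ' : Finpartition bdry) (hc : Coarser ξ ξ') (a b : E → Bool) :
    rcW gf gs ξ p q a * rcW gf gs ξ' p q b ≤
      rcW gf gs ξ p q (a ⊓ b) * rcW gf gs ξ' p q (a ⊔ b) := by
  rw [rcW_eq, rcW_eq, rcW_eq, rcW_eq]
  have hW : (∏ e : E, (if a e = true then p else 1 - p)) *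
        (∏ e : E, (if b e = true then p else 1 - p)) =
      (∏ e : E, (if (a ⊓ b) e = true then p else 1 - p)) *
        (∏ e : E, (if (a ⊔ b) e = true then p else 1 - p)) := by
    rw [← Finset.prod_mul_distrib, ← Finset.prod_mul_distrib]
    refine Finset.prod_congr rfl fun e _ => ?_
    rw [Pi.inf_apply, Pi.sup_apply, bool_inf, bool_sup]
    cases a e <;> cases b e <;> simp <;> ring
  have hsuper := numComp_supermodular_bc gf gs ξ ξ' hc a b
  have hpow : q ^ (numCompBC gf gs ξ a + numCompBC gf gs ξ' b) ≤
      q ^ (numCompBC gf gs ξ (a ⊓ b) + numCompBC gf gs ξ' (a ⊔ b)) := by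
    apply pow_le_pow_right₀ hq
    omega
  have hWnn := mul_nonneg (prodW_nonneg (E := E) hp a) (prodW_nonneg (E := E) hp b)
  calc (∏ e : E, (if a e = true then p else 1 - p)) * q ^ numCompBC gf gs ξ a *
        ((∏ e : E, (if b e = true then p else 1 - p)) * q ^ numCompBC gf gs ξ' b)
      = (∏ e : E, (if a e = true then p else 1 - p)) *
          (∏ e : E, (if b e = true then p else 1 - p)) *
          q ^ (numCompBC gf gs ξ a + numCompBC gf gs ξ' b) := by
        rw [pow_add]; ring
    _ ≤ (∏ e : E, (if a e = true then p else 1 - p)) *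
          (∏ e : E, (if b e = true then p else 1 - p)) *
          q ^ (numCompBC gf gs ξ (a ⊓ b) + numCompBC gf gs ξ' (a ⊔ b)) :=
        mul_le_mul_of_nonneg_left hpow hWnn
    _ = (∏ e : E, (if (a ⊓ b) e = true then p else 1 - p)) * q ^ numCompBC gf gs ξ (a ⊓ b) *
          ((∏ e : E, (if (a ⊔ b) e = true then p else 1 - p)) *
            q ^ numCompBC gf gs ξ' (a ⊔ b)) := by
        rw [hW, pow_add]; ring

lemma rcW_cond_mon {p p' q : ℝ} (hq : 1 ≤ q) (hp : p ∈ Set.Icc (0:ℝ) 1)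
    (hp' : p' ∈ Set.Icc (0:ℝ) 1) (hpp' : p ≤ p') (a b : E → Bool) :
    rcW gf gs ξ p q a * rcW gf gs ξ p' q b ≤
      rcW gf gs ξ p q (a ⊓ b) * rcW gf gs ξ p' q (a ⊔ b) := by
  rw [rcW_eq, rcW_eq, rcW_eq, rcW_eq]
  have hW : (∏ e : E, (if a e = true then p else 1 - p)) *
        (∏ e : E, (if b e = true then p' else 1 - p')) ≤
      (∏ e : E, (if (a ⊓ b) e = true then p else 1 - p)) *
        (∏ e : E, (if (a ⊔ b) e = true then p' else 1 - p')) := by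
    rw [← Finset.prod_mul_distrib, ← Finset.prod_mul_distrib]
    refine Finset.prod_le_prod (fun e _ => ?_) (fun e _ => ?_)
    · refine mul_nonneg ?_ ?_ <;> split_ifs
      · exact hp.1
      · linarith [hp.2]
      · exact hp'.1
      · linarith [hp'.2]
    · rw [Pi.inf_apply, Pi.sup_apply, bool_inf, bool_sup]
      cases a e <;> cases b e <;> simp <;> nlinarith [hp.1, hp.2, hp'.1, hp'.2]
  have hsuper := numComp_supermodular gf gs ξ a b
  have hpow : q ^ (numCompBC gf gs ξ a + numCompBC gf gs ξ b) ≤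
      q ^ (numCompBC gf gs ξ (a ⊓ b) + numCompBC gf gs ξ (a ⊔ b)) := by
    apply pow_le_pow_right₀ hq
    omega
  have h1 := mul_nonneg (prodW_nonneg (E := E) hp a) (prodW_nonneg (E := E) hp' b)
  have h3 := mul_nonneg (prodW_nonneg (E := E) hp (a ⊓ b)) (prodW_nonneg (E := E) hp' (a ⊔ b))
  calc (∏ e : E, (if a e = true then p else 1 - p)) * q ^ numCompBC gf gs ξ a *
        ((∏ e : E, (if b e = true then p' else 1 - p')) * q ^ numCompBC gf gs ξ b)
      = (∏ e : E, (if a e = true then p else 1 - p)) *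
          (∏ e : E, (if b e = true then p' else 1 - p')) *
          q ^ (numCompBC gf gs ξ a + numCompBC gf gs ξ b) := by
        rw [pow_add]; ring
    _ ≤ (∏ e : E, (if (a ⊓ b) e = true then p else 1 - p)) *
          (∏ e : E, (if (a ⊔ b) e = true then p' else 1 - p')) *
          q ^ (numCompBC gf gs ξ (a ⊓ b) + numCompBC gf gs ξ (a ⊔ b)) := by
        refine mul_le_mul hW hpow (pow_nonneg (by linarith) _) h3
    _ = (∏ e : E, (if (a ⊓ b) e = true then p else 1 - p)) * q ^ numCompBC gf gs ξ (a ⊓ b) *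
          ((∏ e : E, (if (a ⊔ b) e = true then p' else 1 - p')) *
            q ^ numCompBC gf gs ξ (a ⊔ b)) := by
        rw [pow_add]; ring

end Weights

section Holley

open Finset

lemma holley_prob (w1 w2 : (E → Bool) → ℝ) (h1 : ∀ ω, 0 ≤ w1 ω) (h2 : ∀ ω, 0 ≤ w2 ω)
    (hd1 : 0 < ∑ ω : E → Bool, w1 ω) (hd2 : 0 < ∑ ω : E → Bool, w2 ω)
    (hcond : ∀ a b : E → Bool, w1 a * w2 b ≤ w1 (a ⊓ b) * w2 (a ⊔ b))
    (Aev : (E → Bool) → Prop) (hA : IncreasingEvent Aev) :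
    (∑ ω : E → Bool, if Aev ω then w1 ω else 0) / (∑ ω : E → Bool, w1 ω) ≤
      (∑ ω : E → Bool, if Aev ω then w2 ω else 0) / (∑ ω : E → Bool, w2 ω) := by
  rw [div_le_div_iff₀ hd1 hd2]
  have key := four_functions_theorem_univ (fun ω : E → Bool => if Aev ω then w1 ω else 0) w2 w1
      (fun ω : E → Bool => if Aev ω then w2 ω else 0)
      (fun ω => by dsimp; split_ifs; exacts [h1 ω, le_refl 0])
      (fun ω => h2 ω) (fun ω => h1 ω)
      (fun ω => by dsimp; split_ifs; exacts [h2 ω, le_refl 0])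
      (fun a b => by
        by_cases ha : Aev a
        · rw [if_pos ha, if_pos (hA a (a ⊔ b) (fun e => le_sup_left) ha)]
          exact hcond a b
        · rw [if_neg ha, zero_mul]
          refine mul_nonneg (h1 _) ?_
          split_ifs
          · exact h2 _
          · exact le_refl 0)
  calc (∑ ω : E → Bool, if Aev ω then w1 ω else 0) * (∑ ω : E → Bool, w2 ω)
      ≤ (∑ ω : E → Bool, w1 ω) * (∑ ω : E → Bool, if Aev ω then w2 ω else 0) := key
    _ = (∑ ω : E → Bool, if Aev ω then w2 ω else 0) * (∑ ω : E → Bool, w1 ω) := mul_comm _ _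

lemma fkg_prob (w : (E → Bool) → ℝ) (hw : ∀ ω, 0 ≤ w ω)
    (hd : 0 < ∑ ω : E → Bool, w ω)
    (hcond : ∀ a b : E → Bool, w a * w b ≤ w (a ⊓ b) * w (a ⊔ b))
    (Aev Bev : (E → Bool) → Prop) (hA : IncreasingEvent Aev) (hB : IncreasingEvent Bev) :
    ((∑ ω : E → Bool, if Aev ω then w ω else 0) / (∑ ω : E → Bool, w ω)) *
        ((∑ ω : E → Bool, if Bev ω then w ω else 0) / (∑ ω : E → Bool, w ω)) ≤
      (∑ ω : E → Bool, if Aev ω ∧ Bev ω then w ω else 0) / (∑ ω : E → Bool, w ω) := by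
  have key := four_functions_theorem_univ (fun ω : E → Bool => if Aev ω then w ω else 0)
      (fun ω : E → Bool => if Bev ω then w ω else 0) w
      (fun ω : E → Bool => if Aev ω ∧ Bev ω then w ω else 0)
      (fun ω => by dsimp; split_ifs; exacts [hw ω, le_refl 0])
      (fun ω => by dsimp; split_ifs; exacts [hw ω, le_refl 0])
      (fun ω => hw ω)
      (fun ω => by dsimp; split_ifs; exacts [hw ω, le_refl 0])
      (fun a b => by
        by_cases ha : Aev a
        · by_cases hb : Bev b
          · rw [if_pos ha, if_pos hb,
              if_pos ⟨hA a (a ⊔ b) (fun e => le_sup_left) ha,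
                hB b (a ⊔ b) (fun e => le_sup_right) hb⟩]
            exact hcond a b
          · rw [if_neg hb, mul_zero]
            refine mul_nonneg (hw _) ?_
            split_ifs
            · exact hw _
            · exact le_refl 0
        · rw [if_neg ha, zero_mul]
          refine mul_nonneg (hw _) ?_
          split_ifs
          · exact hw _
          · exact le_refl 0)
  rw [div_mul_div_comm, div_le_div_iff₀ (mul_pos hd hd) hd]
  calc (∑ ω : E → Bool, if Aev ω then w ω else 0) *
        (∑ ω : E → Bool, if Bev ω then w ω else 0) * (∑ ω : E → Bool, w ω)
      ≤ (∑ ω : E → Bool, w ω) * (∑ ω : E → Bool, if Aev ω ∧ Bev ω then w ω else 0) *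
          (∑ ω : E → Bool, w ω) := mul_le_mul_of_nonneg_right key hd.le
    _ = (∑ ω : E → Bool, if Aev ω ∧ Bev ω then w ω else 0) *
          ((∑ ω : E → Bool, w ω) * (∑ ω : E → Bool, w ω)) := by ring

end Holley

/-- Positive association of the random-cluster model with `q ≥ 1`:
comparison between boundary conditions (CBC), monotonicity in `p` (MON) and the
FKG inequality. -/
theorem positive_association (gfst gsnd : E → V) (bdry : Finset V)
    (q : ℝ) (hq : 1 ≤ q) (p : ℝ) (hp : p ∈ Set.Icc (0 : ℝ) 1) (ξ : Finpartition bdry) :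
    (∀ Aev : (E → Bool) → Prop, IncreasingEvent Aev →
      ∀ ξ' : Finpartition bdry, Coarser ξ ξ' →
        rcProb gfst gsnd ξ p q Aev ≤ rcProb gfst gsnd ξ' p q Aev) ∧
    (∀ Aev : (E → Bool) → Prop, IncreasingEvent Aev →
      ∀ p' ∈ Set.Icc (0 : ℝ) 1, p ≤ p' →
        rcProb gfst gsnd ξ p q Aev ≤ rcProb gfst gsnd ξ p' q Aev) ∧
    (∀ Aev Bev : (E → Bool) → Prop, IncreasingEvent Aev → IncreasingEvent Bev →
      rcProb gfst gsnd ξ p q Aev * rcProb gfst gsnd ξ p q Bev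
        ≤ rcProb gfst gsnd ξ p q fun ω => Aev ω ∧ Bev ω) := by
  obtain ⟨hp0, hp1⟩ := hp
  have hp : p ∈ Set.Icc (0:ℝ) 1 := ⟨hp0, hp1⟩
  refine ⟨?_, ?_, ?_⟩
  · intro Aev hA ξ' hc
    unfold rcProb
    exact holley_prob _ _ (rcW_nonneg gfst gsnd ξ hq hp) (rcW_nonneg gfst gsnd ξ' hq hp)
      (sum_rcW_pos gfst gsnd ξ hq hp) (sum_rcW_pos gfst gsnd ξ' hq hp)
      (rcW_cond_bc gfst gsnd ξ hq hp ξ' hc) Aev hA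
  · intro Aev hA p' hp' hpp'
    unfold rcProb
    exact holley_prob _ _ (rcW_nonneg gfst gsnd ξ hq hp) (rcW_nonneg gfst gsnd ξ hq hp')
      (sum_rcW_pos gfst gsnd ξ hq hp) (sum_rcW_pos gfst gsnd ξ hq hp')
      (rcW_cond_mon gfst gsnd ξ hq hp hp' hpp') Aev hA
  · intro Aev Bev hA hB
    unfold rcProb
    have h := fkg_prob _ (rcW_nonneg gfst gsnd ξ hq hp) (sum_rcW_pos gfst gsnd ξ hq hp)
      (rcW_cond_bc gfst gsnd ξ hq hp ξ (fun P hP => ⟨P, hP, subset_rfl⟩)) Aev Bev hA hB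
    refine h.trans_eq ?_
    congr 1
    exact Finset.sum_congr rfl fun ω _ => by
      rcases Classical.em (Aev ω ∧ Bev ω) with hab | hab
      · rw [if_pos hab, if_pos hab]
      · rw [if_neg hab, if_neg hab]


end Stmt7
end
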